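/- arXiv:1706.08118 — 5 statements merged into one kernel-verified Lean document; each statement's English description precedes it below -/
import Mathlib

section
/- If E ⊆ ℝ^d satisfies ℋ^h(E) > 0 for every dimension function h with h ≺ x^d, then E has positive d-dimensional Lebesgue measure. -/
open MeasureTheory Filter Set

/-- A dimension function: vanishes at 0, positive on positives, increasing,
right-continuous. -/
def IsDimFun (h : ℝ → ℝ) : Prop :=
  h 0 = 0 ∧ (∀ t > 0, 0 < h t) ∧ MonotoneOn h (Set.Ici 0) ∧
    ∀ t ∈ Set.Ici (0 : ℝ), ContinuousWithinAt h (Set.Ici t) t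

/-- The Hausdorff measure associated to a gauge (dimension) function `h`. -/
noncomputable def gaugeMeasure {X : Type*} [EMetricSpace X] [MeasurableSpace X]
    [BorelSpace X] (h : ℝ → ℝ) : Measure X :=
  Measure.mkMetric fun r => ENNReal.ofReal (h r.toReal)

/-- `Prec h₂ h₁` means `h₂ ≺ h₁`, i.e. `lim_{x→0⁺} h₁ x / h₂ x = 0`. -/
def Prec (h₂ h₁ : ℝ → ℝ) : Prop :=
  Tendsto (fun x => h₁ x / h₂ x) (nhdsWithin 0 (Set.Ioi 0)) (nhds 0)

open scoped NNReal ENNReal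

lemma tail_small (e : ℕ → ℝ≥0∞) (d : ℕ) (hd : 0 < d) (hfin : ∑' n, e n ^ d ≠ ∞)
    (he : ∀ n, e n ≠ ∞) {ε : ℝ≥0∞} (hε : 0 < ε) :
    ∃ η : ℝ, 0 < η ∧ ∑' n, (if e n < ENNReal.ofReal η then e n ^ d else 0) ≤ ε := by
  classical
  obtain ⟨s, hs⟩ : ∃ s : Finset ℕ, ∑' n : {x // x ∉ s}, e n ^ d < ε := by
    have := (ENNReal.tendsto_tsum_compl_atTop_zero hfin).eventually_lt_const hε
    exact this.exists
  set t := s.filter (fun n => e n ≠ 0) with ht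
  set η : ℝ := if hne : t.Nonempty then t.inf' hne (fun n => (e n).toReal) else 1 with hη
  have hηpos : 0 < η := by
    rw [hη]
    split
    · rename_i hne
      rw [Finset.lt_inf'_iff]
      intro n hn
      rw [ht, Finset.mem_filter] at hn
      exact ENNReal.toReal_pos hn.2 (he n)
    · norm_num
  refine ⟨η, hηpos, ?_⟩
  have key : ∀ n, (if e n < ENNReal.ofReal η then e n ^ d else 0)
      ≤ Set.indicator {x | x ∉ s} (fun n => e n ^ d) n := by
    intro n
    split
    · rename_i hlt
      by_cases hns : n ∈ s
      · by_cases hnz : e n = 0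
        · simp [hnz, zero_pow hd.ne']
        · exfalso
          have hmem : n ∈ t := by rw [ht, Finset.mem_filter]; exact ⟨hns, hnz⟩
          have : η ≤ (e n).toReal := by
            rw [hη, dif_pos ⟨n, hmem⟩]
            exact Finset.inf'_le _ hmem
          have : ENNReal.ofReal η ≤ e n := by
            rw [← ENNReal.ofReal_toReal (he n)]
            exact ENNReal.ofReal_le_ofReal this
          exact absurd hlt (not_lt.2 this)
      · rw [Set.indicator_of_mem (by simpa using hns)]
    · exact zero_le
  calc ∑' n, (if e n < ENNReal.ofReal η then e n ^ d else 0)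
      ≤ ∑' n, Set.indicator {x | x ∉ s} (fun n => e n ^ d) n := ENNReal.tsum_le_tsum key
    _ = ∑' n : {x // x ∉ s}, e n ^ d := (tsum_subtype _ _).symm
    _ ≤ ε := hs.le

lemma ennreal_arith1 : ∀ {j m : ℕ}, j ≤ m →
    (2:ℝ≥0∞)^j * 8⁻¹^m ≤ 2⁻¹^m * 2⁻¹^j := by
  intro j m hjm
  have h8 : (8:ℝ≥0∞)⁻¹ = 2⁻¹ * 2⁻¹ * 2⁻¹ := by
    rw [← ENNReal.mul_inv (by norm_num) (by norm_num),
      ← ENNReal.mul_inv (by norm_num) (by norm_num)]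
    norm_num
  have hcancel : (2:ℝ≥0∞)^j * 2⁻¹^j = 1 := by
    rw [← mul_pow, ENNReal.mul_inv_cancel (by norm_num) (by norm_num), one_pow]
  have hmle : (2:ℝ≥0∞)⁻¹^m ≤ 2⁻¹^j :=
    pow_le_pow_of_le_one (zero_le) (ENNReal.inv_le_one.mpr one_le_two) hjm
  calc (2:ℝ≥0∞)^j * 8⁻¹^m = (2^j * 2⁻¹^m) * (2⁻¹^m * 2⁻¹^m) := by
        rw [h8, mul_pow, mul_pow]; ring
    _ ≤ (2^j * 2⁻¹^j) * (2⁻¹^m * 2⁻¹^m) := by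
        gcongr
    _ = 2⁻¹^m * 2⁻¹^m := by rw [hcancel, one_mul]
    _ ≤ 2⁻¹^m * 2⁻¹^j := by gcongr
lemma ennreal_arith2 : ∀ {j m : ℕ}, m ≤ j →
    (2:ℝ≥0∞)^j * 8⁻¹^j ≤ 2⁻¹^m * 2⁻¹^j := by
  intro j m hmj
  have h8 : (8:ℝ≥0∞)⁻¹ = 2⁻¹ * 2⁻¹ * 2⁻¹ := by
    rw [← ENNReal.mul_inv (by norm_num) (by norm_num),
      ← ENNReal.mul_inv (by norm_num) (by norm_num)]
    norm_num
  have hcancel : (2:ℝ≥0∞)^j * 2⁻¹^j = 1 := by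
    rw [← mul_pow, ENNReal.mul_inv_cancel (by norm_num) (by norm_num), one_pow]
  have hmle : (2:ℝ≥0∞)⁻¹^j ≤ 2⁻¹^m :=
    pow_le_pow_of_le_one (zero_le) (ENNReal.inv_le_one.mpr one_le_two) hmj
  calc (2:ℝ≥0∞)^j * 8⁻¹^j = (2^j * 2⁻¹^j) * (2⁻¹^j * 2⁻¹^j) := by
        rw [h8, mul_pow, mul_pow]; ring
    _ = 2⁻¹^j * 2⁻¹^j := by rw [hcancel, one_mul]
    _ ≤ 2⁻¹^m * 2⁻¹^j := by gcongr

lemma exists_covers {X : Type*} [EMetricSpace X] [MeasurableSpace X] [BorelSpace X]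
    (d : ℕ) (hd : 0 < d) (E : Set X) (hE : μH[(d:ℝ)] E = 0) (m : ℕ) :
    ∃ U : ℕ → Set X, E ⊆ ⋃ n, U n ∧ (∀ n, EMetric.diam (U n) ≤ ENNReal.ofReal ((m:ℝ)+1)⁻¹) ∧
      ∑' n, EMetric.diam (U n) ^ d ≤ (8⁻¹ : ℝ≥0∞) ^ m := by
  classical
  rw [Measure.hausdorffMeasure_apply] at hE
  have hr : (0:ℝ≥0∞) < ENNReal.ofReal ((m:ℝ)+1)⁻¹ := by
    rw [ENNReal.ofReal_pos]; positivity
  have h1 : (⨅ (t : ℕ → Set X) (_ : E ⊆ ⋃ n, t n)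
      (_ : ∀ n, EMetric.diam (t n) ≤ ENNReal.ofReal ((m:ℝ)+1)⁻¹),
      ∑' n, ⨆ _ : (t n).Nonempty, EMetric.diam (t n) ^ (d:ℝ)) = 0 := by
    refine le_antisymm ?_ (zero_le)
    rw [← hE]
    exact le_iSup₂ (f := fun r (_ : 0 < r) => ⨅ (t : ℕ → Set X) (_ : E ⊆ ⋃ n, t n)
      (_ : ∀ n, EMetric.diam (t n) ≤ r), ∑' n, ⨆ _ : (t n).Nonempty, EMetric.diam (t n) ^ (d:ℝ))
      (ENNReal.ofReal ((m:ℝ)+1)⁻¹) hr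
  have hlt : (⨅ (t : ℕ → Set X) (_ : E ⊆ ⋃ n, t n)
      (_ : ∀ n, EMetric.diam (t n) ≤ ENNReal.ofReal ((m:ℝ)+1)⁻¹),
      ∑' n, ⨆ _ : (t n).Nonempty, EMetric.diam (t n) ^ (d:ℝ)) < (8⁻¹ : ℝ≥0∞) ^ m := by
    rw [h1]; exact ENNReal.pow_pos (by norm_num) m
  simp only [iInf_lt_iff] at hlt
  obtain ⟨U, hcov, hdiam, hsum⟩ := hlt
  refine ⟨U, hcov, hdiam, ?_⟩
  have : ∀ n, EMetric.diam (U n) ^ d = ⨆ _ : (U n).Nonempty, EMetric.diam (U n) ^ (d:ℝ) := by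
    intro n
    by_cases hne : (U n).Nonempty
    · rw [iSup_pos hne, ENNReal.rpow_natCast]
    · rw [Set.not_nonempty_iff_eq_empty] at hne
      simp [hne, ENNReal.zero_rpow_of_pos (by positivity : (0:ℝ) < (d:ℝ)), zero_pow hd.ne', hd.ne']
      exact Metric.ediam_empty
  calc ∑' n, EMetric.diam (U n) ^ d
      = ∑' n, ⨆ _ : (U n).Nonempty, EMetric.diam (U n) ^ (d:ℝ) := by
        exact tsum_congr this
    _ ≤ (8⁻¹ : ℝ≥0∞) ^ m := hsum.le

lemma besico_exists_gauge {X : Type*} [EMetricSpace X] [MeasurableSpace X] [BorelSpace X]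
    (d : ℕ) (hd : 0 < d) (E : Set X) (hE : μH[(d:ℝ)] E = 0) :
    ∃ h : ℝ → ℝ, IsDimFun h ∧ Prec h (fun x : ℝ => x ^ d) ∧ gaugeMeasure h E = 0 := by
  classical
  choose U hUcov hUdiam hUsum using fun m => exists_covers d hd E hE m
  have hUfinsum : ∀ m, (∑' n, EMetric.diam (U m n) ^ d) ≠ ∞ := fun m =>
    ne_top_of_le_ne_top (ENNReal.pow_ne_top (by norm_num)) (hUsum m)
  have hUne' : ∀ m n, EMetric.diam (U m n) ≠ ∞ := fun m n =>
    ((hUdiam m n).trans_lt ENNReal.ofReal_lt_top).ne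
  have htail0 : ∀ m j, ∃ ηv : ℝ, 0 < ηv ∧
      ∑' n, (if EMetric.diam (U m n) < ENNReal.ofReal ηv then EMetric.diam (U m n) ^ d else 0)
        ≤ (8⁻¹:ℝ≥0∞) ^ j :=
    fun m j => tail_small _ d hd (hUfinsum m) (hUne' m) (ENNReal.pow_pos (by norm_num) j)
  choose η hηpos hηtail using htail0
  set δ : ℕ → ℝ := fun j => Nat.rec (motive := fun _ => ℝ) 1
    (fun j p => min (p / 2) (min ((8:ℝ)⁻¹ ^ j)
      ((Finset.range (j + 1)).inf' ⟨0, Finset.mem_range.2 (Nat.succ_pos j)⟩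
        (fun m => η m (j + 1))))) j with hδ
  have hδ0 : δ 0 = 1 := by rw [hδ]; rfl
  have hδsucc : ∀ j, δ (j+1) = min (δ j / 2) (min ((8:ℝ)⁻¹ ^ j)
      ((Finset.range (j + 1)).inf' ⟨0, Finset.mem_range.2 (Nat.succ_pos j)⟩
        (fun m => η m (j + 1)))) := fun j => by rw [hδ]
  have hδpos : ∀ j, 0 < δ j := by
    intro j; induction j with
    | zero => rw [hδ0]; norm_num
    | succ j ih =>
      rw [hδsucc]
      refine lt_min (by positivity) (lt_min (by positivity) ?_)
      refine (Finset.lt_inf'_iff _).2 ?_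
      exact fun m _ => hηpos m (j+1)
  have hδhalf : ∀ j, δ (j+1) ≤ δ j / 2 := fun j => by
    rw [hδsucc]; exact min_le_left _ _
  have hδ8 : ∀ j, δ (j+1) ≤ (8:ℝ)⁻¹ ^ j := fun j => by
    rw [hδsucc]; exact (min_le_right _ _).trans (min_le_left _ _)
  have hδη : ∀ j m, m ≤ j → δ (j+1) ≤ η m (j+1) := fun j m hm => by
    rw [hδsucc]
    exact (min_le_right _ _).trans ((min_le_right _ _).trans
      (Finset.inf'_le _ (Finset.mem_range.2 (Nat.lt_succ_of_le hm))))
  have hδle : ∀ j, δ (j+1) ≤ δ j := fun j => (hδhalf j).trans (by linarith [hδpos j])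
  have hδanti : Antitone δ := antitone_nat_of_succ_le hδle
  have hδ1 : ∀ j, δ j ≤ 1 := by
    intro j
    cases j with
    | zero => rw [hδ0]
    | succ j => exact (hδ8 j).trans (pow_le_one₀ (by norm_num) (by norm_num))
  have haAnti : Antitone (fun k => (2:ℝ)^k * δ (k+1)^d) := by
    refine antitone_nat_of_succ_le fun k => ?_
    have h2 : δ (k+1+1)^d ≤ (δ (k+1)/2)^d := pow_le_pow_left₀ (hδpos (k+1+1)).le (hδhalf (k+1)) d
    have h3 : (δ (k+1)/2)^d ≤ δ (k+1)^d / 2 := by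
      rw [div_pow]
      exact div_le_div_of_nonneg_left (pow_nonneg (hδpos (k+1)).le d) (by norm_num)
        (le_self_pow₀ one_le_two hd.ne')
    calc (2:ℝ)^(k+1) * δ (k+1+1)^d ≤ (2:ℝ)^(k+1) * (δ (k+1)^d / 2) := by
          have := h2.trans h3
          have h4 : (0:ℝ) < 2^(k+1) := by positivity
          nlinarith
      _ = (2:ℝ)^k * δ (k+1)^d := by ring
  have hA : ∀ j, (2:ℝ)^j * δ (j+1)^d ≤ (4:ℝ)⁻¹ ^ j := by
    intro j
    have h1 : δ (j+1)^d ≤ δ (j+1) := by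
      exact pow_le_of_le_one (hδpos (j+1)).le (hδ1 (j+1)) hd.ne'
    calc (2:ℝ)^j * δ (j+1)^d ≤ (2:ℝ)^j * ((8:ℝ)⁻¹^j) := by
          have := h1.trans (hδ8 j)
          have h4 : (0:ℝ) < 2^j := by positivity
          nlinarith
      _ = (4:ℝ)⁻¹ ^ j := by
          rw [← mul_pow]; norm_num
  have hδtail : ∀ j m, m ≤ j →
      ∑' n, (if EMetric.diam (U m n) < ENNReal.ofReal (δ (j+1))
        then EMetric.diam (U m n) ^ d else 0) ≤ (8⁻¹:ℝ≥0∞) ^ (j+1) := by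
    intro j m hm
    refine le_trans (ENNReal.tsum_le_tsum fun n => ?_) (hηtail m (j+1))
    by_cases hc : EMetric.diam (U m n) < ENNReal.ofReal (δ (j+1))
    · rw [if_pos hc, if_pos (hc.trans_le (ENNReal.ofReal_le_ofReal (hδη j m hm)))]
    · rw [if_neg hc]
      exact zero_le
  set h : ℝ → ℝ := fun t => ⨅ j : ℕ, (2:ℝ)^j * max t (δ (j+1)) ^ d with hh
  have hnn : ∀ (t : ℝ) (j : ℕ), 0 ≤ (2:ℝ)^j * max t (δ (j+1)) ^ d := by
    intro t j
    have : (0:ℝ) ≤ max t (δ (j+1)) := le_max_of_le_right (hδpos (j+1)).le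
    positivity
  have hbdd : ∀ t : ℝ, BddBelow (Set.range fun j : ℕ => (2:ℝ)^j * max t (δ (j+1)) ^ d) := by
    intro t
    exact ⟨0, by rintro x ⟨j, rfl⟩; exact hnn t j⟩
  have h_le : ∀ (t : ℝ) (j : ℕ), h t ≤ (2:ℝ)^j * max t (δ (j+1)) ^ d := by
    intro t j; rw [hh]; exact ciInf_le (hbdd t) j
  have h_nonneg : ∀ t, 0 ≤ h t := by
    intro t; rw [hh]; exact le_ciInf (hnn t)
  have h_ge_pow : ∀ t : ℝ, 0 ≤ t → t ^ d ≤ h t := by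
    intro t ht
    rw [hh]
    refine le_ciInf fun j => ?_
    have h1 : t ^ d ≤ max t (δ (j+1)) ^ d := pow_le_pow_left₀ ht (le_max_left _ _) d
    have h2 : (1:ℝ) ≤ 2 ^ j := one_le_pow₀ one_le_two
    nlinarith [pow_nonneg (le_max_of_le_right (hδpos (j+1)).le : (0:ℝ) ≤ max t (δ (j+1))) d]
  have hmono : Monotone h := by
    intro a b hab
    rw [hh]
    refine ciInf_mono (hbdd a) fun j => ?_
    have : max a (δ (j+1)) ≤ max b (δ (j+1)) := max_le_max hab le_rfl
    have h1 : max a (δ (j+1)) ^ d ≤ max b (δ (j+1)) ^ d :=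
      pow_le_pow_left₀ (le_max_of_le_right (hδpos (j+1)).le) this d
    have h2 : (0:ℝ) < 2 ^ j := by positivity
    nlinarith
  have h_le_A : ∀ (t : ℝ) (j : ℕ), t ≤ δ (j+1) → h t ≤ (4:ℝ)⁻¹ ^ j := by
    intro t j htj
    refine (h_le t j).trans ?_
    rw [max_eq_right htj]
    exact hA j
  have h0 : h 0 = 0 := by
    refine le_antisymm ?_ (h_nonneg 0)
    have hev : ∀ j : ℕ, h 0 ≤ (4:ℝ)⁻¹ ^ j := fun j => h_le_A 0 j (hδpos (j+1)).le
    have htend : Tendsto (fun j : ℕ => (4:ℝ)⁻¹ ^ j) atTop (nhds 0) :=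
      tendsto_pow_atTop_nhds_zero_of_lt_one (by norm_num) (by norm_num)
    exact ge_of_tendsto htend (Eventually.of_forall hev)
  -- lower bound : 2^j * t^d / 2 ≤ h t for 0 ≤ t < δ j
  have hlow : ∀ (j : ℕ) (t : ℝ), 0 ≤ t → t < δ j → (2:ℝ)^j * t^d / 2 ≤ h t := by
    intro j t ht htj
    rw [hh]
    refine le_ciInf fun i => ?_
    rcases le_or_gt j (i+1) with hji | hji
    · have h1 : (2:ℝ)^j ≤ 2^(i+1) := pow_le_pow_right₀ one_le_two hji
      have h2 : t ^ d ≤ max t (δ (i+1)) ^ d := pow_le_pow_left₀ ht (le_max_left _ _) d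
      have h3 : (0:ℝ) ≤ t ^ d := pow_nonneg ht d
      have h4 : (2:ℝ)^(i+1) = 2 * 2^i := by ring
      nlinarith [pow_pos (zero_lt_two (α := ℝ)) i, pow_pos (zero_lt_two (α := ℝ)) j]
    · -- i + 1 < j ; write j = j' + 1
      obtain ⟨j', rfl⟩ : ∃ j', j = j' + 1 := ⟨j - 1, by omega⟩
      have hij' : i ≤ j' := by omega
      have hmax : max t (δ (i+1)) = δ (i+1) := by
        exact max_eq_right (htj.le.trans (hδanti (by omega : i + 1 ≤ j' + 1)))
      rw [hmax]
      have h5 : (2:ℝ)^j' * δ (j'+1)^d ≤ 2^i * δ (i+1)^d := haAnti hij'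
      have h6 : t ^ d ≤ δ (j'+1) ^ d := pow_le_pow_left₀ ht htj.le d
      have h7 : (0:ℝ) < 2 ^ j' := by positivity
      have h8 : (2:ℝ)^(j'+1) = 2 * 2^j' := by ring
      have h9 := mul_le_mul_of_nonneg_left h6 h7.le
      have h10 : (2:ℝ)^(j'+1) * t^d / 2 = 2^j' * t^d := by rw [h8]; ring
      linarith
  -- Prec
  have hPrec : Tendsto (fun x : ℝ => x ^ d / h x) (nhdsWithin 0 (Set.Ioi 0)) (nhds 0) := by
    rw [Metric.tendsto_nhdsWithin_nhds]
    intro ε hε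
    obtain ⟨j, hj⟩ : ∃ j : ℕ, 2 * (2:ℝ)⁻¹ ^ j < ε := by
      obtain ⟨j, hj⟩ := exists_pow_lt_of_lt_one (by positivity : (0:ℝ) < ε / 2)
        (by norm_num : (2:ℝ)⁻¹ < 1)
      exact ⟨j, by linarith⟩
    refine ⟨δ j, hδpos j, fun x hx hxd => ?_⟩
    have hx0 : (0:ℝ) < x := hx
    rw [Real.dist_eq, sub_zero] at hxd
    have hxδ : x < δ j := by
      calc x ≤ |x| := le_abs_self x
        _ < δ j := hxd
    have hl := hlow j x hx0.le hxδ
    have hpos : 0 < h x := lt_of_lt_of_le (pow_pos hx0 d) (h_ge_pow x hx0.le)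
    have hxd0 : 0 < x ^ d := pow_pos hx0 d
    have h2j : (0:ℝ) < 2 ^ j := by positivity
    have key : x ^ d / h x ≤ 2 * (2:ℝ)⁻¹ ^ j := by
      rw [div_le_iff₀ hpos]
      have h9 : (2:ℝ) * (2:ℝ)⁻¹ ^ j * ((2:ℝ)^j * x^d / 2) = x ^ d := by
        rw [inv_pow]
        field_simp
      nlinarith [mul_le_mul_of_nonneg_left hl (by positivity : (0:ℝ) ≤ 2 * (2:ℝ)⁻¹ ^ j)]
    rw [Real.dist_eq, sub_zero]
    have : 0 ≤ x ^ d / h x := div_nonneg hxd0.le hpos.le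
    rw [abs_of_nonneg this]
    exact lt_of_le_of_lt key hj
  -- IsDimFun parts
  have hposh : ∀ t : ℝ, 0 < t → 0 < h t := fun t ht =>
    lt_of_lt_of_le (pow_pos ht d) (h_ge_pow t ht.le)
  -- right continuity at 0
  have hc0 : ContinuousWithinAt h (Set.Ici (0:ℝ)) 0 := by
    rw [ContinuousWithinAt, h0]
    rw [Metric.tendsto_nhdsWithin_nhds]
    intro ε hε
    obtain ⟨j, hj⟩ := exists_pow_lt_of_lt_one hε (by norm_num : (4:ℝ)⁻¹ < 1)
    refine ⟨δ (j+1), hδpos (j+1), fun x hx hxd => ?_⟩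
    rw [Real.dist_eq, sub_zero] at hxd ⊢
    have hx0 : (0:ℝ) ≤ x := hx
    have : h x ≤ (4:ℝ)⁻¹ ^ j := h_le_A x j (by rw [abs_of_nonneg hx0] at hxd; exact hxd.le)
    rw [abs_of_nonneg (h_nonneg x)]
    exact lt_of_le_of_lt this hj
  -- continuity at positive points
  have hct : ∀ t : ℝ, 0 < t → ContinuousAt h t := by
    intro t ht
    obtain ⟨j₀, hj₀⟩ : ∃ j₀ : ℕ, δ (j₀+1) < t := by
      obtain ⟨j, hj⟩ := exists_pow_lt_of_lt_one ht (by norm_num : (8:ℝ)⁻¹ < 1)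
      exact ⟨j, lt_of_le_of_lt (hδ8 j) hj⟩
    have hne : (Finset.range (j₀+1)).Nonempty := ⟨0, Finset.mem_range.2 (Nat.succ_pos _)⟩
    have hkey : ∀ s : ℝ, δ (j₀+1) ≤ s →
        h s = (Finset.range (j₀+1)).inf' hne (fun i => (2:ℝ)^i * max s (δ (i+1)) ^ d) := by
      intro s hs
      have hs0 : (0:ℝ) ≤ s := (hδpos (j₀+1)).le.trans hs
      refine le_antisymm ?_ ?_
      · rw [Finset.le_inf'_iff]
        intro i _
        exact h_le s i
      · rw [hh]
        refine le_ciInf fun i => ?_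
        rcases lt_or_ge i (j₀+1) with hi | hi
        · exact Finset.inf'_le _ (Finset.mem_range.2 hi)
        · refine le_trans (Finset.inf'_le _ (Finset.mem_range.2 (Nat.lt_succ_self j₀))) ?_
          rw [max_eq_left hs]
          have h1 : (2:ℝ)^j₀ ≤ 2^i := pow_le_pow_right₀ one_le_two (by omega)
          have h2 : s ^ d ≤ max s (δ (i+1)) ^ d := pow_le_pow_left₀ hs0 (le_max_left _ _) d
          nlinarith [pow_nonneg hs0 d, pow_pos (zero_lt_two (α := ℝ)) i,
            pow_nonneg (le_max_of_le_left hs0 : (0:ℝ) ≤ max s (δ (i+1))) d]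
    have hg : ContinuousAt (fun s : ℝ =>
        (Finset.range (j₀+1)).inf' hne (fun i => (2:ℝ)^i * max s (δ (i+1)) ^ d)) t := by
      refine ContinuousAt.finset_inf'_apply hne fun i _ => ?_
      exact (continuous_const.mul ((continuous_id.max continuous_const).pow d)).continuousAt
    refine hg.congr ?_
    have hmem : Set.Ioi (δ (j₀+1)) ∈ nhds t := Ioi_mem_nhds hj₀
    filter_upwards [hmem] with s hs
    exact (hkey s (le_of_lt hs)).symm
  refine ⟨h, ⟨h0, fun t ht => hposh t ht, hmono.monotoneOn _, ?_⟩, hPrec, ?_⟩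
  · intro t ht
    rcases eq_or_lt_of_le (Set.mem_Ici.mp ht) with rfl | htpos
    · exact hc0
    · exact (hct t htpos).continuousWithinAt
  · -- gaugeMeasure h E = 0
    set e : ℕ → ℕ → ℝ≥0∞ := fun m n => EMetric.diam (U m n) with he
    have hUne : ∀ m n, e m n ≠ ∞ := fun m n =>
      ((hUdiam m n).trans_lt ENNReal.ofReal_lt_top).ne
    have main : ∀ m, ∑' n, ENNReal.ofReal (h (e m n).toReal) ≤ 2 * (2:ℝ≥0∞)⁻¹ ^ m := by
      intro m
      set G : ℕ → ℕ → ℝ≥0∞ := fun j n =>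
        if (ENNReal.ofReal (δ (j+1)) ≤ e m n ∧ (j = 0 ∨ e m n < ENNReal.ofReal (δ j)))
        then (2:ℝ≥0∞)^j * e m n ^ d else 0 with hG
      have hpt : ∀ n, ENNReal.ofReal (h (e m n).toReal) ≤ ∑' j, G j n := by
        intro n
        by_cases hez : e m n = 0
        · rw [hez]
          simp [h0]
        · have hfin : e m n ≠ ∞ := hUne m n
          have ht0 : 0 < (e m n).toReal := ENNReal.toReal_pos hez hfin
          have hex : ∃ j, ENNReal.ofReal (δ (j+1)) ≤ e m n := by
            obtain ⟨k, hk⟩ := exists_pow_lt_of_lt_one ht0 (by norm_num : (8:ℝ)⁻¹ < 1)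
            refine ⟨k, ?_⟩
            rw [← ENNReal.ofReal_toReal hfin]
            exact ENNReal.ofReal_le_ofReal ((hδ8 k).trans hk.le)
          set j₀ := Nat.find hex with hj₀
          have hP : ENNReal.ofReal (δ (j₀+1)) ≤ e m n := Nat.find_spec hex
          have hcond : (ENNReal.ofReal (δ (j₀+1)) ≤ e m n ∧
              (j₀ = 0 ∨ e m n < ENNReal.ofReal (δ j₀))) := by
            refine ⟨hP, ?_⟩
            rcases Nat.eq_zero_or_pos j₀ with h0' | h0'
            · exact Or.inl h0'
            · right
              obtain ⟨k, hk⟩ : ∃ k, j₀ = k + 1 := ⟨j₀ - 1, by omega⟩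
              have hmin := Nat.find_min hex (show j₀ - 1 < j₀ by omega)
              rw [not_le] at hmin
              have : j₀ - 1 + 1 = j₀ := by omega
              rwa [this] at hmin
          have hδt : δ (j₀+1) ≤ (e m n).toReal := by
            have := ENNReal.toReal_mono hfin hP
            rwa [ENNReal.toReal_ofReal (hδpos (j₀+1)).le] at this
          have hle1 : ENNReal.ofReal (h (e m n).toReal) ≤ (2:ℝ≥0∞)^j₀ * e m n ^ d := by
            have h1 := h_le (e m n).toReal j₀
            rw [max_eq_left hδt] at h1
            calc ENNReal.ofReal (h (e m n).toReal)
                ≤ ENNReal.ofReal ((2:ℝ)^j₀ * (e m n).toReal ^ d) := ENNReal.ofReal_le_ofReal h1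
              _ = (2:ℝ≥0∞)^j₀ * e m n ^ d := by
                  rw [ENNReal.ofReal_mul (by positivity), ENNReal.ofReal_pow (by norm_num),
                    ENNReal.ofReal_pow ENNReal.toReal_nonneg, ENNReal.ofReal_toReal hfin,
                    ENNReal.ofReal_ofNat]
          calc ENNReal.ofReal (h (e m n).toReal) ≤ G j₀ n := by
                simp only [hG]
                rw [if_pos hcond]; exact hle1
            _ ≤ ∑' j, G j n := ENNReal.le_tsum j₀
      have hj_bound : ∀ j, (∑' n, G j n) ≤ (2:ℝ≥0∞)⁻¹^m * (2:ℝ≥0∞)⁻¹^j := by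
        intro j
        rcases le_or_gt j m with hjm | hjm
        · have h1 : ∑' n, G j n ≤ (2:ℝ≥0∞)^j * ∑' n, e m n ^ d := by
            rw [← ENNReal.tsum_mul_left]
            refine ENNReal.tsum_le_tsum fun n => ?_
            simp only [hG]
            split
            · exact le_rfl
            · exact zero_le
          refine h1.trans ?_
          refine le_trans (mul_le_mul_right (hUsum m) _) (ennreal_arith1 hjm)
        · obtain ⟨k, rfl⟩ : ∃ k, j = k + 1 := ⟨j - 1, by omega⟩
          have h1 : ∑' n, G (k+1) n ≤ (2:ℝ≥0∞)^(k+1) *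
              ∑' n, (if e m n < ENNReal.ofReal (δ (k+1)) then e m n ^ d else 0) := by
            rw [← ENNReal.tsum_mul_left]
            refine ENNReal.tsum_le_tsum fun n => ?_
            simp only [hG]
            by_cases hc : ENNReal.ofReal (δ (k+1+1)) ≤ e m n ∧
                (k+1 = 0 ∨ e m n < ENNReal.ofReal (δ (k+1)))
            · rw [if_pos hc, if_pos (hc.2.resolve_left (by omega))]
            · rw [if_neg hc]
              exact zero_le
          refine h1.trans ?_
          have h2 : ∑' n, (if e m n < ENNReal.ofReal (δ (k+1)) then e m n ^ d else 0)
              ≤ (8⁻¹:ℝ≥0∞)^(k+1) := hδtail k m (by omega)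
          refine le_trans (mul_le_mul_right h2 _) (ennreal_arith2 (by omega))
      calc ∑' n, ENNReal.ofReal (h (e m n).toReal)
          ≤ ∑' n, ∑' j, G j n := ENNReal.tsum_le_tsum hpt
        _ = ∑' j, ∑' n, G j n := ENNReal.tsum_comm
        _ ≤ ∑' j : ℕ, (2:ℝ≥0∞)⁻¹^m * (2:ℝ≥0∞)⁻¹^j := ENNReal.tsum_le_tsum hj_bound
        _ = (2:ℝ≥0∞)⁻¹^m * ∑' j : ℕ, (2:ℝ≥0∞)⁻¹^j := ENNReal.tsum_mul_left
        _ = 2 * (2:ℝ≥0∞)⁻¹ ^ m := by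
            rw [ENNReal.tsum_geometric, ENNReal.one_sub_inv_two, inv_inv, mul_comm]
    -- apply mkMetric_le_liminf_tsum
    have hr : Tendsto (fun m : ℕ => ENNReal.ofReal ((m:ℝ)+1)⁻¹) atTop (nhds 0) := by
      have h1 : Tendsto (fun m : ℕ => ((m:ℝ)+1)⁻¹) atTop (nhds 0) := by
        exact tendsto_one_div_add_atTop_nhds_zero_nat.congr (fun n => one_div _)
      have := (ENNReal.continuous_ofReal.tendsto 0).comp h1
      rw [ENNReal.ofReal_zero] at this; exact this
    have hbound := Measure.mkMetric_le_liminf_tsum (X := X) E _ hr U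
      (Eventually.of_forall fun m => hUdiam m) (Eventually.of_forall hUcov)
      (fun r => ENNReal.ofReal (h r.toReal))
    unfold gaugeMeasure
    refine le_antisymm (hbound.trans ?_) (zero_le)
    have htend : Tendsto (fun m : ℕ => 2 * (2:ℝ≥0∞)⁻¹ ^ m) atTop (nhds 0) := by
      have h1 : Tendsto (fun m : ℕ => (2:ℝ≥0∞)⁻¹ ^ m) atTop (nhds 0) :=
        ENNReal.tendsto_pow_atTop_nhds_zero_of_lt_one (by
          rw [ENNReal.inv_lt_one]; norm_num)
      have := ENNReal.Tendsto.const_mul h1 (Or.inr (by norm_num : (2:ℝ≥0∞) ≠ ∞))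
      simpa using this
    calc liminf (fun m => ∑' n, ENNReal.ofReal (h (EMetric.diam (U m n)).toReal)) atTop
        ≤ liminf (fun m : ℕ => 2 * (2:ℝ≥0∞)⁻¹ ^ m) atTop := by
          exact liminf_le_liminf (Eventually.of_forall fun m => main m)
      _ = 0 := htend.liminf_eq


/-- Besicovitch: positive `ℋ^h` measure for all `h ≺ x^d` implies positive
Lebesgue measure. -/
theorem stmt_7 (d : ℕ) (hd : 0 < d) (E : Set (EuclideanSpace ℝ (Fin d)))
    (hE : ∀ h : ℝ → ℝ, IsDimFun h → Prec h (fun x : ℝ => x ^ d) →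
      0 < gaugeMeasure h E) :
    0 < volume E := by
  by_contra hcon
  rw [not_lt, le_zero_iff] at hcon
  have hH : μH[(d:ℝ)] E = 0 := by
    set f := WithLp.equiv 2 (Fin d → ℝ) with hf
    have himg : volume (⇑f '' E) = 0 := by
      rw [Equiv.image_eq_preimage_symm]
      exact (PiLp.volume_preserving_toLp (Fin d)).quasiMeasurePreserving.preimage_null hcon
    have hpi : μH[(d:ℝ)] (⇑f '' E) = 0 := by
      have := hausdorffMeasure_pi_real (ι := Fin d)
      rw [Fintype.card_fin] at this
      rw [this, himg]
    have hlip : LipschitzWith ((d : ℝ≥0) ^ ((1:ℝ≥0∞) / 2).toReal) ⇑f.symm := by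
      have := PiLp.lipschitzWith_toLp 2 (fun _ : Fin d => ℝ)
      simpa [hf, WithLp.equiv_symm_apply] using this
    have := hlip.hausdorffMeasure_image_le (d := (d:ℝ)) (Nat.cast_nonneg d) (⇑f '' E)
    rw [Equiv.symm_image_image, hpi, mul_zero] at this
    exact le_antisymm this (zero_le)
  obtain ⟨h, hdim, hprec, hzero⟩ := besico_exists_gauge d hd E hH
  have := hE h hdim hprec
  rw [hzero] at this
  exact lt_irrefl 0 this
end

section
/- If E ⊆ ℝ has positive Lebesgue measure, then E contains arithmetic progressions of every finite length: for each n ∈ ℕ there exist a ∈ ℝ and r > 0 with a, a+r, a+2r, …, a+(n−1)r all in E. -/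
open MeasureTheory Filter Set
open scoped symmDiff Topology ENNReal

lemma key_symmdiff (A : Set ℝ) (hA : NullMeasurableSet A volume) (hfin : volume A ≠ ∞) :
    Tendsto (fun t : ℝ => volume (((fun x => x + t) ⁻¹' A) ∆ A)) (𝓝 0) (𝓝 0) := by
  set f : ℝ → C(ℝ, ℝ) := fun t => ⟨fun x => x + t, by continuity⟩ with hf
  have hcont : Continuous f :=
    ContinuousMap.continuous_of_continuous_uncurry f
      (by exact (continuous_snd.add continuous_fst : Continuous fun p : ℝ × ℝ => p.2 + p.1))
  have hf0 : f 0 = ContinuousMap.id ℝ := by ext x; simp [hf]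
  have := tendsto_measure_symmDiff_preimage_nhds_zero (μ := volume) (ν := volume)
    (l := 𝓝 (0:ℝ)) (f := f) (g := ContinuousMap.id ℝ)
    (by rw [← hf0]; exact hcont.tendsto 0)
    (Eventually.of_forall fun t => measurePreserving_add_right volume t)
    (MeasurePreserving.id _) hA hfin
  simpa [hf] using this

theorem stmt_8 (E : Set ℝ) (hE : MeasurableSet E) (hpos : 0 < volume E) :
    ∀ n : ℕ, ∃ a r : ℝ, 0 < r ∧ ∀ i : ℕ, i < n → a + i * r ∈ E := by
  intro n
  rcases Nat.eq_zero_or_pos n with rfl | hn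
  · exact ⟨0, 1, one_pos, fun i hi => absurd hi (Nat.not_lt_zero i)⟩
  -- find a bounded piece of positive measure
  obtain ⟨k, hk⟩ : ∃ k : ℕ, 0 < volume (E ∩ Icc (-(k:ℝ)) k) := by
    by_contra h
    push_neg at h
    have hsub : E ⊆ ⋃ k : ℕ, E ∩ Icc (-(k:ℝ)) k := by
      intro x hx
      refine mem_iUnion.2 ⟨⌈|x|⌉₊, hx, ?_, ?_⟩
      · have := Nat.le_ceil |x|; have := neg_abs_le x; push_cast at *; linarith
      · have := Nat.le_ceil |x|; have := le_abs_self x; push_cast at *; linarith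
    have : volume E = 0 := measure_mono_null hsub
      (measure_iUnion_null fun k => le_antisymm (h k) zero_le)
    exact absurd this hpos.ne'
  set A : Set ℝ := E ∩ Icc (-(k:ℝ)) k with hA
  have hAm : MeasurableSet A := hE.inter measurableSet_Icc
  have hAfin : volume A ≠ ∞ :=
    (lt_of_le_of_lt (measure_mono inter_subset_right) measure_Icc_lt_top).ne
  set ε : ℝ≥0∞ := volume A / n with hε
  have hε0 : 0 < ε := ENNReal.div_pos hk.ne' (ENNReal.natCast_ne_top n)
  have hεtop : ε ≠ ∞ := (ENNReal.div_lt_top hAfin (by exact_mod_cast hn.ne')).ne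
  have hkey := key_symmdiff A hAm.nullMeasurableSet hAfin
  have hsmall : ∀ᶠ t in 𝓝 (0:ℝ), volume (((fun x => x + t) ⁻¹' A) ∆ A) < ε :=
    hkey.eventually (tendsto_id.eventually_lt_const hε0)
  have hall : ∀ᶠ r in 𝓝[>] (0:ℝ), ∀ i ∈ Finset.range n,
      volume (((fun x => x + (i:ℝ) * r) ⁻¹' A) ∆ A) < ε := by
    rw [eventually_all_finset]
    intro i _
    have hti : Tendsto (fun r : ℝ => (i:ℝ) * r) (𝓝[>] 0) (𝓝 0) := by
      have : Tendsto (fun r : ℝ => (i:ℝ) * r) (𝓝 0) (𝓝 ((i:ℝ) * 0)) :=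
        (continuous_const.mul continuous_id).tendsto 0
      simpa using this.mono_left nhdsWithin_le_nhds
    exact hti.eventually hsmall
  obtain ⟨r, hr, hrs⟩ := (hall.and self_mem_nhdsWithin).exists
  have hne : (A ∩ ⋂ i ∈ Finset.range n, (fun x => x + (i:ℝ) * r) ⁻¹' A).Nonempty := by
    by_contra hemp
    rw [not_nonempty_iff_eq_empty] at hemp
    have hsub : A ⊆ ⋃ i ∈ Finset.range n, (A \ (fun x => x + (i:ℝ) * r) ⁻¹' A) := by
      intro x hx
      by_contra hxn
      simp only [mem_iUnion, mem_diff, not_exists, not_and, not_not] at hxn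
      have hmem : x ∈ A ∩ ⋂ i ∈ Finset.range n, (fun x => x + (i:ℝ) * r) ⁻¹' A :=
        ⟨hx, mem_iInter₂.2 fun i hi => hxn i hi hx⟩
      rw [hemp] at hmem
      exact absurd hmem (notMem_empty x)
    have h1 : volume A ≤ ∑ i ∈ Finset.range n,
        volume (A \ (fun x => x + (i:ℝ) * r) ⁻¹' A) :=
      (measure_mono hsub).trans (measure_biUnion_finset_le _ _)
    have h2 : ∑ i ∈ Finset.range n, volume (A \ (fun x => x + (i:ℝ) * r) ⁻¹' A)
        < ∑ _i ∈ Finset.range n, ε := by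
      refine ENNReal.sum_lt_sum_of_nonempty (Finset.nonempty_range_iff.2 hn.ne') fun i hi => ?_
      exact lt_of_le_of_lt (measure_mono fun x hx => Or.inr ⟨hx.1, hx.2⟩) (hr i hi)
    have h3 : ∑ _i ∈ Finset.range n, ε = n * ε := by
      simp [Finset.sum_const, mul_comm]
    have h4 : (n : ℝ≥0∞) * ε ≤ volume A := by
      rw [hε, mul_comm,
        ENNReal.div_mul_cancel (by exact_mod_cast hn.ne') (ENNReal.natCast_ne_top n)]
    exact absurd ((h1.trans_lt h2).trans_le (h3 ▸ h4)) (lt_irrefl _)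
  obtain ⟨a, haA, haI⟩ := hne
  exact ⟨a, r, hrs, fun i hi =>
    (mem_iInter₂.1 haI i (Finset.mem_range.2 hi)).1⟩
end

section
/- Given a dimension function h with h ≺ x and a countable set Ã ⊆ ℝ \ {0}, there exists a compact set Ẽ ⊆ [0, log 2] with ℋ^h(Ẽ) > 0 such that the difference set Ẽ − Ẽ = { y − x : x, y ∈ Ẽ } contains no element of Ã. -/
open MeasureTheory Filter Set


namespace Stmt10Aux

structure Lvl where
  l : ℝ
  N : ℕ
  hl : 0 < l
  hN : 0 < N

/-- One construction step. -/
theorem step_ex (h : ℝ → ℝ) (hpos : ∀ t > 0, 0 < h t)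
    (hprec : Tendsto (fun x => x / h x) (nhdsWithin 0 (Set.Ioi 0)) (nhds 0))
    (a : ℝ) (ha : a ≠ 0) (P : Lvl) :
    ∃ d : ℝ × ℕ, 0 < d.1 ∧ 2 ≤ d.2 ∧ d.1 ≤ P.l / 48 ∧
      (∃ j : ℕ, |a| = (2 * (j : ℝ) + 1) * (2 * d.1)) ∧
      4 * d.1 * d.2 + d.1 ≤ P.l ∧
      P.l * P.N / 8 ≤ d.1 * (P.N * d.2) ∧
      ∀ x ∈ Set.Ioc 0 d.1, x ≤ P.l * P.N / 96 * h x := by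
  have hl := P.hl
  have hN : (0:ℝ) < P.N := by exact_mod_cast P.hN
  set B : ℝ := P.l * P.N / 96 with hB
  have hBpos : 0 < B := by positivity
  -- from hprec: get t > 0 with x ∈ Ioc 0 t → x ≤ B * h x
  have hev : ∀ᶠ x in nhdsWithin 0 (Set.Ioi 0), x / h x < B :=
    hprec.eventually_lt_const hBpos
  obtain ⟨t, ht, hsub⟩ := mem_nhdsGT_iff_exists_Ioc_subset.1 hev
  have habs : 0 < |a| := abs_pos.2 ha
  have hm : 0 < min t (P.l / 48) := lt_min ht (by positivity)
  -- choose j with |a| / (2j+1) small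
  obtain ⟨n, hn⟩ := exists_nat_gt (|a| / (2 * min t (P.l / 48)))
  have h2n : (0:ℝ) < 2 * n + 1 := by positivity
  set e : ℝ := |a| / (2 * (2 * n + 1)) with he
  have hepos : 0 < e := by positivity
  have hesmall : e < min t (P.l / 48) := by
    rw [he, div_lt_iff₀ (by positivity)]
    have h1 : |a| / (2 * min t (P.l / 48)) < 2 * n + 1 := lt_of_lt_of_le hn (by linarith)
    rw [div_lt_iff₀ (by positivity)] at h1
    nlinarith [hm]
  have het : e ≤ t := le_of_lt (lt_of_lt_of_le hesmall (min_le_left _ _))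
  have hel : e ≤ P.l / 48 := le_of_lt (lt_of_lt_of_le hesmall (min_le_right _ _))
  -- the branching number
  have hr12 : (12:ℝ) ≤ P.l / (4 * e) := by
    rw [le_div_iff₀ (by positivity)]
    nlinarith
  set M : ℕ := ⌊P.l / (4 * e)⌋₊ - 1 with hM
  have hfl : 12 ≤ ⌊P.l / (4 * e)⌋₊ := Nat.le_floor (by exact_mod_cast hr12)
  have hM1 : M + 1 = ⌊P.l / (4 * e)⌋₊ := by omega
  have hMGe : 2 ≤ M := by omega
  have hMle : (M:ℝ) ≤ P.l / (4 * e) - 1 := by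
    have := Nat.floor_le (show (0:ℝ) ≤ P.l / (4 * e) by positivity)
    have h2 : ((M:ℝ) + 1) = (⌊P.l / (4 * e)⌋₊ : ℝ) := by exact_mod_cast congrArg (Nat.cast (R := ℝ)) hM1
    linarith
  have hMge : P.l / (4 * e) - 2 ≤ (M:ℝ) := by
    have := Nat.lt_floor_add_one (P.l / (4 * e))
    have h2 : ((M:ℝ) + 1) = (⌊P.l / (4 * e)⌋₊ : ℝ) := by exact_mod_cast congrArg (Nat.cast (R := ℝ)) hM1
    linarith
  refine ⟨(e, M), hepos, hMGe, hel, ⟨n, by rw [he]; field_simp⟩, ?_, ?_, ?_⟩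
  · -- fit : 4 e M + e ≤ P.l
    have : 4 * e * (M:ℝ) ≤ 4 * e * (P.l / (4 * e) - 1) := by
      apply mul_le_mul_of_nonneg_left hMle (by positivity)
    have h4 : 4 * e * (P.l / (4 * e)) = P.l := by field_simp
    nlinarith
  · -- mass : P.l * P.N / 8 ≤ e * (P.N * M)
    have hge : P.l / (8 * e) ≤ (M:ℝ) := by
      have : P.l / (4 * e) - 2 ≥ P.l / (8 * e) := by
        have h1 : P.l / (4 * e) = 2 * (P.l / (8 * e)) := by field_simp; ring
        have h2 : (12:ℝ) ≤ 2 * (P.l / (8 * e)) := by rw [← h1]; exact hr12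
        linarith
      linarith
    have : e * ((P.N : ℝ) * (P.l / (8 * e))) ≤ e * ((P.N:ℝ) * M) := by
      apply mul_le_mul_of_nonneg_left _ (le_of_lt hepos)
      exact mul_le_mul_of_nonneg_left hge (le_of_lt hN)
    have he8 : e * ((P.N : ℝ) * (P.l / (8 * e))) = P.l * P.N / 8 := by field_simp
    push_cast
    linarith
  · -- Frostman smallness
    intro x hx
    have hxt : x ∈ Set.Ioc 0 t := ⟨hx.1, le_trans hx.2 het⟩
    have hlt : x / h x < B := hsub hxt
    have hhx : 0 < h x := hpos x hx.1
    rw [div_lt_iff₀ hhx] at hlt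
    linarith



structure Setup where
  h : ℝ → ℝ
  f : ℕ → ℝ
  hpos : ∀ t > 0, 0 < h t
  hprec : Tendsto (fun x => x / h x) (nhdsWithin 0 (Set.Ioi 0)) (nhds 0)
  hf : ∀ n, f n ≠ 0

namespace Setup

noncomputable def lvl (S : Setup) : ℕ → Lvl
  | 0 => ⟨Real.log 2, 1, Real.log_pos one_lt_two, one_pos⟩
  | k + 1 =>
    let P := S.lvl k
    let d := (step_ex S.h S.hpos S.hprec (S.f k) (S.hf k) P).choose
    have spec := (step_ex S.h S.hpos S.hprec (S.f k) (S.hf k) P).choose_spec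
    ⟨d.1, P.N * d.2, spec.1, Nat.mul_pos P.hN (Nat.lt_of_lt_of_le two_pos spec.2.1)⟩

noncomputable def ll (S : Setup) (k : ℕ) : ℝ := (S.lvl k).l
noncomputable def NN (S : Setup) (k : ℕ) : ℕ := (S.lvl k).N
noncomputable def MM (S : Setup) (k : ℕ) : ℕ :=
  (step_ex S.h S.hpos S.hprec (S.f k) (S.hf k) (S.lvl k)).choose.2

theorem ll_pos (S : Setup) (k : ℕ) : 0 < S.ll k := (S.lvl k).hl
theorem NN_pos (S : Setup) (k : ℕ) : 0 < S.NN k := (S.lvl k).hN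
theorem ll_zero (S : Setup) : S.ll 0 = Real.log 2 := rfl
theorem NN_zero (S : Setup) : S.NN 0 = 1 := rfl

theorem lvl_spec (S : Setup) (k : ℕ) :
    S.NN (k+1) = S.NN k * S.MM k ∧ 2 ≤ S.MM k ∧
    S.ll (k+1) ≤ S.ll k / 48 ∧
    (∃ j : ℕ, |S.f k| = (2 * (j : ℝ) + 1) * (2 * S.ll (k+1))) ∧
    4 * S.ll (k+1) * S.MM k + S.ll (k+1) ≤ S.ll k ∧
    S.ll k * S.NN k / 8 ≤ S.ll (k+1) * (S.NN k * S.MM k) ∧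
    ∀ x ∈ Set.Ioc 0 (S.ll (k+1)), x ≤ S.ll k * S.NN k / 96 * S.h x := by
  have spec := (step_ex S.h S.hpos S.hprec (S.f k) (S.hf k) (S.lvl k)).choose_spec
  have hl : S.ll (k+1) = (step_ex S.h S.hpos S.hprec (S.f k) (S.hf k) (S.lvl k)).choose.1 := rfl
  have hN : S.NN (k+1) = S.NN k * S.MM k := rfl
  rw [hl]
  exact ⟨hN, spec.2.1, spec.2.2.1, spec.2.2.2.1, spec.2.2.2.2.1, spec.2.2.2.2.2.1,
    spec.2.2.2.2.2.2⟩

noncomputable def Y (S : Setup) : ℕ → ℤ → ℝ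
  | 0, _ => 0
  | k+1, i =>
      4 * S.ll (k+1) * (⌈S.Y k (i / (S.MM k : ℤ)) / (4 * S.ll (k+1))⌉ : ℤ)
        + 4 * S.ll (k+1) * ((i % (S.MM k : ℤ) : ℤ) : ℝ)

theorem Y_zero (S : Setup) (i : ℤ) : S.Y 0 i = 0 := rfl

theorem Y_succ (S : Setup) (k : ℕ) (i : ℤ) :
    S.Y (k+1) i = 4 * S.ll (k+1) * (⌈S.Y k (i / (S.MM k : ℤ)) / (4 * S.ll (k+1))⌉ : ℤ)
        + 4 * S.ll (k+1) * ((i % (S.MM k : ℤ) : ℤ) : ℝ) := rfl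

theorem Y_grid (S : Setup) (k : ℕ) (i : ℤ) :
    ∃ m : ℤ, S.Y (k+1) i = 4 * S.ll (k+1) * (m : ℝ) := by
  refine ⟨⌈S.Y k (i / (S.MM k : ℤ)) / (4 * S.ll (k+1))⌉ + i % (S.MM k : ℤ), ?_⟩
  rw [Y_succ, Int.cast_add]
  ring

theorem MM_pos (S : Setup) (k : ℕ) : 0 < (S.MM k : ℤ) := by
  have := (S.lvl_spec k).2.1; exact_mod_cast Nat.lt_of_lt_of_le two_pos this

theorem Y_nest (S : Setup) (k : ℕ) (i : ℤ) :
    S.Y k (i / (S.MM k : ℤ)) ≤ S.Y (k+1) i ∧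
      S.Y (k+1) i + S.ll (k+1) ≤ S.Y k (i / (S.MM k : ℤ)) + S.ll k := by
  obtain ⟨-, hM2, -, -, hfit, -, -⟩ := S.lvl_spec k
  have hl' : 0 < S.ll (k+1) := S.ll_pos (k+1)
  set x := S.Y k (i / (S.MM k : ℤ)) with hx
  have h4 : (0:ℝ) < 4 * S.ll (k+1) := by positivity
  have hceil : x ≤ 4 * S.ll (k+1) * (⌈x / (4 * S.ll (k+1))⌉ : ℤ) := by
    have := Int.le_ceil (x / (4 * S.ll (k+1)))
    calc x = 4 * S.ll (k+1) * (x / (4 * S.ll (k+1))) := by field_simp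
    _ ≤ _ := by exact mul_le_mul_of_nonneg_left this (le_of_lt h4)
  have hceil2 : 4 * S.ll (k+1) * (⌈x / (4 * S.ll (k+1))⌉ : ℤ) ≤ x + 4 * S.ll (k+1) := by
    have := Int.ceil_lt_add_one (x / (4 * S.ll (k+1)))
    have h2 : 4 * S.ll (k+1) * (⌈x / (4 * S.ll (k+1))⌉ : ℤ) ≤
        4 * S.ll (k+1) * (x / (4 * S.ll (k+1)) + 1) :=
      mul_le_mul_of_nonneg_left (le_of_lt this) (le_of_lt h4)
    have h3 : 4 * S.ll (k+1) * (x / (4 * S.ll (k+1)) + 1) = x + 4 * S.ll (k+1) := by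
      field_simp
    linarith
  have hmod0 : (0:ℝ) ≤ ((i % (S.MM k : ℤ) : ℤ) : ℝ) := by
    exact_mod_cast Int.emod_nonneg i (ne_of_gt (S.MM_pos k))
  have hmodM : ((i % (S.MM k : ℤ) : ℤ) : ℝ) ≤ (S.MM k : ℝ) - 1 := by
    have := Int.emod_lt_of_pos i (S.MM_pos k)
    have h2 : i % (S.MM k : ℤ) ≤ (S.MM k : ℤ) - 1 := by omega
    exact_mod_cast h2
  constructor
  · rw [Y_succ]
    nlinarith
  · rw [Y_succ]
    have : 4 * S.ll (k+1) * ((i % (S.MM k : ℤ) : ℤ) : ℝ) ≤ 4 * S.ll (k+1) * ((S.MM k : ℝ) - 1) :=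
      mul_le_mul_of_nonneg_left hmodM (le_of_lt h4)
    nlinarith

theorem Y_range (S : Setup) (k : ℕ) (i : ℤ) :
    0 ≤ S.Y k i ∧ S.Y k i + S.ll k ≤ Real.log 2 := by
  induction k generalizing i with
  | zero => simp [Y_zero, ll_zero]
  | succ k ih =>
    obtain ⟨h1, h2⟩ := S.Y_nest k i
    obtain ⟨h3, h4⟩ := ih (i / (S.MM k : ℤ))
    exact ⟨le_trans h3 h1, by linarith⟩

theorem ll_succ_le (S : Setup) (k : ℕ) : S.ll (k+1) ≤ S.ll k / 48 := (S.lvl_spec k).2.2.1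

theorem Y_sep (S : Setup) : ∀ k, ∀ i j : ℤ, 0 ≤ i → i < S.NN k → 0 ≤ j → j < S.NN k →
    i ≠ j → 4 * S.ll k ≤ |S.Y k i - S.Y k j| := by
  intro k
  induction k with
  | zero =>
    intro i j hi hi' hj hj' hij
    exfalso
    rw [S.NN_zero] at hi' hj'
    omega
  | succ k ih =>
    intro i j hi hi' hj hj' hij
    have hM := S.MM_pos k
    have hNk : (0:ℤ) < S.NN k := by exact_mod_cast S.NN_pos k
    have hNsucc : (S.NN (k+1) : ℤ) = (S.NN k : ℤ) * (S.MM k : ℤ) := by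
      have := (S.lvl_spec k).1; exact_mod_cast this
    rw [hNsucc] at hi' hj'
    have hqi : i / (S.MM k : ℤ) < S.NN k := by
      rw [Int.ediv_lt_iff_lt_mul hM]; exact hi'
    have hqj : j / (S.MM k : ℤ) < S.NN k := by
      rw [Int.ediv_lt_iff_lt_mul hM]; exact hj'
    have hqi0 : 0 ≤ i / (S.MM k : ℤ) := Int.ediv_nonneg hi (le_of_lt hM)
    have hqj0 : 0 ≤ j / (S.MM k : ℤ) := Int.ediv_nonneg hj (le_of_lt hM)
    have hdeci : (S.MM k : ℤ) * (i / (S.MM k : ℤ)) + i % (S.MM k : ℤ) = i :=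
      Int.mul_ediv_add_emod i (S.MM k : ℤ)
    have hdecj : (S.MM k : ℤ) * (j / (S.MM k : ℤ)) + j % (S.MM k : ℤ) = j :=
      Int.mul_ediv_add_emod j (S.MM k : ℤ)
    have hl' : 0 < S.ll (k+1) := S.ll_pos (k+1)
    have hlk : 0 < S.ll k := S.ll_pos k
    have h48 : S.ll (k+1) ≤ S.ll k / 48 := S.ll_succ_le k
    by_cases hq : i / (S.MM k : ℤ) = j / (S.MM k : ℤ)
    · -- same parent
      have hr : i % (S.MM k : ℤ) ≠ j % (S.MM k : ℤ) := by
        intro he; exact hij (by rw [← hdeci, ← hdecj, hq, he])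
      have hdiff : S.Y (k+1) i - S.Y (k+1) j
          = 4 * S.ll (k+1) * (((i % (S.MM k : ℤ) : ℤ) : ℝ) - ((j % (S.MM k : ℤ) : ℤ) : ℝ)) := by
        rw [Y_succ, Y_succ, hq]; ring
      have habs : (1:ℝ) ≤ |((i % (S.MM k : ℤ) : ℤ) : ℝ) - ((j % (S.MM k : ℤ) : ℤ) : ℝ)| := by
        have h1 : (1:ℤ) ≤ |i % (S.MM k : ℤ) - j % (S.MM k : ℤ)| :=
          Int.one_le_abs (sub_ne_zero.2 hr)
        have h2 : ((1:ℤ):ℝ) ≤ ((|i % (S.MM k : ℤ) - j % (S.MM k : ℤ)|:ℤ):ℝ) := by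
          exact_mod_cast h1
        rw [Int.cast_abs, Int.cast_sub, Int.cast_one] at h2
        exact h2
      rw [hdiff, abs_mul, abs_of_pos (by positivity : (0:ℝ) < 4 * S.ll (k+1))]
      nlinarith
    · -- different parents
      have hsep := ih _ _ hqi0 hqi hqj0 hqj hq
      obtain ⟨hi1, hi2⟩ := S.Y_nest k i
      obtain ⟨hj1, hj2⟩ := S.Y_nest k j
      set xq := S.Y k (i / (S.MM k : ℤ))
      set xq' := S.Y k (j / (S.MM k : ℤ))
      have hll : 4 * S.ll (k+1) ≤ 3 * S.ll k := by linarith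
      rcases le_abs.1 hsep with hc | hc
      · -- xq - xq' ≥ 4 l k : so Y i ≥ xq ≥ xq' + 4 l k ≥ Y j - l k + 4 l k
        have : S.Y (k+1) i - S.Y (k+1) j ≥ 3 * S.ll k := by linarith
        calc 4 * S.ll (k+1) ≤ 3 * S.ll k := hll
        _ ≤ S.Y (k+1) i - S.Y (k+1) j := this
        _ ≤ |S.Y (k+1) i - S.Y (k+1) j| := le_abs_self _
      · have : S.Y (k+1) j - S.Y (k+1) i ≥ 3 * S.ll k := by linarith
        calc 4 * S.ll (k+1) ≤ 3 * S.ll k := hll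
        _ ≤ S.Y (k+1) j - S.Y (k+1) i := this
        _ ≤ |S.Y (k+1) i - S.Y (k+1) j| := by rw [abs_sub_comm]; exact le_abs_self _

theorem floor_mul_div (a : ℝ) (M : ℕ) (hM : 0 < M) : ⌊a * M⌋ / (M : ℤ) = ⌊a⌋ := by
  have hMZ : (0:ℤ) < (M:ℤ) := by exact_mod_cast hM
  have hMR : (0:ℝ) < (M:ℝ) := by exact_mod_cast hM
  apply le_antisymm
  · have : ⌊a * M⌋ / (M:ℤ) < ⌊a⌋ + 1 := by
      rw [Int.ediv_lt_iff_lt_mul hMZ, Int.floor_lt]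
      push_cast
      nlinarith [Int.lt_floor_add_one a]
    omega
  · rw [Int.le_ediv_iff_mul_le hMZ, Int.le_floor]
    push_cast
    nlinarith [Int.floor_le a]

noncomputable def X (S : Setup) (k : ℕ) (ω : ℝ) : ℝ := S.Y k ⌊ω * S.NN k⌋

theorem floor_index (S : Setup) (k : ℕ) (ω : ℝ) :
    ⌊ω * S.NN (k+1)⌋ / (S.MM k : ℤ) = ⌊ω * S.NN k⌋ := by
  have hNsucc : (S.NN (k+1) : ℝ) = (S.NN k : ℝ) * (S.MM k : ℝ) := by
    have := (S.lvl_spec k).1; exact_mod_cast this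
  have : ω * S.NN (k+1) = (ω * S.NN k) * (S.MM k : ℝ) := by rw [hNsucc]; ring
  rw [this]
  exact floor_mul_div (ω * S.NN k) (S.MM k) (by have := (S.lvl_spec k).2.1; omega)

theorem X_nest (S : Setup) (k : ℕ) (ω : ℝ) :
    S.X k ω ≤ S.X (k+1) ω ∧ S.X (k+1) ω + S.ll (k+1) ≤ S.X k ω + S.ll k := by
  have h := S.Y_nest k ⌊ω * S.NN (k+1)⌋
  rw [S.floor_index k ω] at h
  exact h

theorem X_mono (S : Setup) (ω : ℝ) : Monotone fun k => S.X k ω :=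
  monotone_nat_of_le_succ fun k => (S.X_nest k ω).1

theorem X_chain (S : Setup) (ω : ℝ) {k n : ℕ} (hkn : k ≤ n) :
    S.X n ω + S.ll n ≤ S.X k ω + S.ll k := by
  induction n, hkn using Nat.le_induction with
  | base => exact le_refl _
  | succ n hn ih => exact le_trans (S.X_nest n ω).2 ih

theorem X_bddAbove (S : Setup) (ω : ℝ) : BddAbove (Set.range fun k => S.X k ω) := by
  refine ⟨Real.log 2, ?_⟩
  rintro x ⟨k, rfl⟩
  have := (S.Y_range k ⌊ω * S.NN k⌋).2
  have := S.ll_pos k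
  simp only [X]
  linarith

noncomputable def g (S : Setup) (ω : ℝ) : ℝ := ⨆ k, S.X k ω

theorem g_mem (S : Setup) (k : ℕ) (ω : ℝ) :
    S.X k ω ≤ S.g ω ∧ S.g ω ≤ S.X k ω + S.ll k := by
  constructor
  · exact le_ciSup (S.X_bddAbove ω) k
  · apply ciSup_le
    intro n
    rcases le_total n k with hnk | hkn
    · have h1 : S.X n ω ≤ S.X k ω := S.X_mono ω hnk
      have := S.ll_pos k
      linarith
    · have h2 := S.X_chain ω hkn
      have := S.ll_pos n
      linarith

theorem g_tendsto (S : Setup) (ω : ℝ) :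
    Tendsto (fun k => S.X k ω) atTop (nhds (S.g ω)) :=
  tendsto_atTop_ciSup (S.X_mono ω) (S.X_bddAbove ω)

theorem X_measurable (S : Setup) (k : ℕ) : Measurable (S.X k) := by
  have h1 : Measurable fun ω : ℝ => ⌊ω * S.NN k⌋ :=
    Int.measurable_floor.comp (measurable_id.mul_const _)
  exact (measurable_from_top (f := S.Y k)).comp h1

theorem g_measurable (S : Setup) : Measurable S.g := by
  apply measurable_of_tendsto_metrizable' atTop S.X_measurable
  rw [tendsto_pi_nhds]
  exact S.g_tendsto

/-- The level-k covering set. -/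
noncomputable def C (S : Setup) (k : ℕ) : Set ℝ :=
  ⋃ i ∈ Finset.Icc (0:ℤ) ((S.NN k : ℤ) - 1), Set.Icc (S.Y k i) (S.Y k i + S.ll k)

noncomputable def E (S : Setup) : Set ℝ := ⋂ k, S.C k

theorem C_closed (S : Setup) (k : ℕ) : IsClosed (S.C k) := by
  apply Set.Finite.isClosed_biUnion (Finset.Icc (0:ℤ) ((S.NN k : ℤ) - 1)).finite_toSet
  intro i _
  exact isClosed_Icc

theorem E_subset (S : Setup) : S.E ⊆ Set.Icc 0 (Real.log 2) := by
  intro x hx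
  have hx0 : x ∈ S.C 0 := Set.mem_iInter.1 hx 0
  simp only [C] at hx0
  rw [Set.mem_iUnion] at hx0
  obtain ⟨i, hi⟩ := hx0
  rw [Set.mem_iUnion] at hi
  obtain ⟨hi1, hi2⟩ := hi
  rw [Y_zero, ll_zero] at hi2
  simpa using hi2

theorem E_compact (S : Setup) : IsCompact S.E := by
  apply IsCompact.of_isClosed_subset isCompact_Icc
  · exact isClosed_iInter fun k => S.C_closed k
  · exact S.E_subset

theorem g_mem_E (S : Setup) {ω : ℝ} (hω : ω ∈ Set.Ico (0:ℝ) 1) : S.g ω ∈ S.E := by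
  rw [E, Set.mem_iInter]
  intro k
  have hN : (0:ℝ) < S.NN k := by exact_mod_cast S.NN_pos k
  have h0 : 0 ≤ ω * S.NN k := mul_nonneg hω.1 (le_of_lt hN)
  have h1 : ω * S.NN k < S.NN k := by nlinarith [hω.2]
  have hfl0 : 0 ≤ ⌊ω * S.NN k⌋ := Int.floor_nonneg.2 h0
  have hfl1 : ⌊ω * S.NN k⌋ ≤ (S.NN k : ℤ) - 1 := by
    have : ⌊ω * S.NN k⌋ < (S.NN k : ℤ) := Int.floor_lt.2 (by exact_mod_cast h1)
    omega
  rw [C, Set.mem_iUnion]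
  refine ⟨⌊ω * S.NN k⌋, ?_⟩
  rw [Set.mem_iUnion]
  refine ⟨?_, ?_⟩
  · exact Finset.mem_Icc.2 ⟨hfl0, hfl1⟩
  · exact ⟨(S.g_mem k ω).1, (S.g_mem k ω).2⟩

theorem E_avoid (S : Setup) (n : ℕ) : ∀ x ∈ S.E, ∀ y ∈ S.E, y - x ≠ S.f n := by
  intro x hx y hy hexact
  have hl' : 0 < S.ll (n+1) := S.ll_pos (n+1)
  obtain ⟨jj, hja⟩ := (S.lvl_spec n).2.2.2.1
  -- x and y lie in level-(n+1) intervals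
  have hxC := Set.mem_iInter.1 hx (n+1)
  have hyC := Set.mem_iInter.1 hy (n+1)
  rw [C, Set.mem_iUnion] at hxC hyC
  obtain ⟨i, hxC⟩ := hxC
  obtain ⟨j, hyC⟩ := hyC
  rw [Set.mem_iUnion] at hxC hyC
  obtain ⟨-, hxI⟩ := hxC
  obtain ⟨-, hyI⟩ := hyC
  obtain ⟨m₁, hm₁⟩ := S.Y_grid n i
  obtain ⟨m₂, hm₂⟩ := S.Y_grid n j
  rw [hm₁] at hxI
  rw [hm₂] at hyI
  obtain ⟨hx1, hx2⟩ := hxI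
  obtain ⟨hy1, hy2⟩ := hyI
  -- two cases on sign of f n
  rcases abs_choice (S.f n) with hc | hc
  · -- f n = |f n|
    set t : ℤ := (2 * jj + 1) - 2 * (m₂ - m₁) with ht
    have key : (y - 4 * S.ll (n+1) * (m₂:ℝ)) - (x - 4 * S.ll (n+1) * (m₁:ℝ))
        = 2 * S.ll (n+1) * (t:ℝ) := by
      have : y - x = (2 * (jj:ℝ) + 1) * (2 * S.ll (n+1)) := by rw [hexact, ← hc, hja]
      rw [ht]; push_cast; nlinarith [this]
    have habs : |2 * S.ll (n+1) * (t:ℝ)| ≤ S.ll (n+1) := by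
      rw [← key, abs_le]; constructor <;> nlinarith
    rw [abs_mul, abs_of_pos (by positivity : (0:ℝ) < 2 * S.ll (n+1))] at habs
    have ht1 : |(t:ℝ)| < 1 := by nlinarith
    have ht0 : t = 0 := by
      have h2 : -1 < t ∧ t < 1 := abs_lt.1 (by exact_mod_cast ht1)
      omega
    rw [ht] at ht0; omega
  · -- f n = -|f n|
    set t : ℤ := -(2 * jj + 1) - 2 * (m₂ - m₁) with ht
    have key : (y - 4 * S.ll (n+1) * (m₂:ℝ)) - (x - 4 * S.ll (n+1) * (m₁:ℝ))
        = 2 * S.ll (n+1) * (t:ℝ) := by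
      have hfn : S.f n = -((2 * (jj:ℝ) + 1) * (2 * S.ll (n+1))) := by
        rw [← hja]; linarith [hc]
      have : y - x = -((2 * (jj:ℝ) + 1) * (2 * S.ll (n+1))) := by rw [hexact, hfn]
      rw [ht]; push_cast; nlinarith [this]
    have habs : |2 * S.ll (n+1) * (t:ℝ)| ≤ S.ll (n+1) := by
      rw [← key, abs_le]; constructor <;> nlinarith
    rw [abs_mul, abs_of_pos (by positivity : (0:ℝ) < 2 * S.ll (n+1))] at habs
    have ht1 : |(t:ℝ)| < 1 := by nlinarith
    have ht0 : t = 0 := by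
      have h2 : -1 < t ∧ t < 1 := abs_lt.1 (by exact_mod_cast ht1)
      omega
    rw [ht] at ht0; omega

theorem sep_card : ∀ (n : ℕ) (T : Finset ℤ) (F : ℤ → ℝ) (s A B : ℝ), 0 < s → T.card = n + 1 →
    (∀ i ∈ T, ∀ j ∈ T, i ≠ j → s ≤ |F i - F j|) → (∀ i ∈ T, F i ∈ Set.Icc A B) →
    (n : ℝ) * s ≤ B - A := by
  intro n
  induction n with
  | zero =>
    intro T F s A B hs hcard hsep hmem
    obtain ⟨i, hi⟩ := Finset.card_pos.1 (by omega : 0 < T.card)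
    have := hmem i hi
    simp only [Set.mem_Icc] at this
    simp
    linarith [this.1, this.2]
  | succ n ih =>
    intro T F s A B hs hcard hsep hmem
    have hne : T.Nonempty := Finset.card_pos.1 (by omega)
    obtain ⟨i₀, hi₀, hmax⟩ := T.exists_max_image F hne
    set T' := T.erase i₀ with hT'
    have hcard' : T'.card = n + 1 := by
      rw [hT', Finset.card_erase_of_mem hi₀]; omega
    have hsub : T' ⊆ T := Finset.erase_subset _ _
    have hstep : (n : ℝ) * s ≤ (B - s) - A := by
      apply ih T' F s A (B - s) hs hcard'
      · intro i hi j hj hij; exact hsep i (hsub hi) j (hsub hj) hij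
      · intro i hi
        have hiT := hsub hi
        have hine : i ≠ i₀ := Finset.ne_of_mem_erase hi
        have h1 := hsep i hiT i₀ hi₀ hine
        have h2 : F i ≤ F i₀ := hmax i hiT
        have h3 : |F i - F i₀| = F i₀ - F i := by rw [abs_sub_comm]; exact abs_of_nonneg (by linarith)
        have h4 := (hmem i hiT).1
        have h5 := (hmem i₀ hi₀).2
        exact ⟨h4, by rw [h3] at h1; linarith⟩
    push_cast
    linarith

noncomputable def mu (S : Setup) : Measure ℝ :=
  Measure.map S.g (volume.restrict (Set.Ico (0:ℝ) 1))

theorem E_measurable (S : Setup) : MeasurableSet S.E :=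
  (isClosed_iInter fun k => S.C_closed k).measurableSet

theorem mu_E_ge (S : Setup) : 1 ≤ S.mu S.E := by
  rw [mu, Measure.map_apply S.g_measurable S.E_measurable,
    Measure.restrict_apply (S.g_measurable S.E_measurable)]
  have hsub : Set.Ico (0:ℝ) 1 ⊆ S.g ⁻¹' S.E ∩ Set.Ico 0 1 :=
    fun ω hω => ⟨S.g_mem_E hω, hω⟩
  calc (1:ENNReal) = volume (Set.Ico (0:ℝ) 1) := by rw [Real.volume_Ico]; norm_num
  _ ≤ _ := measure_mono hsub

theorem NN_two_pow (S : Setup) (k : ℕ) : 2^k ≤ S.NN k := by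
  induction k with
  | zero => simp [NN_zero]
  | succ k ih =>
    have h1 := (S.lvl_spec k).1
    have h2 := (S.lvl_spec k).2.1
    calc 2^(k+1) = 2^k * 2 := by ring
    _ ≤ S.NN k * S.MM k := Nat.mul_le_mul ih h2
    _ = S.NN (k+1) := h1.symm

theorem mu_Icc_le (S : Setup) (k : ℕ) (u v : ℝ) (huv : u ≤ v) :
    S.mu (Set.Icc u v) ≤
      ENNReal.ofReal (((v - u + S.ll k) / (4 * S.ll k) + 1) * (1 / S.NN k)) := by
  classical
  have hlk : 0 < S.ll k := S.ll_pos k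
  have hNpos : (0:ℝ) < S.NN k := by exact_mod_cast S.NN_pos k
  set T : Finset ℤ := (Finset.Icc (0:ℤ) ((S.NN k : ℤ) - 1)).filter
      (fun i => S.Y k i ∈ Set.Icc (u - S.ll k) v) with hT
  have hsub : S.g ⁻¹' (Set.Icc u v) ∩ Set.Ico 0 1 ⊆
      ⋃ i ∈ T, Set.Ico ((i:ℝ)/(S.NN k)) (((i:ℝ)+1)/(S.NN k)) := by
    rintro ω ⟨hωI, hω0, hω1⟩
    have h0 : 0 ≤ ω * S.NN k := mul_nonneg hω0 (le_of_lt hNpos)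
    have h1 : ω * S.NN k < S.NN k := by nlinarith
    have hfl0 : 0 ≤ ⌊ω * S.NN k⌋ := Int.floor_nonneg.2 h0
    have hfl1 : ⌊ω * S.NN k⌋ ≤ (S.NN k : ℤ) - 1 := by
      have : ⌊ω * S.NN k⌋ < (S.NN k : ℤ) := Int.floor_lt.2 (by exact_mod_cast h1)
      omega
    have hg1 := (S.g_mem k ω).1
    have hg2 := (S.g_mem k ω).2
    simp only [Set.mem_preimage, Set.mem_Icc] at hωI
    have hmemT : ⌊ω * S.NN k⌋ ∈ T := by
      rw [hT, Finset.mem_filter]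
      refine ⟨Finset.mem_Icc.2 ⟨hfl0, hfl1⟩, ?_⟩
      simp only [Set.mem_Icc]
      constructor
      · have : S.g ω ≤ S.X k ω + S.ll k := hg2
        simp only [X] at this
        linarith [hωI.1]
      · have : S.X k ω ≤ S.g ω := hg1
        simp only [X] at this
        linarith [hωI.2]
    rw [Set.mem_iUnion]
    refine ⟨⌊ω * S.NN k⌋, ?_⟩
    rw [Set.mem_iUnion]
    refine ⟨hmemT, ?_, ?_⟩
    · rw [div_le_iff₀ hNpos]
      exact le_trans (Int.floor_le _) (le_of_eq rfl)
    · rw [lt_div_iff₀ hNpos]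
      have := Int.lt_floor_add_one (ω * S.NN k)
      push_cast
      linarith
  have hmu : S.mu (Set.Icc u v) =
      volume (S.g ⁻¹' (Set.Icc u v) ∩ Set.Ico 0 1) := by
    rw [mu, Measure.map_apply S.g_measurable measurableSet_Icc,
      Measure.restrict_apply (S.g_measurable measurableSet_Icc)]
  -- card bound
  have hcard : (T.card : ℝ) ≤ (v - u + S.ll k) / (4 * S.ll k) + 1 := by
    rcases Finset.eq_empty_or_nonempty T with hemp | hne
    · rw [hemp]
      simp
      have h0 : (0:ℝ) ≤ v - u := by linarith
      positivity
    · obtain ⟨c, hc⟩ : ∃ c, T.card = c + 1 :=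
        ⟨T.card - 1, by have := Finset.card_pos.2 hne; omega⟩
      have hsep : ∀ i ∈ T, ∀ j ∈ T, i ≠ j → 4 * S.ll k ≤ |S.Y k i - S.Y k j| := by
        intro i hi j hj hij
        rw [hT, Finset.mem_filter] at hi hj
        have hi' := Finset.mem_Icc.1 hi.1
        have hj' := Finset.mem_Icc.1 hj.1
        exact S.Y_sep k i j hi'.1 (by omega) hj'.1 (by omega) hij
      have hmem : ∀ i ∈ T, S.Y k i ∈ Set.Icc (u - S.ll k) v := by
        intro i hi
        rw [hT, Finset.mem_filter] at hi
        exact hi.2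
      have hsc := sep_card c T (S.Y k) (4 * S.ll k) (u - S.ll k) v (by positivity) hc hsep hmem
      have h4 : (c:ℝ) ≤ (v - u + S.ll k) / (4 * S.ll k) := by
        rw [le_div_iff₀ (by positivity : (0:ℝ) < 4 * S.ll k)]
        nlinarith [hsc]
      rw [hc]
      push_cast
      linarith
  calc S.mu (Set.Icc u v) = volume (S.g ⁻¹' (Set.Icc u v) ∩ Set.Ico 0 1) := hmu
  _ ≤ volume (⋃ i ∈ T, Set.Ico ((i:ℝ)/(S.NN k)) (((i:ℝ)+1)/(S.NN k))) := measure_mono hsub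
  _ ≤ ∑ i ∈ T, volume (Set.Ico ((i:ℝ)/(S.NN k)) (((i:ℝ)+1)/(S.NN k))) :=
      measure_biUnion_finset_le T _
  _ = ∑ _i ∈ T, ENNReal.ofReal (1 / S.NN k) := by
      apply Finset.sum_congr rfl
      intro i _
      rw [Real.volume_Ico]
      congr 1
      field_simp
      ring
  _ = (T.card : ENNReal) * ENNReal.ofReal (1 / S.NN k) := by
      rw [Finset.sum_const, nsmul_eq_mul]
  _ = ENNReal.ofReal ((T.card : ℝ) * (1 / S.NN k)) := by
      rw [ENNReal.ofReal_mul (by positivity)]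
      congr 1
      exact (ENNReal.ofReal_natCast _).symm
  _ ≤ _ := by
      apply ENNReal.ofReal_le_ofReal
      apply mul_le_mul_of_nonneg_right hcard (by positivity)

theorem frostman (S : Setup) (s : Set ℝ) (hdiam : EMetric.diam s ≤ ENNReal.ofReal (S.ll 1)) :
    S.mu s ≤ ENNReal.ofReal (S.h (EMetric.diam s).toReal) := by
  rcases s.eq_empty_or_nonempty with rfl | hne
  · simp
  have hl1 : 0 < S.ll 1 := S.ll_pos 1
  have hdne : EMetric.diam s ≠ ⊤ := ne_top_of_le_ne_top ENNReal.ofReal_ne_top hdiam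
  set d := (EMetric.diam s).toReal with hd
  have hd0 : 0 ≤ d := ENNReal.toReal_nonneg
  have hdle : d ≤ S.ll 1 := by
    rw [hd]
    exact ENNReal.toReal_le_of_le_ofReal (le_of_lt hl1) hdiam
  have hbdd : Bornology.IsBounded s := Metric.isBounded_iff_ediam_ne_top.2 hdne
  set u := sInf s with hu
  set v := sSup s with hv
  obtain ⟨x₀, hx₀⟩ := hne
  have huv : u ≤ v := le_trans (csInf_le hbdd.bddBelow hx₀) (le_csSup hbdd.bddAbove hx₀)
  have hssub : s ⊆ Set.Icc u v :=
    fun x hx => ⟨csInf_le hbdd.bddBelow hx, le_csSup hbdd.bddAbove hx⟩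
  have hdist : ∀ x ∈ s, ∀ y ∈ s, |x - y| ≤ d := by
    intro x hx y hy
    have h1 := Metric.dist_le_diam_of_mem hbdd hx hy
    rw [Real.dist_eq] at h1
    exact h1
  have hvu : v - u ≤ d := by
    have hv' : v ≤ d + u := by
      apply csSup_le ⟨x₀, hx₀⟩
      intro x hx
      have : x - d ≤ u := by
        apply le_csInf ⟨x₀, hx₀⟩
        intro y hy
        have := hdist x hx y hy
        have := abs_le.1 this
        linarith [this.1]
      linarith
    linarith
  rcases eq_or_lt_of_le hd0 with hdz | hdpos
  · -- diameter zero case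
    have hmu0 : S.mu s = 0 := by
      have hb : ∀ k : ℕ, S.mu s ≤ ENNReal.ofReal ((5/4) * ((1:ℝ)/2)^k) := by
        intro k
        have hlk := S.ll_pos k
        have hNpos : (0:ℝ) < S.NN k := by exact_mod_cast S.NN_pos k
        have h1 : S.mu s ≤ S.mu (Set.Icc u v) := measure_mono hssub
        have h2 := S.mu_Icc_le k u v huv
        have hveq : v = u := le_antisymm (by linarith) huv
        have h3 : ((v - u + S.ll k) / (4 * S.ll k) + 1) * (1 / S.NN k)
            ≤ (5/4) * ((1:ℝ)/2)^k := by
          rw [hveq]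
          have he : (u - u + S.ll k) / (4 * S.ll k) = 1/4 := by
            rw [sub_self, zero_add]
            field_simp
          rw [he]
          have hNk : ((2:ℝ))^k ≤ (S.NN k : ℝ) := by
            exact_mod_cast S.NN_two_pow k
          have hp : (0:ℝ) < (2:ℝ)^k := by positivity
          have : (1:ℝ) / S.NN k ≤ (1/2)^k := by
            rw [div_pow, one_pow, div_le_div_iff₀ hNpos hp]
            linarith
          nlinarith
        exact le_trans h1 (le_trans h2 (ENNReal.ofReal_le_ofReal h3))
      have htend : Tendsto (fun k : ℕ => ENNReal.ofReal ((5/4) * ((1:ℝ)/2)^k)) atTop (nhds 0) := by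
        have hr : Tendsto (fun k : ℕ => (5/4) * ((1:ℝ)/2)^k) atTop (nhds 0) := by
          have := tendsto_pow_atTop_nhds_zero_of_lt_one
            (by norm_num : (0:ℝ) ≤ 1/2) (by norm_num : (1:ℝ)/2 < 1)
          have h2 := this.const_mul (5/4 : ℝ)
          simpa using h2
        have := ENNReal.tendsto_ofReal hr
        simpa using this
      have : S.mu s ≤ 0 := ge_of_tendsto' htend hb
      exact le_antisymm this zero_le
    rw [hmu0]
    exact zero_le
  · -- positive diameter
    -- find the right scale
    have hlldecay : ∀ n : ℕ, S.ll (n+1) ≤ S.ll n / 2 := by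
      intro n
      have h1 := S.ll_succ_le n
      have h2 := S.ll_pos n
      linarith
    have hgeo : ∀ n : ℕ, S.ll n ≤ Real.log 2 * ((1:ℝ)/2)^n := by
      intro n
      induction n with
      | zero => simp [ll_zero]
      | succ n ih =>
        have := hlldecay n
        have hlog : (0:ℝ) < Real.log 2 := Real.log_pos one_lt_two
        calc S.ll (n+1) ≤ S.ll n / 2 := this
        _ ≤ (Real.log 2 * ((1:ℝ)/2)^n) / 2 := by linarith
        _ = Real.log 2 * ((1:ℝ)/2)^(n+1) := by ring
    have hex : ∃ n, S.ll (n+1) < d := by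
      have hlog : (0:ℝ) < Real.log 2 := Real.log_pos one_lt_two
      obtain ⟨n, hn⟩ := exists_pow_lt_of_lt_one (show (0:ℝ) < d / Real.log 2 by positivity)
        (by norm_num : (1:ℝ)/2 < 1)
      refine ⟨n, ?_⟩
      have h2 : ((1:ℝ)/2)^(n+1) ≤ ((1:ℝ)/2)^n := by
        apply pow_le_pow_of_le_one (by norm_num) (by norm_num)
        omega
      rw [lt_div_iff₀ hlog] at hn
      have h3 : Real.log 2 * ((1:ℝ)/2)^(n+1) < d := by nlinarith
      exact lt_of_le_of_lt (hgeo (n+1)) h3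
    have hk1' : S.ll (Nat.find hex + 1) < d := Nat.find_spec hex
    have hkpos : 1 ≤ Nat.find hex := by
      rcases Nat.eq_zero_or_pos (Nat.find hex) with h0 | h1
      · exfalso
        rw [h0] at hk1'
        exact absurd hk1' (not_lt.2 hdle)
      · exact h1
    obtain ⟨k', hkk⟩ : ∃ k', Nat.find hex = k' + 1 := ⟨Nat.find hex - 1, by omega⟩
    rw [hkk] at hk1'
    have hk2 : d ≤ S.ll (k'+1) := by
      have hmin := Nat.find_min hex (show k' < Nat.find hex by omega)
      exact not_lt.1 hmin
    -- Frostman design condition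
    have hF := (S.lvl_spec k').2.2.2.2.2.2 d ⟨hdpos, hk2⟩
    have hmass1 := (S.lvl_spec k').2.2.2.2.2.1
    have hmass2 := (S.lvl_spec (k'+1)).2.2.2.2.2.1
    have hNs1 : (S.NN (k'+1) : ℝ) = (S.NN k' : ℝ) * (S.MM k' : ℝ) := by
      exact_mod_cast (S.lvl_spec k').1
    have hNs2 : (S.NN (k'+2) : ℝ) = (S.NN (k'+1) : ℝ) * (S.MM (k'+1) : ℝ) := by
      exact_mod_cast (S.lvl_spec (k'+1)).1
    have hl' : 0 < S.ll (k'+2) := S.ll_pos (k'+2)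
    have hlk : 0 < S.ll (k'+1) := S.ll_pos (k'+1)
    have hlk0 : 0 < S.ll k' := S.ll_pos k'
    have hN' : (0:ℝ) < S.NN (k'+2) := by exact_mod_cast S.NN_pos (k'+2)
    have hNk : (0:ℝ) < S.NN (k'+1) := by exact_mod_cast S.NN_pos (k'+1)
    have hNk0 : (0:ℝ) < S.NN k' := by exact_mod_cast S.NN_pos k'
    have hhd : 0 < S.h d := S.hpos d hdpos
    -- chain: (3/2) d ≤ ll (k'+2) * NN (k'+2) * h d
    have hchain : (3/2) * d ≤ S.ll (k'+2) * (S.NN (k'+2) : ℝ) * S.h d := by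
      have e1 : S.ll k' * (S.NN k' : ℝ) / 8 ≤ S.ll (k'+1) * (S.NN (k'+1) : ℝ) := by
        rw [hNs1]; exact hmass1
      have e2 : S.ll (k'+1) * (S.NN (k'+1) : ℝ) / 8 ≤ S.ll (k'+2) * (S.NN (k'+2) : ℝ) := by
        rw [hNs2]; exact hmass2
      nlinarith
    -- bound from mu_Icc_le at level k'+2
    have hmu := S.mu_Icc_le (k'+2) u v huv
    have harith : ((v - u + S.ll (k'+2)) / (4 * S.ll (k'+2)) + 1) * (1 / (S.NN (k'+2) : ℝ))
        ≤ S.h d := by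
      have hrw : ((v - u + S.ll (k'+2)) / (4 * S.ll (k'+2)) + 1) * (1 / (S.NN (k'+2) : ℝ))
          = (v - u + 5 * S.ll (k'+2)) / (4 * S.ll (k'+2) * (S.NN (k'+2) : ℝ)) := by
        field_simp
        ring
      rw [hrw, div_le_iff₀ (by positivity)]
      nlinarith
    calc S.mu s ≤ S.mu (Set.Icc u v) := measure_mono hssub
    _ ≤ _ := hmu
    _ ≤ ENNReal.ofReal (S.h d) := ENNReal.ofReal_le_ofReal harith

theorem gauge_pos (S : Setup) :
    0 < Measure.mkMetric (fun r => ENNReal.ofReal (S.h r.toReal)) S.E := by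
  have hle : S.mu ≤ Measure.mkMetric (fun r => ENNReal.ofReal (S.h r.toReal)) := by
    apply Measure.le_mkMetric _ _ (ENNReal.ofReal (S.ll 1))
      (ENNReal.ofReal_pos.2 (S.ll_pos 1))
    intro s hs
    exact S.frostman s hs
  calc (0:ENNReal) < 1 := zero_lt_one
  _ ≤ S.mu S.E := S.mu_E_ge
  _ ≤ _ := (Measure.le_iff'.1 hle) S.E

end Setup
end Stmt10Aux


theorem stmt_10 (h : ℝ → ℝ) (hdim : IsDimFun h) (hprec : Prec h (fun x : ℝ => x))
    (A : Set ℝ) (hA : A.Countable) (hA0 : (0 : ℝ) ∉ A) :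
    ∃ E : Set ℝ, E ⊆ Set.Icc 0 (Real.log 2) ∧ IsCompact E ∧ 0 < gaugeMeasure h E ∧
      ∀ a ∈ A, ∀ x ∈ E, ∀ y ∈ E, y - x ≠ a := by
  obtain ⟨hdim0, hpos, hmono, hcont⟩ := hdim
  have hA' : (insert (1:ℝ) A).Countable := hA.insert 1
  have hne : (insert (1:ℝ) A).Nonempty := ⟨1, Set.mem_insert 1 A⟩
  obtain ⟨f, hf⟩ := hA'.exists_eq_range hne
  have hf0 : ∀ n, f n ≠ 0 := by
    intro n hc
    have hmem : f n ∈ insert (1:ℝ) A := hf ▸ Set.mem_range_self n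
    rw [hc] at hmem
    rcases Set.mem_insert_iff.1 hmem with h1 | h1
    · norm_num at h1
    · exact hA0 h1
  have hprec' : Filter.Tendsto (fun x => x / h x) (nhdsWithin 0 (Set.Ioi 0)) (nhds 0) := hprec
  let S : Stmt10Aux.Setup := ⟨h, f, hpos, hprec', hf0⟩
  refine ⟨S.E, S.E_subset, S.E_compact, S.gauge_pos, ?_⟩
  intro a ha x hx y hy
  have hmem : a ∈ Set.range f := hf ▸ Set.mem_insert_of_mem 1 ha
  obtain ⟨n, rfl⟩ := hmem
  exact S.E_avoid n x hx y hy
end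

section
/- Given a dimension function h with h ≺ x, there exists a compact set Ẽ ⊆ ℝ with ℋ^h(Ẽ) > 0 whose difference set Ẽ − Ẽ has empty interior. -/
open MeasureTheory Filter Set
open scoped ENNReal NNReal

namespace Stmt12Aux

variable (D : ℕ → ℝ)

/-- scales -/
noncomputable def ss : ℕ → ℝ
  | 0 => min (D 0) 1
  | (k+1) => min (ss k / 32) (D (k+1))

/-- branching numbers -/
noncomputable def MM (k : ℕ) : ℕ := ⌊ss D k / (16 * ss D (k+1))⌋₊

/-- number of level-k cylinders -/
noncomputable def NN : ℕ → ℕ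
  | 0 => 1
  | (k+1) => NN k * MM D k

variable {D}
variable (hD : ∀ k, 0 < D k)

include hD

lemma ss_pos (k : ℕ) : 0 < ss D k := by
  induction k with
  | zero => exact lt_min (hD 0) one_pos
  | succ k ih => exact lt_min (by positivity) (hD (k+1))

omit hD

lemma ss_step (k : ℕ) : ss D (k+1) ≤ ss D k / 32 := min_le_left _ _

lemma ss_le_D : ∀ k, ss D k ≤ D k
  | 0 => min_le_left _ _
  | (k+1) => min_le_right _ _

include hD

lemma ss_le_self (k : ℕ) : ss D (k+1) ≤ ss D k := by
  have h1 := ss_step (D := D) k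
  have h2 := ss_pos hD k
  nlinarith

lemma ss_decay (k j : ℕ) : ss D (k + j) ≤ ss D k / 32 ^ j := by
  induction j with
  | zero => simp
  | succ j ih =>
      have h1 := ss_step (D := D) (k + j)
      have hkj : k + (j+1) = (k+j)+1 := rfl
      rw [hkj, pow_succ]
      calc ss D ((k+j)+1) ≤ ss D (k+j) / 32 := h1
        _ ≤ (ss D k / 32 ^ j) / 32 := by gcongr
        _ = ss D k / (32 ^ j * 32) := by ring

lemma two_le_ratio (k : ℕ) : (2:ℝ) ≤ ss D k / (16 * ss D (k+1)) := by
  have h1 := ss_step (D := D) k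
  have h2 := ss_pos hD (k+1)
  rw [le_div_iff₀ (by positivity)]
  nlinarith

lemma MM_ge_two (k : ℕ) : 2 ≤ MM D k := by
  have := two_le_ratio hD k
  exact Nat.le_floor (by exact_mod_cast this)

lemma MM_pos (k : ℕ) : 0 < MM D k := lt_of_lt_of_le (by norm_num) (MM_ge_two hD k)

lemma MM_mul_le (k : ℕ) : (MM D k : ℝ) * ss D (k+1) ≤ ss D k / 16 := by
  have h2 := ss_pos hD (k+1)
  have h3 : (MM D k : ℝ) ≤ ss D k / (16 * ss D (k+1)) :=
    Nat.floor_le (le_trans (by norm_num) (two_le_ratio hD k))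
  calc (MM D k : ℝ) * ss D (k+1) ≤ (ss D k / (16 * ss D (k+1))) * ss D (k+1) := by gcongr
    _ = ss D k / 16 := by field_simp
lemma MM_mul_ge (k : ℕ) : ss D k / 32 ≤ (MM D k : ℝ) * ss D (k+1) := by
  have h2 := ss_pos hD (k+1)
  have hx := two_le_ratio hD k
  have h4 : ss D k / (16 * ss D (k+1)) - 1 < (MM D k : ℝ) := by
    have := Nat.lt_floor_add_one (ss D k / (16 * ss D (k+1)))
    unfold MM; linarith
  have h5 : ss D k / (16 * ss D (k+1)) / 2 ≤ (MM D k : ℝ) := by linarith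
  calc ss D k / 32 = (ss D k / (16 * ss D (k+1)) / 2) * ss D (k+1) := by field_simp; ring
    _ ≤ (MM D k : ℝ) * ss D (k+1) := by gcongr

omit hD
lemma NN_pos (hM : ∀ k, 0 < MM D k) (k : ℕ) : 0 < NN D k := by
  induction k with
  | zero => norm_num [NN]
  | succ k ih => exact Nat.mul_pos ih (hM k)

include hD
lemma NN_ge (k : ℕ) : 2 ^ k ≤ NN D k := by
  induction k with
  | zero => norm_num [NN]
  | succ k ih =>
      have := MM_ge_two hD k
      calc 2^(k+1) = 2^k * 2 := by ring
        _ ≤ NN D k * MM D k := Nat.mul_le_mul ih this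
        _ = NN D (k+1) := rfl

lemma NN_ss_lb (k : ℕ) : ss D 0 / 32 ^ k ≤ (NN D k : ℝ) * ss D k := by
  induction k with
  | zero => simp [NN]
  | succ k ih =>
      have h1 := MM_mul_ge hD k
      have hN : (0:ℝ) < NN D k := by exact_mod_cast NN_pos (fun j => MM_pos hD j) k
      calc ss D 0 / 32 ^ (k+1) = (ss D 0 / 32 ^ k) / 32 := by ring
        _ ≤ (NN D k : ℝ) * ss D k / 32 := by gcongr
        _ = (NN D k : ℝ) * (ss D k / 32) := by ring
        _ ≤ (NN D k : ℝ) * ((MM D k : ℝ) * ss D (k+1)) := by gcongr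
        _ = (NN D (k+1) : ℝ) * ss D (k+1) := by
            show _ = ((NN D k * MM D k : ℕ) : ℝ) * _
            push_cast; ring

lemma NN_ss_ub (k : ℕ) : (NN D k : ℝ) * ss D k ≤ ss D 0 / 16 ^ k := by
  induction k with
  | zero => simp [NN]
  | succ k ih =>
      have h1 := MM_mul_le hD k
      have hN : (0:ℝ) < NN D k := by exact_mod_cast NN_pos (fun j => MM_pos hD j) k
      calc (NN D (k+1) : ℝ) * ss D (k+1) = (NN D k : ℝ) * ((MM D k : ℝ) * ss D (k+1)) := by
            show ((NN D k * MM D k : ℕ) : ℝ) * _ = _; push_cast; ring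
        _ ≤ (NN D k : ℝ) * (ss D k / 16) := by gcongr
        _ = ((NN D k : ℝ) * ss D k) / 16 := by ring
        _ ≤ (ss D 0 / 16 ^ k) / 16 := by gcongr
        _ = ss D 0 / 16 ^ (k+1) := by ring


/-! ### Cylinder endpoints, digits, the map f -/

section Maps
variable (D)

/-- left endpoints of level-k cylinders, indexed in mixed radix -/
noncomputable def HH : ℕ → ℕ → ℝ
  | 0, _ => 0
  | (k+1), i => HH k (i / MM D k) + ss D (k+1) * (i % MM D k : ℕ)

/-- signed-difference endpoints -/
noncomputable def HH2 : ℕ → ℕ → ℝ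
  | 0, _ => 0
  | (k+1), j => HH2 k (j / (2 * MM D k - 1))
      + ss D (k+1) * (((j % (2 * MM D k - 1) : ℕ) : ℝ) - ((MM D k - 1 : ℕ) : ℝ))

/-- number of level-k difference cylinders -/
noncomputable def QQ : ℕ → ℕ
  | 0 => 1
  | (k+1) => QQ k * (2 * MM D k - 1)

/-- the j-th digit of x -/
noncomputable def dg (j : ℕ) (x : ℝ) : ℕ := ⌊x * NN D (j+1)⌋₊ % MM D j

/-- the Cantor map -/
noncomputable def ff (x : ℝ) : ℝ := ∑' j, ss D (j+1) * (dg D j x : ℝ)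

end Maps

lemma term_nonneg (j : ℕ) (x : ℝ) : 0 ≤ ss D (j+1) * (dg D j x : ℝ) := by
  have := ss_pos hD (j+1); positivity

lemma term_le (j : ℕ) (x : ℝ) : ss D (j+1) * (dg D j x : ℝ) ≤ ss D j / 16 := by
  have h1 : (dg D j x : ℝ) ≤ (MM D j : ℝ) := by
    exact_mod_cast (Nat.mod_lt _ (MM_pos hD j)).le
  have h2 := ss_pos hD (j+1)
  calc ss D (j+1) * (dg D j x : ℝ) ≤ ss D (j+1) * (MM D j : ℝ) := by gcongr
    _ = (MM D j : ℝ) * ss D (j+1) := by ring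
    _ ≤ ss D j / 16 := MM_mul_le hD j

lemma summable_bound : Summable (fun j => ss D j / 16) := by
  apply Summable.of_nonneg_of_le (fun j => by have := ss_pos hD j; positivity)
    (fun j => ?_) (Summable.mul_left (ss D 0 / 16) (summable_geometric_of_lt_one
      (by norm_num) (by norm_num : (1:ℝ)/32 < 1)))
  have := ss_decay hD 0 j
  simp only [zero_add] at this
  calc ss D j / 16 ≤ (ss D 0 / 32 ^ j) / 16 := by gcongr
    _ = ss D 0 / 16 * (1/32)^j := by rw [div_pow, one_pow]; ring

lemma summable_f (x : ℝ) : Summable (fun j => ss D (j+1) * (dg D j x : ℝ)) :=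
  Summable.of_nonneg_of_le (fun j => term_nonneg hD j x) (fun j => term_le hD j x) (summable_bound hD)

/-- tail bound: ∑_{j ≥ k} terms ≤ s k / 8 -/
lemma tail_bound (k : ℕ) (x : ℝ) :
    ∑' j, ss D ((j + k) + 1) * (dg D (j + k) x : ℝ) ≤ ss D k / 8 := by
  have hsum : Summable (fun j => ss D ((j + k) + 1) * (dg D (j + k) x : ℝ)) :=
    ((summable_f hD x).comp_injective (add_left_injective k))
  have hsum2 : Summable (fun j : ℕ => ss D k / 16 * (1/32)^j) :=
    Summable.mul_left _ (summable_geometric_of_lt_one (by norm_num) (by norm_num))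
  have h1 : ∑' j, ss D ((j + k) + 1) * (dg D (j + k) x : ℝ)
      ≤ ∑' j : ℕ, ss D k / 16 * (1/32)^j := by
    apply Summable.tsum_le_tsum _ hsum hsum2
    intro j
    calc ss D ((j + k) + 1) * (dg D (j + k) x : ℝ) ≤ ss D (j + k) / 16 := term_le hD _ x
      _ ≤ (ss D k / 32 ^ j) / 16 := by
          have h := ss_decay hD k j
          rw [add_comm k j] at h
          gcongr
      _ = ss D k / 16 * (1/32)^j := by rw [div_pow, one_pow]; ring
  have h2 : ∑' j : ℕ, ss D k / 16 * (1/32)^j = ss D k / 16 * (1 - 1/32)⁻¹ := by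
    rw [tsum_mul_left, tsum_geometric_of_lt_one (by norm_num) (by norm_num)]
  have h3 := ss_pos hD k
  rw [h2] at h1
  calc ∑' j, ss D ((j + k) + 1) * (dg D (j + k) x : ℝ) ≤ ss D k / 16 * (1 - 1/32)⁻¹ := h1
    _ ≤ ss D k / 8 := by rw [show (1:ℝ) - 1/32 = 31/32 by norm_num]; nlinarith

/-- head identity: partial sum of digits equals HH at the floor -/
lemma head_eq (k : ℕ) (x : ℝ) (hx : 0 ≤ x) :
    ∑ j ∈ Finset.range k, ss D (j+1) * (dg D j x : ℝ) = HH D k ⌊x * NN D k⌋₊ := by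
  induction k with
  | zero => rw [Finset.sum_range_zero, HH]
  | succ k ih =>
      have hdiv : ⌊x * NN D (k+1)⌋₊ / MM D k = ⌊x * NN D k⌋₊ := by
        have : x * NN D (k+1) = x * NN D k * MM D k := by
          show x * ((NN D k * MM D k : ℕ) : ℝ) = _
          push_cast; ring
        have hM : (MM D k : ℝ) ≠ 0 := by
          have := MM_pos hD k; positivity
        rw [this, ← Nat.floor_div_natCast (x * NN D k * MM D k) (MM D k)]
        congr 1
        field_simp
      rw [Finset.sum_range_succ, ih]
      show _ = HH D (k+1) ⌊x * NN D (k+1)⌋₊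
      rw [HH, hdiv]
      rfl

/-- Claim A : f x lies in the cylinder given by its first k digits -/
lemma claimA (k : ℕ) (x : ℝ) (hx : 0 ≤ x) :
    HH D k ⌊x * NN D k⌋₊ ≤ ff D x ∧ ff D x ≤ HH D k ⌊x * NN D k⌋₊ + ss D k / 8 := by
  have hsum := summable_f hD x
  have hsplit := Summable.sum_add_tsum_nat_add (f := fun j => ss D (j+1) * (dg D j x : ℝ)) k hsum
  have htail0 : 0 ≤ ∑' j, ss D ((j + k) + 1) * (dg D (j + k) x : ℝ) :=
    tsum_nonneg (fun j => term_nonneg hD _ x)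
  have htail := tail_bound hD k x
  have hff : ff D x = HH D k ⌊x * NN D k⌋₊ + ∑' j, ss D ((j + k) + 1) * (dg D (j + k) x : ℝ) := by
    rw [ff, ← hsplit, head_eq hD k x hx]
  constructor
  · rw [hff]; linarith
  · rw [hff]; linarith


/-! ### Claim B: gaps between cylinder endpoints -/

lemma gapB (k : ℕ) : ∀ i, i + 1 < NN D k → HH D k i + 7/8 * ss D k ≤ HH D k (i+1) := by
  induction k with
  | zero => intro i hi; simp [NN] at hi
  | succ k ih =>
      intro i hi
      have hM0 : 0 < MM D k := MM_pos hD k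
      set M := MM D k with hMdef
      have hdm := Nat.div_add_mod i M
      have hs1 := ss_pos hD (k+1)
      have hsk := ss_pos hD k
      have hstep := ss_step (D := D) k
      by_cases hc : i % M + 1 < M
      · have hdiv : (i+1)/M = i/M := by
          conv_lhs => rw [← hdm]
          rw [Nat.add_assoc, Nat.mul_add_div hM0, Nat.div_eq_of_lt hc, Nat.add_zero]
        have hmod : (i+1)%M = i%M + 1 := by
          conv_lhs => rw [← hdm]
          rw [Nat.add_assoc, Nat.mul_add_mod, Nat.mod_eq_of_lt hc]
        show HH D k ((i+1) / M) + ss D (k+1) * (((i+1) % M : ℕ) : ℝ) ≥ _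
        rw [hdiv, hmod]
        show HH D k (i / M) + ss D (k+1) * (((i % M + 1 : ℕ) : ℕ) : ℝ) ≥
          HH D k (i / M) + ss D (k+1) * ((i % M : ℕ) : ℝ) + 7/8 * ss D (k+1)
        push_cast
        nlinarith
      · have hd : i % M + 1 = M := by
          have := Nat.mod_lt i hM0; omega
        have heq : M * (i / M) + M = M * (i / M + 1) := by ring
        have hdiv : (i+1)/M = i/M + 1 := by
          conv_lhs => rw [← hdm, Nat.add_assoc, hd, heq]
          rw [Nat.mul_div_cancel_left _ hM0]
        have hmod : (i+1)%M = 0 := by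
          conv_lhs => rw [← hdm, Nat.add_assoc, hd, heq]
          exact Nat.mul_mod_right M _
        have hip : i + 1 = M * (i / M + 1) := by omega
        have hlt : i / M + 1 < NN D k := by
          have h2 : i + 1 < NN D k * M := by simpa [NN] using hi
          rw [hip] at h2
          have := Nat.lt_of_mul_lt_mul_left (a := M) (by rw [mul_comm (NN D k) M] at h2; exact h2)
          exact this
        have ihh := ih (i/M) hlt
        show HH D k ((i+1) / M) + ss D (k+1) * (((i+1) % M : ℕ) : ℝ) ≥ _
        rw [hdiv, hmod]
        show HH D k (i / M + 1) + ss D (k+1) * ((0:ℕ) : ℝ) ≥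
          HH D k (i / M) + ss D (k+1) * ((i % M : ℕ) : ℝ) + 7/8 * ss D (k+1)
        have hub : ss D (k+1) * ((i % M : ℕ) : ℝ) ≤ ss D k / 16 := by
          have h1 : ((i % M : ℕ) : ℝ) ≤ (M : ℝ) := by
            exact_mod_cast (Nat.mod_lt i hM0).le
          calc ss D (k+1) * ((i % M : ℕ) : ℝ) ≤ ss D (k+1) * (M:ℝ) := by gcongr
            _ = (M:ℝ) * ss D (k+1) := by ring
            _ ≤ ss D k / 16 := MM_mul_le hD k
        push_cast
        nlinarith

lemma chainB (k i : ℕ) : ∀ n, i + n < NN D k →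
    HH D k i + 7/8 * ss D k * n ≤ HH D k (i + n) := by
  intro n
  induction n with
  | zero => intro _; simp
  | succ n ih =>
      intro hn
      have h1 : i + n + 1 < NN D k := by omega
      have h2 := ih (by omega)
      have h3 := gapB hD k (i + n) h1
      have : HH D k (i + (n+1)) = HH D k ((i + n) + 1) := by ring_nf
      rw [this]
      push_cast
      nlinarith [ss_pos hD k]

/-! ### Counting -/

lemma count_le (k : ℕ) (A B : ℝ) (hAB : A ≤ B) :
    (((Finset.range (NN D k)).filter (fun i => HH D k i ∈ Icc A B)).card : ℝ)
      ≤ (B - A) / (7/8 * ss D k) + 1 := by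
  set S := (Finset.range (NN D k)).filter (fun i => HH D k i ∈ Icc A B) with hS
  have hγ : 0 < 7/8 * ss D k := by have := ss_pos hD k; positivity
  rcases S.eq_empty_or_nonempty with hE | hNE
  · rw [hE]
    simp only [Finset.card_empty, Nat.cast_zero]
    have : 0 ≤ (B - A) / (7/8 * ss D k) := div_nonneg (by linarith) hγ.le
    linarith
  · set i0 := S.min' hNE with hi0
    set i1 := S.max' hNE with hi1
    have hm0 : i0 ∈ S := S.min'_mem hNE
    have hm1 : i1 ∈ S := S.max'_mem hNE
    rw [hS, Finset.mem_filter, Finset.mem_range, mem_Icc] at hm0 hm1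
    have h01 : i0 ≤ i1 := S.min'_le _ (S.max'_mem hNE)
    have hsub : S ⊆ Finset.Icc i0 i1 :=
      fun i hi => Finset.mem_Icc.2 ⟨S.min'_le i hi, S.le_max' i hi⟩
    have hcard : S.card ≤ i1 + 1 - i0 := by
      calc S.card ≤ (Finset.Icc i0 i1).card := Finset.card_le_card hsub
        _ = i1 + 1 - i0 := Nat.card_Icc i0 i1
    have hchain := chainB hD k i0 (i1 - i0) (by omega)
    rw [show i0 + (i1 - i0) = i1 by omega] at hchain
    have hHB : HH D k i1 - HH D k i0 ≤ B - A := by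
      have := hm0.2.1; have := hm1.2.2; linarith
    have hgap : 7/8 * ss D k * ((i1 - i0 : ℕ) : ℝ) ≤ B - A := by linarith
    have hd : ((i1 - i0 : ℕ) : ℝ) ≤ (B - A) / (7/8 * ss D k) := by
      rw [le_div_iff₀ hγ]; linarith
    calc (S.card : ℝ) ≤ ((i1 + 1 - i0 : ℕ) : ℝ) := by exact_mod_cast hcard
      _ = ((i1 - i0 : ℕ) : ℝ) + 1 := by
          have : i1 + 1 - i0 = (i1 - i0) + 1 := by omega
          rw [this]; push_cast; ring
      _ ≤ (B - A) / (7/8 * ss D k) + 1 := by linarith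


/-! ### Differences of cylinder endpoints -/

omit hD in
lemma QQ_le (k : ℕ) : QQ D k ≤ 2 ^ k * NN D k := by
  induction k with
  | zero => simp [QQ, NN]
  | succ k ih =>
      show QQ D k * (2 * MM D k - 1) ≤ 2^(k+1) * (NN D k * MM D k)
      calc QQ D k * (2 * MM D k - 1) ≤ (2^k * NN D k) * (2 * MM D k) :=
            Nat.mul_le_mul ih (by omega)
        _ = 2^(k+1) * (NN D k * MM D k) := by ring

lemma H2_diff (k : ℕ) : ∀ i i', i < NN D k → i' < NN D k →
    ∃ j < QQ D k, HH2 D k j = HH D k i - HH D k i' := by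
  induction k with
  | zero =>
      intro i i' hi hi'
      exact ⟨0, by norm_num [QQ], by show HH2 D 0 0 = HH D 0 i - HH D 0 i'; simp [HH2, HH]⟩
  | succ k ih =>
      intro i i' hi hi'
      have hM0 : 0 < MM D k := MM_pos hD k
      have hM2 : 2 ≤ MM D k := MM_ge_two hD k
      set M := MM D k with hMdef
      set b := 2 * M - 1 with hbdef
      have hb : 0 < b := by omega
      have hdi : i / M < NN D k := by
        rw [Nat.div_lt_iff_lt_mul hM0]
        simpa [NN] using hi
      have hdi' : i' / M < NN D k := by
        rw [Nat.div_lt_iff_lt_mul hM0]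
        simpa [NN] using hi'
      obtain ⟨j', hj', hHj'⟩ := ih (i / M) (i' / M) hdi hdi'
      have hd : i % M < M := Nat.mod_lt i hM0
      have hd' : i' % M < M := Nat.mod_lt i' hM0
      set enc := i % M + (M - 1) - i' % M with hencdef
      have henc : enc < b := by omega
      refine ⟨j' * b + enc, ?_, ?_⟩
      · calc j' * b + enc < j' * b + b := by omega
          _ = (j' + 1) * b := by ring
          _ ≤ QQ D k * b := Nat.mul_le_mul_right b (by omega)
          _ = QQ D (k+1) := rfl
      · have hdiv : (j' * b + enc) / b = j' := by
          rw [mul_comm j' b, Nat.mul_add_div hb, Nat.div_eq_of_lt henc, Nat.add_zero]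
        have hmod : (j' * b + enc) % b = enc := by
          rw [mul_comm j' b, Nat.mul_add_mod, Nat.mod_eq_of_lt henc]
        show HH2 D k ((j' * b + enc) / b) + ss D (k+1) * ((((j' * b + enc) % b : ℕ) : ℝ) - ((M - 1 : ℕ) : ℝ))
            = (HH D k (i / M) + ss D (k+1) * ((i % M : ℕ) : ℝ))
              - (HH D k (i' / M) + ss D (k+1) * ((i' % M : ℕ) : ℝ))
        rw [hdiv, hmod, hHj']
        have hcast : ((enc : ℕ) : ℝ) = ((i % M : ℕ) : ℝ) + ((M - 1 : ℕ) : ℝ) - ((i' % M : ℕ) : ℝ) := by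
          have h1 : i' % M ≤ i % M + (M - 1) := by omega
          rw [hencdef, Nat.cast_sub h1, Nat.cast_add]
        rw [hcast]
        ring

/-! ### Covering of the image and of the difference set -/

lemma image_subset_cyl (k : ℕ) :
    ff D '' (Ico (0:ℝ) 1) ⊆ ⋃ i ∈ Finset.range (NN D k), Icc (HH D k i) (HH D k i + ss D k / 8) := by
  rintro z ⟨x, hx, rfl⟩
  have hx0 : (0:ℝ) ≤ x := hx.1
  have hN : (0:ℕ) < NN D k := NN_pos (fun j => MM_pos hD j) k
  have hfloor : ⌊x * NN D k⌋₊ < NN D k := by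
    rw [Nat.floor_lt (by positivity)]
    calc x * NN D k < 1 * NN D k := by
          have : (0:ℝ) < (NN D k : ℝ) := by exact_mod_cast hN
          exact mul_lt_mul_of_pos_right hx.2 this
      _ = NN D k := by ring
  obtain ⟨h1, h2⟩ := claimA hD k x hx0
  exact mem_iUnion₂.2 ⟨⌊x * NN D k⌋₊, Finset.mem_range.2 hfloor, h1, h2⟩

lemma closure_subset_cyl (k : ℕ) :
    closure (ff D '' (Ico (0:ℝ) 1)) ⊆
      ⋃ i ∈ Finset.range (NN D k), Icc (HH D k i) (HH D k i + ss D k / 8) := by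
  apply closure_minimal (image_subset_cyl hD k)
  exact isClosed_biUnion_finset (fun i _ => isClosed_Icc)

lemma diff_subset_cyl (k : ℕ) :
    {z : ℝ | ∃ x ∈ closure (ff D '' (Ico (0:ℝ) 1)), ∃ y ∈ closure (ff D '' (Ico (0:ℝ) 1)),
        z = y - x} ⊆
      ⋃ j ∈ Finset.range (QQ D k), Icc (HH2 D k j - ss D k / 8) (HH2 D k j + ss D k / 8) := by
  rintro z ⟨x, hx, y, hy, rfl⟩
  obtain hcx := closure_subset_cyl hD k hx
  obtain hcy := closure_subset_cyl hD k hy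
  rw [mem_iUnion₂] at hcx hcy
  obtain ⟨i', hi', hxi⟩ := hcx
  obtain ⟨i, hi, hyi⟩ := hcy
  rw [Finset.mem_range] at hi hi'
  obtain ⟨j, hj, hHj⟩ := H2_diff hD k i i' hi hi'
  rw [mem_iUnion₂]
  refine ⟨j, Finset.mem_range.2 hj, ?_⟩
  rw [mem_Icc] at hxi hyi ⊢
  rw [hHj]
  constructor <;> [skip; skip] <;>
    · obtain ⟨a1, a2⟩ := hxi; obtain ⟨b1, b2⟩ := hyi; linarith


/-! ### Measurability of ff -/

lemma measurable_ff : Measurable (ff D) := by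
  have hterm : ∀ j : ℕ, Measurable (fun x : ℝ => ss D (j+1) * (dg D j x : ℝ)) := by
    intro j
    apply Measurable.const_mul
    have h1 : Measurable (fun x : ℝ => ⌊x * (NN D (j+1) : ℝ)⌋₊) :=
      (measurable_id.mul_const _).nat_floor
    exact (measurable_from_top (f := fun n : ℕ => ((n % MM D j : ℕ) : ℝ))).comp h1
  apply measurable_of_tendsto_metrizable
    (f := fun n x => ∑ j ∈ Finset.range n, ss D (j+1) * (dg D j x : ℝ))
    (fun n => Finset.measurable_sum _ (fun j _ => hterm j))
  rw [tendsto_pi_nhds]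
  intro x
  exact (summable_f hD x).hasSum.tendsto_sum_nat


/-! ### Volume estimates -/

lemma preimage_cover (k : ℕ) (A B : ℝ) :
    ff D ⁻¹' (Icc A B) ∩ Ico 0 1 ⊆
      ⋃ i ∈ (Finset.range (NN D k)).filter
          (fun i => HH D k i ∈ Icc (A - ss D k / 8) B),
        Ico ((i : ℝ) / NN D k) (((i : ℝ) + 1) / NN D k) := by
  rintro x ⟨hfx, hx⟩
  have hx0 : (0:ℝ) ≤ x := hx.1
  have hN : (0:ℕ) < NN D k := NN_pos (fun j => MM_pos hD j) k
  have hNR : (0:ℝ) < (NN D k : ℝ) := by exact_mod_cast hN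
  set i := ⌊x * NN D k⌋₊ with hidef
  have hfloor : i < NN D k := by
    rw [hidef, Nat.floor_lt (by positivity)]
    calc x * NN D k < 1 * NN D k := mul_lt_mul_of_pos_right hx.2 hNR
      _ = NN D k := by ring
  obtain ⟨h1, h2⟩ := claimA hD k x hx0
  rw [mem_preimage, mem_Icc] at hfx
  have hmem : HH D k i ∈ Icc (A - ss D k / 8) B := by
    rw [mem_Icc]
    constructor
    · linarith
    · linarith
  apply mem_iUnion₂.2
  refine ⟨i, Finset.mem_filter.2 ⟨Finset.mem_range.2 hfloor, hmem⟩, ?_⟩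
  rw [mem_Ico]
  constructor
  · rw [div_le_iff₀ hNR]
    exact Nat.floor_le (by positivity)
  · rw [lt_div_iff₀ hNR]
    exact Nat.lt_floor_add_one _

lemma vol_est (k : ℕ) (A B : ℝ) (hAB : A ≤ B) :
    volume (ff D ⁻¹' (Icc A B) ∩ Ico 0 1) ≤
      ENNReal.ofReal (((B - A + ss D k / 8) / (7/8 * ss D k) + 1) * (1 / NN D k)) := by
  have hN : (0:ℕ) < NN D k := NN_pos (fun j => MM_pos hD j) k
  have hNR : (0:ℝ) < (NN D k : ℝ) := by exact_mod_cast hN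
  have hsk := ss_pos hD k
  set S := (Finset.range (NN D k)).filter
      (fun i => HH D k i ∈ Icc (A - ss D k / 8) B) with hSdef
  have hcard : (S.card : ℝ) ≤ (B - A + ss D k / 8) / (7/8 * ss D k) + 1 := by
    have := count_le hD k (A - ss D k / 8) B (by linarith)
    calc (S.card : ℝ) ≤ (B - (A - ss D k / 8)) / (7/8 * ss D k) + 1 := this
      _ = (B - A + ss D k / 8) / (7/8 * ss D k) + 1 := by ring_nf
  calc volume (ff D ⁻¹' (Icc A B) ∩ Ico 0 1)
      ≤ volume (⋃ i ∈ S, Ico ((i : ℝ) / NN D k) (((i : ℝ) + 1) / NN D k)) :=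
        measure_mono (preimage_cover hD k A B)
    _ ≤ ∑ i ∈ S, volume (Ico ((i : ℝ) / NN D k) (((i : ℝ) + 1) / NN D k)) :=
        measure_biUnion_finset_le S _
    _ = ∑ _i ∈ S, ENNReal.ofReal (1 / NN D k) := by
        apply Finset.sum_congr rfl
        intro i _
        rw [Real.volume_Ico]
        congr 1
        field_simp
        ring
    _ = (S.card : ℝ≥0∞) * ENNReal.ofReal (1 / NN D k) := by
        rw [Finset.sum_const, nsmul_eq_mul]
    _ = ENNReal.ofReal (S.card) * ENNReal.ofReal (1 / NN D k) := by
        rw [ENNReal.ofReal_natCast]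
    _ ≤ ENNReal.ofReal ((B - A + ss D k / 8) / (7/8 * ss D k) + 1)
          * ENNReal.ofReal (1 / NN D k) := by
        exact mul_le_mul_left (ENNReal.ofReal_le_ofReal hcard) _
    _ = ENNReal.ofReal (((B - A + ss D k / 8) / (7/8 * ss D k) + 1) * (1 / NN D k)) := by
        rw [← ENNReal.ofReal_mul]
        have hnum : (0:ℝ) ≤ B - A + ss D k / 8 := by linarith
        have hdiv : (0:ℝ) ≤ (B - A + ss D k / 8) / (7/8 * ss D k) :=
          div_nonneg hnum (by positivity)
        linarith

lemma null_bound (A : ℝ) : volume (ff D ⁻¹' (Icc A A) ∩ Ico 0 1) = 0 := by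
  have hbound : ∀ k : ℕ, volume (ff D ⁻¹' (Icc A A) ∩ Ico 0 1) ≤
      ENNReal.ofReal (8/7 * (1/2 : ℝ)^k) := by
    intro k
    have hsk := ss_pos hD k
    have hN : (2:ℝ)^k ≤ (NN D k : ℝ) := by exact_mod_cast NN_ge hD k
    have h2k : (0:ℝ) < 2^k := by positivity
    have hNR : (0:ℝ) < (NN D k : ℝ) := lt_of_lt_of_le h2k hN
    refine le_trans (vol_est hD k A A le_rfl) (ENNReal.ofReal_le_ofReal ?_)
    have h1 : (A - A + ss D k / 8) / (7/8 * ss D k) + 1 = 8/7 := by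
      field_simp
      ring
    rw [h1]
    have : (1:ℝ) / NN D k ≤ 1 / 2^k := by
      apply div_le_div_of_nonneg_left one_pos.le h2k hN
    calc (8:ℝ)/7 * (1 / NN D k) ≤ 8/7 * (1/2^k) :=
          mul_le_mul_of_nonneg_left this (by norm_num)
      _ = 8/7 * (1/2:ℝ)^k := by rw [div_pow, one_pow]
  have htend : Tendsto (fun k : ℕ => ENNReal.ofReal (8/7 * (1/2 : ℝ)^k)) atTop (nhds 0) := by
    rw [show (0 : ℝ≥0∞) = ENNReal.ofReal 0 by simp]
    apply ENNReal.tendsto_ofReal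
    have := tendsto_pow_atTop_nhds_zero_of_lt_one (by norm_num : (0:ℝ) ≤ 1/2) (by norm_num)
    simpa using this.const_mul (8/7 : ℝ)
  have := ge_of_tendsto' htend hbound
  exact le_antisymm this zero_le

lemma main_bound (k : ℕ) (A d : ℝ) (hd0 : 0 < d) (hk1 : ss D (k+1) ≤ d) :
    volume (ff D ⁻¹' (Icc A (A + d)) ∩ Ico 0 1) ≤
      ENNReal.ofReal (96 * 32^k * d / ss D 0) := by
  have hs := ss_pos hD (k+1)
  have hs0 := ss_pos hD 0
  have hN : (0:ℕ) < NN D (k+1) := NN_pos (fun j => MM_pos hD j) (k+1)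
  have hNR : (0:ℝ) < (NN D (k+1) : ℝ) := by exact_mod_cast hN
  have hlow := NN_ss_lb hD (k+1)
  refine le_trans (vol_est hD (k+1) A (A + d) (by linarith)) (ENNReal.ofReal_le_ofReal ?_)
  set s := ss D (k+1)
  set NR := (NN D (k+1) : ℝ)
  have h321 : (0:ℝ) < 32^(k+1) := by positivity
  have hlow' : ss D 0 / 32^(k+1) ≤ NR * s := hlow
  have hbound1 : (A + d - A + s / 8) / (7/8 * s) + 1 ≤ 3 * d / s := by
    rw [div_add' _ _ _ (by positivity), div_le_div_iff₀ (by positivity) hs]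
    nlinarith
  have hstep1 : ((A + d - A + s / 8) / (7/8 * s) + 1) * (1 / NR) ≤ (3 * d / s) * (1 / NR) := by
    apply mul_le_mul_of_nonneg_right hbound1 (by positivity)
  refine le_trans hstep1 ?_
  have key : (3 * d / s) * (1 / NR) = 3 * d / (s * NR) := by
    field_simp
  rw [key]
  have h1 : (0:ℝ) < s * NR := by positivity
  have h2 : ss D 0 / 32^(k+1) ≤ s * NR := by rw [mul_comm] at hlow'; exact hlow'
  have h3 : 3 * d / (s * NR) ≤ 3 * d / (ss D 0 / 32^(k+1)) := by
    apply div_le_div_of_nonneg_left (by linarith) (by positivity) h2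
  refine le_trans h3 (le_of_eq ?_)
  rw [div_div_eq_mul_div]
  field_simp
  ring

end Stmt12Aux


theorem stmt_12 (h : ℝ → ℝ) (hdim : IsDimFun h) (hprec : Prec h (fun x : ℝ => x)) :
    ∃ E : Set ℝ, IsCompact E ∧ 0 < gaugeMeasure h E ∧
      interior {z : ℝ | ∃ x ∈ E, ∃ y ∈ E, z = y - x} = ∅ := by
  classical
  obtain ⟨h0, hpos, hmono, _⟩ := hdim
  have hp : Tendsto (fun x : ℝ => x / h x) (nhdsWithin 0 (Set.Ioi 0)) (nhds 0) := hprec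
  -- extract the scale control function D
  have hexD : ∀ k : ℕ, ∃ δ : ℝ, 0 < δ ∧ ∀ x : ℝ, 0 < x → x ≤ δ → 32 ^ k * x ≤ h x := by
    intro k
    have hc : (0:ℝ) < ((32:ℝ) ^ k)⁻¹ := by positivity
    have hev : {x : ℝ | x / h x < ((32:ℝ) ^ k)⁻¹} ∈ nhdsWithin (0:ℝ) (Set.Ioi 0) :=
      hp (Iio_mem_nhds hc)
    obtain ⟨u, hu, hsub⟩ := mem_nhdsGT_iff_exists_Ioc_subset.mp hev
    refine ⟨u, hu, fun x hx hxu => ?_⟩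
    have hmem : x / h x < ((32:ℝ) ^ k)⁻¹ := hsub ⟨hx, hxu⟩
    have hhx : 0 < h x := hpos x hx
    rw [div_lt_iff₀ hhx] at hmem
    have h32 : (0:ℝ) < (32:ℝ) ^ k := by positivity
    have hcalc : (32:ℝ) ^ k * x < 32 ^ k * (((32:ℝ) ^ k)⁻¹ * h x) :=
      mul_lt_mul_of_pos_left hmem h32
    have heq : (32:ℝ) ^ k * (((32:ℝ) ^ k)⁻¹ * h x) = h x := by field_simp
    linarith
  choose D hDpos hDh using hexD
  have hs0 := Stmt12Aux.ss_pos hDpos 0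
  have hs1 := Stmt12Aux.ss_pos hDpos 1
  set E := closure (Stmt12Aux.ff D '' (Ico (0:ℝ) 1)) with hEdef
  -- image is bounded in [0, ss D 0 / 8]
  have himg : Stmt12Aux.ff D '' (Ico (0:ℝ) 1) ⊆ Icc 0 (Stmt12Aux.ss D 0 / 8) := by
    rintro z ⟨x, hx, rfl⟩
    obtain ⟨ha, hb⟩ := Stmt12Aux.claimA hDpos 0 x hx.1
    have hH0 : Stmt12Aux.HH D 0 ⌊x * (Stmt12Aux.NN D 0 : ℝ)⌋₊ = 0 := rfl
    rw [hH0] at ha hb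
    exact ⟨by linarith, by linarith⟩
  have hEsub : E ⊆ Icc 0 (Stmt12Aux.ss D 0 / 8) := closure_minimal himg isClosed_Icc
  have hEcompact : IsCompact E := isCompact_Icc.of_isClosed_subset isClosed_closure hEsub
  refine ⟨E, hEcompact, ?_, ?_⟩
  · -- positive gauge measure
    set W := Ico (0:ℝ) 1 with hW
    set ν := volume.restrict W with hν
    set μ := Measure.map (Stmt12Aux.ff D) ν with hμ
    set c : ℝ≥0∞ := ENNReal.ofReal (Stmt12Aux.ss D 0 / 96) with hc
    have hmf : Measurable (Stmt12Aux.ff D) := Stmt12Aux.measurable_ff hDpos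
    have hμIcc : ∀ a b : ℝ, μ (Icc a b) =
        volume (Stmt12Aux.ff D ⁻¹' (Icc a b) ∩ W) := by
      intro a b
      rw [hμ, Measure.map_apply hmf measurableSet_Icc, hν,
        Measure.restrict_apply (hmf measurableSet_Icc)]
    have hle : c • μ ≤ gaugeMeasure h := by
      apply Measure.le_mkMetric _ _ (ENNReal.ofReal (Stmt12Aux.ss D 1))
        (ENNReal.ofReal_pos.2 hs1)
      intro t ht
      rcases t.eq_empty_or_nonempty with rfl | htne
      · simp
      have hbne : EMetric.diam t ≠ ⊤ := ne_top_of_le_ne_top ENNReal.ofReal_ne_top ht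
      have hbdd : Bornology.IsBounded t := Metric.isBounded_iff_ediam_ne_top.2 hbne
      set d := (EMetric.diam t).toReal with hd
      have hd0 : 0 ≤ d := ENNReal.toReal_nonneg
      have hds1 : d ≤ Stmt12Aux.ss D 1 := by
        have := ENNReal.toReal_mono ENNReal.ofReal_ne_top ht
        rwa [ENNReal.toReal_ofReal hs1.le] at this
      set a := sInf t with ha
      have htsub : t ⊆ Icc a (a + d) := by
        intro y hy
        have h1 : a ≤ y := csInf_le hbdd.bddBelow hy
        have h2 : y ≤ a + d := by
          have hub : y - d ≤ a := by
            apply le_csInf htne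
            intro x hx
            have hdist : dist y x ≤ d := Metric.dist_le_diam_of_mem hbdd hy hx
            have : y - x ≤ dist y x := by
              rw [Real.dist_eq]
              exact le_abs_self _
            linarith
          linarith
        exact ⟨h1, h2⟩
      have happly : (c • μ) t ≤ c * volume (Stmt12Aux.ff D ⁻¹' (Icc a (a + d)) ∩ W) := by
        rw [Measure.smul_apply, smul_eq_mul]
        apply mul_le_mul_right
        calc μ t ≤ μ (Icc a (a + d)) := measure_mono htsub
          _ = volume (Stmt12Aux.ff D ⁻¹' (Icc a (a + d)) ∩ W) := hμIcc a (a + d)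
      show (c • μ) t ≤ ENNReal.ofReal (h (EMetric.diam t).toReal)
      rcases eq_or_lt_of_le hd0 with hdz | hdz
      · -- diameter zero
        have hIcc : Icc a (a + d) = Icc a a := by rw [← hdz]; norm_num
        rw [hIcc] at happly
        rw [Stmt12Aux.null_bound hDpos a, mul_zero] at happly
        exact le_trans happly zero_le
      · -- positive diameter
        have hex : ∃ n : ℕ, Stmt12Aux.ss D (n + 1) ≤ d := by
          obtain ⟨n, hn⟩ := exists_pow_lt_of_lt_one
            (show (0:ℝ) < d / Stmt12Aux.ss D 0 by positivity)
            (by norm_num : (1:ℝ)/32 < 1)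
          refine ⟨n, ?_⟩
          have hdec := Stmt12Aux.ss_decay hDpos 0 (n + 1)
          simp only [Nat.zero_add, zero_add] at hdec
          have h1 : Stmt12Aux.ss D 0 * (1/32:ℝ)^n < d := by
            rw [lt_div_iff₀ hs0] at hn
            linarith [hn]
          have h2 : Stmt12Aux.ss D 0 / 32 ^ (n + 1) ≤ Stmt12Aux.ss D 0 * (1/32:ℝ)^n := by
            rw [div_pow, one_pow, mul_one_div]
            exact div_le_div_of_nonneg_left hs0.le (by positivity)
              (pow_le_pow_right₀ (by norm_num) (Nat.le_succ n))
          linarith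
        set k := Nat.find hex with hkdef
        have hk1 : Stmt12Aux.ss D (k + 1) ≤ d := Nat.find_spec hex
        have hk2 : d ≤ Stmt12Aux.ss D k := by
          rcases Nat.eq_zero_or_pos k with hk0 | hkpos
          · rw [hk0]
            exact le_trans hds1 (Stmt12Aux.ss_le_self hDpos 0)
          · have hlt : k - 1 < k := by omega
            have hmin := Nat.find_min hex hlt
            push_neg at hmin
            have hkk : k - 1 + 1 = k := by omega
            rw [hkk] at hmin
            exact hmin.le
        have hvol := Stmt12Aux.main_bound hDpos k a d hdz hk1
        have hdDk : d ≤ D k := le_trans hk2 (Stmt12Aux.ss_le_D k)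
        calc (c • μ) t ≤ c * volume (Stmt12Aux.ff D ⁻¹' (Icc a (a + d)) ∩ W) := happly
          _ ≤ c * ENNReal.ofReal (96 * 32 ^ k * d / Stmt12Aux.ss D 0) :=
              mul_le_mul_right hvol _
          _ = ENNReal.ofReal ((Stmt12Aux.ss D 0 / 96) *
                (96 * 32 ^ k * d / Stmt12Aux.ss D 0)) := by
              rw [hc, ← ENNReal.ofReal_mul (by positivity)]
          _ = ENNReal.ofReal ((32:ℝ) ^ k * d) := by
              congr 1
              field_simp
          _ ≤ ENNReal.ofReal (h d) :=
              ENNReal.ofReal_le_ofReal (hDh k d hdz hdDk)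
    -- now conclude positivity
    have hWsub : W ⊆ Stmt12Aux.ff D ⁻¹' E := by
      intro x hx
      exact subset_closure (mem_image_of_mem _ hx)
    have hμE : 1 ≤ μ E := by
      have hEmeas : MeasurableSet E := isClosed_closure.measurableSet
      rw [hμ, Measure.map_apply hmf hEmeas, hν,
        Measure.restrict_apply (hmf hEmeas)]
      have : W ⊆ Stmt12Aux.ff D ⁻¹' E ∩ W := fun x hx => ⟨hWsub hx, hx⟩
      calc (1:ℝ≥0∞) = volume W := by rw [hW, Real.volume_Ico]; norm_num
        _ ≤ volume (Stmt12Aux.ff D ⁻¹' E ∩ W) := measure_mono this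
    have hcpos : 0 < c := ENNReal.ofReal_pos.2 (by positivity)
    have : 0 < (c • μ) E := by
      rw [Measure.smul_apply, smul_eq_mul]
      exact ENNReal.mul_pos hcpos.ne' (by intro hcon; rw [hcon] at hμE; simp at hμE)
    calc (0:ℝ≥0∞) < (c • μ) E := this
      _ ≤ gaugeMeasure h E := hle E
  · -- empty interior of the difference set
    set DS := {z : ℝ | ∃ x ∈ E, ∃ y ∈ E, z = y - x} with hDS
    have hvol0 : volume DS = 0 := by
      have hbound : ∀ k : ℕ, volume DS ≤
          ENNReal.ofReal (Stmt12Aux.ss D 0 / 4 * (1/8:ℝ)^k) := by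
        intro k
        have hsk := Stmt12Aux.ss_pos hDpos k
        calc volume DS ≤ volume (⋃ j ∈ Finset.range (Stmt12Aux.QQ D k),
              Icc (Stmt12Aux.HH2 D k j - Stmt12Aux.ss D k / 8)
                  (Stmt12Aux.HH2 D k j + Stmt12Aux.ss D k / 8)) :=
              measure_mono (Stmt12Aux.diff_subset_cyl hDpos k)
          _ ≤ ∑ j ∈ Finset.range (Stmt12Aux.QQ D k),
              volume (Icc (Stmt12Aux.HH2 D k j - Stmt12Aux.ss D k / 8)
                  (Stmt12Aux.HH2 D k j + Stmt12Aux.ss D k / 8)) :=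
              measure_biUnion_finset_le _ _
          _ = ∑ _j ∈ Finset.range (Stmt12Aux.QQ D k),
              ENNReal.ofReal (Stmt12Aux.ss D k / 4) := by
              apply Finset.sum_congr rfl
              intro j _
              rw [Real.volume_Icc]
              congr 1
              ring
          _ = (Stmt12Aux.QQ D k : ℝ≥0∞) * ENNReal.ofReal (Stmt12Aux.ss D k / 4) := by
              rw [Finset.sum_const, nsmul_eq_mul, Finset.card_range]
          _ = ENNReal.ofReal ((Stmt12Aux.QQ D k : ℝ) * (Stmt12Aux.ss D k / 4)) := by
              rw [ENNReal.ofReal_mul (by positivity), ENNReal.ofReal_natCast]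
          _ ≤ ENNReal.ofReal (Stmt12Aux.ss D 0 / 4 * (1/8:ℝ)^k) := by
              apply ENNReal.ofReal_le_ofReal
              have hQ : (Stmt12Aux.QQ D k : ℝ) ≤ (2:ℝ)^k * (Stmt12Aux.NN D k : ℝ) := by
                exact_mod_cast Stmt12Aux.QQ_le (D := D) k
              have hNs : (Stmt12Aux.NN D k : ℝ) * Stmt12Aux.ss D k ≤
                  Stmt12Aux.ss D 0 / 16 ^ k := Stmt12Aux.NN_ss_ub hDpos k
              have hNpos : (0:ℝ) < (Stmt12Aux.NN D k : ℝ) := by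
                exact_mod_cast Stmt12Aux.NN_pos (fun j => Stmt12Aux.MM_pos hDpos j) k
              calc (Stmt12Aux.QQ D k : ℝ) * (Stmt12Aux.ss D k / 4)
                  ≤ ((2:ℝ)^k * (Stmt12Aux.NN D k : ℝ)) * (Stmt12Aux.ss D k / 4) := by
                    gcongr
                _ = (2:ℝ)^k * ((Stmt12Aux.NN D k : ℝ) * Stmt12Aux.ss D k) / 4 := by ring
                _ ≤ (2:ℝ)^k * (Stmt12Aux.ss D 0 / 16 ^ k) / 4 := by gcongr
                _ = Stmt12Aux.ss D 0 / 4 * (1/8:ℝ)^k := by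
                    rw [div_pow, one_pow]
                    rw [show (16:ℝ)^k = 2^k * 8^k by rw [← mul_pow]; norm_num]
                    field_simp
      have htend : Tendsto (fun k : ℕ => ENNReal.ofReal (Stmt12Aux.ss D 0 / 4 * (1/8:ℝ)^k))
          atTop (nhds 0) := by
        rw [show (0 : ℝ≥0∞) = ENNReal.ofReal 0 by simp]
        apply ENNReal.tendsto_ofReal
        have := tendsto_pow_atTop_nhds_zero_of_lt_one
          (by norm_num : (0:ℝ) ≤ 1/8) (by norm_num : (1:ℝ)/8 < 1)
        simpa using this.const_mul (Stmt12Aux.ss D 0 / 4)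
      exact le_antisymm (ge_of_tendsto' htend hbound) zero_le
    by_contra hne
    obtain ⟨z, hz⟩ := nonempty_iff_ne_empty.mpr hne
    have hpos' : 0 < volume (interior DS) :=
      (isOpen_interior).measure_pos volume ⟨z, hz⟩
    have : volume (interior DS) ≤ volume DS := measure_mono interior_subset
    rw [hvol0] at this
    exact absurd (lt_of_lt_of_le hpos' this) (lt_irrefl 0)
end

section
/- Given a dimension function h with h ≺ x, there exists a compact set E ⊆ ℝ with ℋ^h(E) > 0 that contains no nontrivial arithmetic progression of length 3, i.e. there are no distinct x, y, z ∈ E with x + z = 2y. -/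
open MeasureTheory Filter Set

namespace APF

open scoped Classical

/-- scheduled constraint at step `k`: a triple of digit strings; the level is
`(Nat.unpair k).1`. -/
def sched (k : ℕ) : Option (List ℕ × List ℕ × List ℕ) :=
  Encodable.decode (Nat.unpair k).2

/-- the mod-4 class assigned to a level-`k` string `σ` at step `k+1`. -/
def cls (k : ℕ) (σ : List ℕ) : ℕ :=
  match sched k with
  | none => 0
  | some (X, Y, Z) =>
      let τ := σ.take (Nat.unpair k).1
      if τ = X then 0 else if τ = Z then 1 else if τ = Y then (if X = Z then 1 else 0) else 0

lemma cls_le_one (k : ℕ) (σ : List ℕ) : cls k σ ≤ 1 := by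
  unfold cls
  rcases sched k with _ | ⟨X, Y, Z⟩
  · exact Nat.zero_le _
  · dsimp only
    split <;> [exact Nat.zero_le _; skip]
    split <;> [exact le_rfl; skip]
    split
    · split <;> simp
    · exact Nat.zero_le _

def digitSet (b : ℕ → ℕ) (k : ℕ) (σ : List ℕ) : Finset ℕ :=
  (Finset.range (b (k+1))).filter (fun d => d % 4 = cls k σ)

def A (b : ℕ → ℕ) : ℕ → Finset (List ℕ)
  | 0 => {([] : List ℕ)}
  | (k+1) => (A b k).biUnion (fun σ => (digitSet b k σ).image (fun d => σ ++ [d]))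

lemma mem_A_succ {b : ℕ → ℕ} {k : ℕ} {σ' : List ℕ} :
    σ' ∈ A b (k+1) ↔ ∃ σ ∈ A b k, ∃ d, (d < b (k+1) ∧ d % 4 = cls k σ) ∧ σ' = σ ++ [d] := by
  simp [A, digitSet, Finset.mem_biUnion, Finset.mem_image, Finset.mem_filter,
    Finset.mem_range, eq_comm]

lemma length_of_mem_A {b : ℕ → ℕ} : ∀ {k : ℕ} {σ : List ℕ}, σ ∈ A b k → σ.length = k := by
  intro k
  induction k with
  | zero => intro σ hσ; simp [A] at hσ; simp [hσ]
  | succ k ih =>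
    intro σ' hσ'
    rcases mem_A_succ.1 hσ' with ⟨σ, hσ, d, _, rfl⟩
    simp [ih hσ]

def nvalAux (b : ℕ → ℕ) : ℕ → ℕ → List ℕ → ℕ
  | _, acc, [] => acc
  | k, acc, d :: r => nvalAux b (k+1) (acc * (4 * b (k+1)) + d) r

def nval (b : ℕ → ℕ) (σ : List ℕ) : ℕ := nvalAux b 0 0 σ

lemma nvalAux_append (b : ℕ → ℕ) (d : ℕ) :
    ∀ (l : List ℕ) (k acc : ℕ),
      nvalAux b k acc (l ++ [d]) = (nvalAux b k acc l) * (4 * b (k + l.length + 1)) + d := by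
  intro l
  induction l with
  | nil => intro k acc; simp [nvalAux]
  | cons e r ih =>
    intro k acc
    have h1 : nvalAux b k acc ((e :: r) ++ [d]) = nvalAux b (k+1) (acc * (4 * b (k+1)) + e) (r ++ [d]) := rfl
    have h2 : nvalAux b k acc (e :: r) = nvalAux b (k+1) (acc * (4 * b (k+1)) + e) r := rfl
    rw [h1, ih (k+1), h2, List.length_cons,
      show k+1+r.length+1 = k+(r.length+1)+1 from by omega]

lemma nval_append (b : ℕ → ℕ) (σ : List ℕ) (d : ℕ) :
    nval b (σ ++ [d]) = (nval b σ) * (4 * b (σ.length + 1)) + d := by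
  simp [nval, nvalAux_append]

noncomputable def ptAux (δ : ℕ → ℝ) : ℕ → List ℕ → ℝ
  | _, [] => 0
  | k, d :: r => d * (4 * δ (k+1)) + ptAux δ (k+1) r

noncomputable def pt (δ : ℕ → ℝ) (σ : List ℕ) : ℝ := ptAux δ 0 σ

lemma ptAux_append (δ : ℕ → ℝ) (d : ℕ) :
    ∀ (l : List ℕ) (k : ℕ),
      ptAux δ k (l ++ [d]) = ptAux δ k l + d * (4 * δ (k + l.length + 1)) := by
  intro l
  induction l with
  | nil => intro k; simp [ptAux]
  | cons e r ih =>
    intro k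
    have h1 : ptAux δ k ((e :: r) ++ [d]) = (e : ℝ) * (4 * δ (k+1)) + ptAux δ (k+1) (r ++ [d]) := rfl
    have h2 : ptAux δ k (e :: r) = (e : ℝ) * (4 * δ (k+1)) + ptAux δ (k+1) r := rfl
    rw [h1, ih (k+1), h2, List.length_cons,
      show k+1+r.length+1 = k+(r.length+1)+1 from by omega]
    ring

lemma pt_append (δ : ℕ → ℝ) (σ : List ℕ) (d : ℕ) :
    pt δ (σ ++ [d]) = pt δ σ + d * (4 * δ (σ.length + 1)) := by
  simp [pt, ptAux_append]

/-- the closed interval associated to a string. -/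
noncomputable def I (δ : ℕ → ℝ) (σ : List ℕ) : Set ℝ :=
  Icc (pt δ σ) (pt δ σ + δ σ.length)

noncomputable def Ek (b : ℕ → ℕ) (δ : ℕ → ℝ) (k : ℕ) : Set ℝ :=
  ⋃ σ ∈ A b k, I δ σ

noncomputable def E (b : ℕ → ℕ) (δ : ℕ → ℝ) : Set ℝ := ⋂ k, Ek b δ k

section Construction

variable {b : ℕ → ℕ} {δ : ℕ → ℝ}

lemma pt_eq_nval (hδr : ∀ k, δ (k+1) * (4 * b (k+1)) = δ k) :
    ∀ {k : ℕ} {σ : List ℕ}, σ ∈ A b k → pt δ σ = nval b σ * (4 * δ k) := by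
  intro k
  induction k with
  | zero =>
    intro σ hσ
    simp [A] at hσ
    simp [hσ, pt, ptAux, nval, nvalAux]
  | succ k ih =>
    intro σ' hσ'
    rcases mem_A_succ.1 hσ' with ⟨σ, hσ, d, _, rfl⟩
    rw [pt_append, nval_append, ih hσ, length_of_mem_A hσ]
    have := hδr k
    push_cast
    nlinarith [this]

lemma nval_inj (hb4 : ∀ k, 4 ≤ b (k+1)) :
    ∀ {k : ℕ} {σ σ' : List ℕ}, σ ∈ A b k → σ' ∈ A b k → nval b σ = nval b σ' → σ = σ' := by
  intro k
  induction k with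
  | zero =>
    intro σ σ' hσ hσ' _
    simp [A] at hσ hσ'; rw [hσ, hσ']
  | succ k ih =>
    intro σ0 σ0' hσ0 hσ0' hn
    rcases mem_A_succ.1 hσ0 with ⟨σ, hσ, d, ⟨hd, _⟩, rfl⟩
    rcases mem_A_succ.1 hσ0' with ⟨σ', hσ', d', ⟨hd', _⟩, rfl⟩
    rw [nval_append, nval_append, length_of_mem_A hσ, length_of_mem_A hσ'] at hn
    have hb : 0 < 4 * b (k+1) := by have := hb4 k; omega
    have hdlt : d < 4 * b (k+1) := by omega
    have hdlt' : d' < 4 * b (k+1) := by omega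
    have hdd : d = d' := by
      have hmm : (nval b σ * (4 * b (k+1)) + d) % (4 * b (k+1)) =
          (nval b σ' * (4 * b (k+1)) + d') % (4 * b (k+1)) := by rw [hn]
      simpa [Nat.mul_add_mod_of_lt hdlt, Nat.mul_add_mod_of_lt hdlt'] using hmm
    subst hdd
    have : nval b σ = nval b σ' := by
      have := Nat.eq_of_mul_eq_mul_right hb (by omega : nval b σ * (4 * b (k+1)) = nval b σ' * (4 * b (k+1)))
      exact this
    rw [ih hσ hσ' this]

lemma I_succ_subset (hδpos : ∀ k, 0 < δ k) (hδr : ∀ k, δ (k+1) * (4 * b (k+1)) = δ k)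
    {k : ℕ} {σ : List ℕ} (hσ : σ ∈ A b k) {d : ℕ} (hd : d < b (k+1)) :
    I δ (σ ++ [d]) ⊆ I δ σ := by
  have hlen : σ.length = k := length_of_mem_A hσ
  have hlen' : (σ ++ [d]).length = k + 1 := by simp [hlen]
  have hδ' := hδpos (k+1)
  have hrel := hδr k
  have hdb : (d : ℝ) ≤ (b (k+1) : ℝ) - 1 := by
    have : (d : ℝ) + 1 ≤ (b (k+1) : ℝ) := by exact_mod_cast hd
    linarith
  rw [I, I, hlen, hlen', pt_append, hlen]
  apply Icc_subset_Icc
  · nlinarith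
  · nlinarith

lemma take_mem_A (hδpos : ∀ k, 0 < δ k) (hδr : ∀ k, δ (k+1) * (4 * b (k+1)) = δ k) :
    ∀ {k : ℕ} {σ : List ℕ}, σ ∈ A b k → ∀ {m : ℕ}, m ≤ k →
      σ.take m ∈ A b m ∧ I δ σ ⊆ I δ (σ.take m) := by
  intro k
  induction k with
  | zero =>
    intro σ hσ m hm
    have hσ0 : σ = [] := by simpa [A] using hσ
    subst hσ0
    interval_cases m
    exact ⟨hσ, subset_rfl⟩
  | succ k ih =>
    intro σ' hσ' m hm
    rcases mem_A_succ.1 hσ' with ⟨σ, hσ, d, ⟨hd, hd4⟩, rfl⟩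
    have hlen : σ.length = k := length_of_mem_A hσ
    rcases Nat.lt_or_ge m (k+1) with hmk | hmk
    · have hmk' : m ≤ k := by omega
      have htake : (σ ++ [d]).take m = σ.take m := by
        rw [List.take_append_of_le_length (by omega)]
      rcases ih hσ hmk' with ⟨h1, h2⟩
      rw [htake]
      exact ⟨h1, (I_succ_subset hδpos hδr hσ hd).trans h2⟩
    · have : m = k + 1 := by omega
      subst this
      have : (σ ++ [d]).take (k+1) = σ ++ [d] := by
        apply List.take_of_length_le
        simp [hlen]
      rw [this]
      exact ⟨hσ', subset_rfl⟩

lemma extend_mem_A (hb4 : ∀ k, 4 ≤ b (k+1)) {k : ℕ} {σ : List ℕ} (hσ : σ ∈ A b k) :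
    σ ++ [cls k σ] ∈ A b (k+1) := by
  refine mem_A_succ.2 ⟨σ, hσ, cls k σ, ⟨?_, ?_⟩, rfl⟩
  · have := cls_le_one k σ; have := hb4 k; omega
  · exact Nat.mod_eq_of_lt (by have := cls_le_one k σ; omega)

lemma I_disjoint (hb4 : ∀ k, 4 ≤ b (k+1)) (hδpos : ∀ k, 0 < δ k)
    (hδr : ∀ k, δ (k+1) * (4 * b (k+1)) = δ k)
    {k : ℕ} {σ σ' : List ℕ} (hσ : σ ∈ A b k) (hσ' : σ' ∈ A b k)
    {x : ℝ} (hx : x ∈ I δ σ) (hx' : x ∈ I δ σ') : σ = σ' := by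
  by_contra hne
  have hn : nval b σ ≠ nval b σ' := fun hh => hne (nval_inj hb4 hσ hσ' hh)
  have e1 : pt δ σ = nval b σ * (4 * δ k) := pt_eq_nval hδr hσ
  have e2 : pt δ σ' = nval b σ' * (4 * δ k) := pt_eq_nval hδr hσ'
  rw [I, length_of_mem_A hσ, e1] at hx
  rw [I, length_of_mem_A hσ', e2] at hx'
  have hδk := hδpos k
  rcases Nat.lt_or_ge (nval b σ) (nval b σ') with hlt | hge
  · have : (nval b σ : ℝ) + 1 ≤ (nval b σ' : ℝ) := by exact_mod_cast hlt
    rcases hx with ⟨_, hx2⟩; rcases hx' with ⟨hx1', _⟩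
    nlinarith
  · have hlt : nval b σ' < nval b σ := by omega
    have : (nval b σ' : ℝ) + 1 ≤ (nval b σ : ℝ) := by exact_mod_cast hlt
    rcases hx with ⟨hx1, _⟩; rcases hx' with ⟨_, hx2'⟩
    nlinarith

lemma A_chain_mem (hb4 : ∀ k, 4 ≤ b (k+1)) {K : ℕ} {σ : List ℕ} (hσ : σ ∈ A b K) :
    ∀ j, (Nat.rec σ (fun j c => c ++ [cls (K + j) c]) j : List ℕ) ∈ A b (K + j) := by
  intro j
  induction j with
  | zero => simpa using hσ
  | succ j ih =>
    exact extend_mem_A hb4 ih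

lemma E_inter_I_nonempty (hb4 : ∀ k, 4 ≤ b (k+1)) (hδpos : ∀ k, 0 < δ k)
    (hδr : ∀ k, δ (k+1) * (4 * b (k+1)) = δ k)
    {K : ℕ} {σ : List ℕ} (hσ : σ ∈ A b K) : (E b δ ∩ I δ σ).Nonempty := by
  set c : ℕ → List ℕ := fun j => Nat.rec σ (fun j c => c ++ [cls (K + j) c]) j with hc
  have hcmem : ∀ j, c j ∈ A b (K + j) := A_chain_mem hb4 hσ
  have hsub : ∀ j, I δ (c (j+1)) ⊆ I δ (c j) := by
    intro j
    have hd : cls (K + j) (c j) < b (K + j + 1) := by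
      have := cls_le_one (K + j) (c j); have := hb4 (K + j); omega
    exact I_succ_subset hδpos hδr (hcmem j) hd
  have hne : ∀ j, (I δ (c j)).Nonempty := by
    intro j
    exact ⟨pt δ (c j), le_refl _, by have := hδpos ((c j).length); linarith⟩
  have hcl : ∀ j, IsClosed (I δ (c j)) := fun j => isClosed_Icc
  have hcompact : IsCompact (I δ (c 0)) := isCompact_Icc
  obtain ⟨x, hx⟩ := IsCompact.nonempty_iInter_of_sequence_nonempty_isCompact_isClosed
    (fun j => I δ (c j)) hsub hne hcompact hcl
  have hxj : ∀ j, x ∈ I δ (c j) := by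
    intro j; exact mem_iInter.1 hx j
  refine ⟨x, ?_, hxj 0⟩
  rw [E, mem_iInter]
  intro m
  rcases Nat.lt_or_ge m K with hm | hm
  · have h1 := take_mem_A hδpos hδr hσ (le_of_lt hm)
    exact mem_biUnion h1.1 (h1.2 (hxj 0))
  · have h1 := hcmem (m - K)
    rw [Nat.add_sub_cancel' hm] at h1
    exact mem_biUnion h1 (hxj (m - K))

lemma E_subset_Ek {k : ℕ} : E b δ ⊆ Ek b δ k := fun _ hx => (mem_iInter.1 hx) k

lemma exists_str {x : ℝ} (hx : x ∈ E b δ) (k : ℕ) : ∃ σ, σ ∈ A b k ∧ x ∈ I δ σ := by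
  have := E_subset_Ek (k := k) hx
  rw [Ek, mem_iUnion₂] at this
  tauto

end Construction

section Str

variable {b : ℕ → ℕ} {δ : ℕ → ℝ}

open Classical in
noncomputable def str (b : ℕ → ℕ) (δ : ℕ → ℝ) (x : ℝ) (k : ℕ) : List ℕ :=
  if h : ∃ σ, σ ∈ A b k ∧ x ∈ I δ σ then h.choose else []

lemma str_spec {x : ℝ} (hx : x ∈ E b δ) (k : ℕ) :
    str b δ x k ∈ A b k ∧ x ∈ I δ (str b δ x k) := by
  have h := exists_str hx k
  rw [str, dif_pos h]
  exact h.choose_spec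

lemma str_eq (hb4 : ∀ k, 4 ≤ b (k+1)) (hδpos : ∀ k, 0 < δ k)
    (hδr : ∀ k, δ (k+1) * (4 * b (k+1)) = δ k)
    {x : ℝ} (hx : x ∈ E b δ) {k : ℕ} {σ : List ℕ} (hσ : σ ∈ A b k) (hxσ : x ∈ I δ σ) :
    str b δ x k = σ :=
  I_disjoint hb4 hδpos hδr (str_spec hx k).1 hσ (str_spec hx k).2 hxσ

lemma str_take (hb4 : ∀ k, 4 ≤ b (k+1)) (hδpos : ∀ k, 0 < δ k)
    (hδr : ∀ k, δ (k+1) * (4 * b (k+1)) = δ k)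
    {x : ℝ} (hx : x ∈ E b δ) {m k : ℕ} (hmk : m ≤ k) :
    (str b δ x k).take m = str b δ x m := by
  obtain ⟨h1, h2⟩ := take_mem_A hδpos hδr (str_spec hx k).1 hmk
  exact (str_eq hb4 hδpos hδr hx h1 (h2 (str_spec hx k).2)).symm

lemma str_succ (hb4 : ∀ k, 4 ≤ b (k+1)) (hδpos : ∀ k, 0 < δ k)
    (hδr : ∀ k, δ (k+1) * (4 * b (k+1)) = δ k)
    {x : ℝ} (hx : x ∈ E b δ) (k : ℕ) :
    ∃ d, d % 4 = cls k (str b δ x k) ∧ str b δ x (k+1) = str b δ x k ++ [d] := by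
  obtain ⟨σ, hσ, d, ⟨hd, hd4⟩, heq⟩ := mem_A_succ.1 (str_spec hx (k+1)).1
  have hlen : σ.length = k := length_of_mem_A hσ
  have htake : (str b δ x (k+1)).take k = σ := by
    rw [heq, List.take_append_of_le_length (by omega), List.take_of_length_le (by omega)]
  have hσs : σ = str b δ x k := by
    rw [← htake, str_take hb4 hδpos hδr hx (by omega)]
  subst hσs
  exact ⟨d, hd4, heq⟩

lemma nval_str_mod (hb4 : ∀ k, 4 ≤ b (k+1)) (hδpos : ∀ k, 0 < δ k)
    (hδr : ∀ k, δ (k+1) * (4 * b (k+1)) = δ k)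
    {x : ℝ} (hx : x ∈ E b δ) (k : ℕ) :
    nval b (str b δ x (k+1)) % 4 = cls k (str b δ x k) := by
  obtain ⟨d, hd4, heq⟩ := str_succ hb4 hδpos hδr hx k
  have hlen : (str b δ x k).length = k := length_of_mem_A (str_spec hx k).1
  rw [heq, nval_append, hlen]
  have : nval b (str b δ x k) * (4 * b (k+1)) = 4 * (nval b (str b δ x k) * b (k+1)) := by ring
  rw [this, Nat.mul_add_mod, hd4]

lemma str_pos (hδpos : ∀ k, 0 < δ k) (hδr : ∀ k, δ (k+1) * (4 * b (k+1)) = δ k)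
    {x : ℝ} (hx : x ∈ E b δ) (k : ℕ) :
    4 * (nval b (str b δ x k) : ℝ) * δ k ≤ x ∧
      x ≤ 4 * (nval b (str b δ x k) : ℝ) * δ k + δ k := by
  have h2 := (str_spec hx k).2
  rw [I, length_of_mem_A (str_spec hx k).1, pt_eq_nval hδr (str_spec hx k).1] at h2
  constructor <;> [linarith [h2.1]; linarith [h2.2]]

lemma delta_decay (hb4 : ∀ k, 4 ≤ b (k+1)) (hδpos : ∀ k, 0 < δ k)
    (hδr : ∀ k, δ (k+1) * (4 * b (k+1)) = δ k) (m : ℕ) :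
    δ m ≤ δ 0 / 16 ^ m := by
  induction m with
  | zero => simp
  | succ m ih =>
    have h1 : 16 * δ (m+1) ≤ δ m := by
      have := hδr m
      have hb : (16 : ℝ) ≤ 4 * b (m+1) := by
        have := hb4 m
        have : (4 : ℝ) ≤ (b (m+1) : ℝ) := by exact_mod_cast this
        linarith
      nlinarith [hδpos (m+1)]
    have h16 : (0:ℝ) < 16 ^ m := by positivity
    rw [pow_succ, ← div_div]
    linarith

lemma str_separate (hb4 : ∀ k, 4 ≤ b (k+1)) (hδpos : ∀ k, 0 < δ k)
    (hδr : ∀ k, δ (k+1) * (4 * b (k+1)) = δ k)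
    {x y : ℝ} (hx : x ∈ E b δ) (hy : y ∈ E b δ) (hxy : x ≠ y) :
    ∃ m, str b δ x m ≠ str b δ y m := by
  by_contra hc
  push_neg at hc
  apply hxy
  have key : ∀ m, |x - y| ≤ δ m := by
    intro m
    have h1 := (str_spec hx m).2
    have h2 := (str_spec hy m).2
    rw [hc m] at h1
    have hlen : (str b δ y m).length = m := length_of_mem_A (str_spec hy m).1
    rw [I, hlen] at h1 h2
    rw [abs_le]
    constructor <;> [linarith [h1.1, h2.2]; linarith [h1.2, h2.1]]
  by_contra hne
  have habs : 0 < |x - y| := abs_pos.2 (sub_ne_zero.2 hne)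
  obtain ⟨m, hm⟩ := pow_unbounded_of_one_lt (δ 0 / |x - y|) (by norm_num : (1:ℝ) < 16)
  have h1 : δ m ≤ δ 0 / 16 ^ m := delta_decay hb4 hδpos hδr m
  have h2 : δ 0 / 16 ^ m < |x - y| := by
    rw [div_lt_iff₀ (by positivity)]
    rw [div_lt_iff₀ habs] at hm
    linarith
  have := key m
  linarith

end Str

section APfree

variable {b : ℕ → ℕ} {δ : ℕ → ℝ}

theorem no_ap (hb4 : ∀ k, 4 ≤ b (k+1)) (hδpos : ∀ k, 0 < δ k)
    (hδr : ∀ k, δ (k+1) * (4 * b (k+1)) = δ k)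
    {x y z : ℝ} (hx : x ∈ E b δ) (hy : y ∈ E b δ) (hz : z ∈ E b δ)
    (hxy : x ≠ y) : x + z ≠ 2 * y := by
  obtain ⟨m, hm⟩ := str_separate hb4 hδpos hδr hx hy hxy
  set X := str b δ x m with hX
  set Y := str b δ y m with hY
  set Z := str b δ z m with hZ
  obtain ⟨k, hmk, hsched, hunp1⟩ :
      ∃ k, m ≤ k ∧ sched k = some (X, Y, Z) ∧ (Nat.unpair k).1 = m :=
    ⟨Nat.pair m (Encodable.encode ((X, Y, Z) : List ℕ × List ℕ × List ℕ)),
      Nat.left_le_pair _ _,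
      by rw [sched, Nat.unpair_pair]; exact Encodable.encodek _,
      by rw [Nat.unpair_pair]⟩
  -- compute the classes
  have hclsx : cls k (str b δ x k) = 0 := by
    rw [cls, hsched]
    simp only [hunp1, str_take hb4 hδpos hδr hx hmk, ← hX]
    simp
  have hclsz : cls k (str b δ z k) = if Z = X then 0 else 1 := by
    rw [cls, hsched]
    simp only [hunp1, str_take hb4 hδpos hδr hz hmk, ← hZ]
    by_cases hzx : Z = X
    · simp [hzx]
    · simp [hzx]
  have hclsy : cls k (str b δ y k) = if Y = Z then 1 else (if X = Z then 1 else 0) := by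
    rw [cls, hsched]
    simp only [hunp1, str_take hb4 hδpos hδr hy hmk, ← hY]
    have hyx : Y ≠ X := fun hh => hm hh.symm
    simp [hyx]
  -- digit values
  have hmx' : nval b (str b δ x (k+1)) % 4 = cls k (str b δ x k) := nval_str_mod hb4 hδpos hδr hx k
  have hmy' : nval b (str b δ y (k+1)) % 4 = cls k (str b δ y k) := nval_str_mod hb4 hδpos hδr hy k
  have hmz' : nval b (str b δ z (k+1)) % 4 = cls k (str b δ z k) := nval_str_mod hb4 hδpos hδr hz k
  -- position decomposition
  intro heq
  have hpx := str_pos hδpos hδr hx (k+1)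
  have hpy := str_pos hδpos hδr hy (k+1)
  have hpz := str_pos hδpos hδr hz (k+1)
  have hδ' := hδpos (k+1)
  set nx := nval b (str b δ x (k+1)) with hnx
  set ny := nval b (str b δ y (k+1)) with hny
  set nz := nval b (str b δ z (k+1)) with hnz
  have hmx := hmx'
  have hmy := hmy'
  have hmz := hmz'
  -- integrality
  have hint : nx + nz = 2 * ny := by
    have hb1 : 4 * δ (k+1) * ((nx : ℝ) + nz - 2 * ny) = (x + z - 2 * y) - ((x - 4 * nx * δ (k+1))
        + (z - 4 * nz * δ (k+1)) - 2 * (y - 4 * ny * δ (k+1))) := by ring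
    rw [heq] at hb1
    have hb2 : |4 * δ (k+1) * ((nx : ℝ) + nz - 2 * ny)| ≤ 2 * δ (k+1) := by
      rw [hb1, abs_le]
      constructor <;> [nlinarith [hpx.1, hpx.2, hpy.1, hpy.2, hpz.1, hpz.2];
        nlinarith [hpx.1, hpx.2, hpy.1, hpy.2, hpz.1, hpz.2]]
    have hb3 : |(nx : ℝ) + nz - 2 * ny| ≤ 1 / 2 := by
      rw [abs_mul, abs_of_pos (by linarith : (0:ℝ) < 4 * δ (k+1))] at hb2
      nlinarith [hb2, hδ', abs_nonneg ((nx : ℝ) + nz - 2 * ny)]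
    have hb3' := neg_abs_le ((nx : ℝ) + nz - 2 * ny)
    have hb3'' := le_abs_self ((nx : ℝ) + nz - 2 * ny)
    have hb3l : -(1/2 : ℝ) ≤ (nx : ℝ) + nz - 2 * ny := by linarith
    have hb3r : (nx : ℝ) + nz - 2 * ny ≤ 1/2 := by linarith
    clear hb3 hb3' hb3''
    have h1 : ((nx + nz : ℕ) : ℝ) = ((2 * ny : ℕ) : ℝ) := by
      push_cast
      rcases Nat.lt_trichotomy (nx + nz) (2 * ny) with hlt | heq' | hgt
      · exfalso
        have : (nx : ℝ) + nz + 1 ≤ 2 * ny := by exact_mod_cast hlt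
        linarith [hb3l]
      · exact_mod_cast congrArg (fun n : ℕ => (n : ℝ)) heq'
      · exfalso
        have : (2 * ny : ℝ) + 1 ≤ (nx : ℝ) + nz := by exact_mod_cast hgt
        linarith [hb3r]
    exact_mod_cast h1
  -- mod-4 contradiction
  by_cases hzx : Z = X
  · rw [hclsx] at hmx
    rw [hclsz, if_pos hzx] at hmz
    rw [hclsy, if_neg (fun hh : Y = Z => hm (hh.trans hzx).symm), if_pos hzx.symm] at hmy
    omega
  · rw [hclsx] at hmx
    rw [hclsz, if_neg hzx] at hmz
    by_cases hyz : Y = Z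
    · rw [hclsy, if_pos hyz] at hmy
      omega
    · rw [hclsy, if_neg hyz, if_neg (fun hh : X = Z => hzx hh.symm)] at hmy
      omega

end APfree

section Counting

variable {b : ℕ → ℕ} {δ : ℕ → ℝ}

lemma card_filter_mod (m c : ℕ) (hc : c < 4) :
    ((Finset.range (4*m)).filter (fun d => d % 4 = c)).card = m := by
  have himg : (Finset.range (4*m)).filter (fun d => d % 4 = c)
      = (Finset.range m).image (fun i => 4*i + c) := by
    ext x
    simp only [Finset.mem_filter, Finset.mem_range, Finset.mem_image]
    constructor
    · rintro ⟨h1, h2⟩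
      exact ⟨x / 4, by omega, by omega⟩
    · rintro ⟨i, hi, rfl⟩
      constructor <;> omega
  rw [himg, Finset.card_image_of_injective _ (fun a b hab => by omega)]
  simp

lemma card_digitSet (hbd : ∀ k, 4 ∣ b (k+1)) (k : ℕ) (σ : List ℕ) :
    (digitSet b k σ).card = b (k+1) / 4 := by
  rcases hbd k with ⟨m, hm⟩
  rw [digitSet, hm, Nat.mul_div_cancel_left m (by norm_num)]
  exact card_filter_mod m _ (by have := cls_le_one k σ; omega)

/-- number of level-`K` descendants of a level-`k` string. -/
def eN (b : ℕ → ℕ) (k K : ℕ) : ℕ := ∏ j ∈ Finset.Ioc k K, (b j / 4)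

lemma eN_pos (hb4 : ∀ k, 4 ≤ b (k+1)) (k K : ℕ) : 0 < eN b k K := by
  apply Finset.prod_pos
  intro j hj
  rw [Finset.mem_Ioc] at hj
  obtain ⟨j', rfl⟩ : ∃ j', j = j' + 1 := ⟨j - 1, by omega⟩
  have := hb4 j'
  omega

lemma eN_mul (k K K' : ℕ) (h1 : k ≤ K) (h2 : K ≤ K') :
    eN b k K * eN b K K' = eN b k K' := by
  rw [eN, eN, eN, Finset.prod_Ioc_consecutive _ h1 h2]

lemma card_filter_take (hb4 : ∀ k, 4 ≤ b (k+1)) (hbd : ∀ k, 4 ∣ b (k+1)) {k : ℕ}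
    {σ : List ℕ} (hσ : σ ∈ A b k) :
    ∀ {K : ℕ}, k ≤ K → ((A b K).filter (fun τ => τ.take k = σ)).card = eN b k K := by
  intro K hK
  induction K, hK using Nat.le_induction with
  | base =>
    have : (A b k).filter (fun τ => τ.take k = σ) = {σ} := by
      ext τ
      simp only [Finset.mem_filter, Finset.mem_singleton]
      constructor
      · rintro ⟨hτ, hh⟩
        rw [← hh, List.take_of_length_le (by rw [length_of_mem_A hτ])]
      · rintro rfl
        exact ⟨hσ, List.take_of_length_le (by rw [length_of_mem_A hσ])⟩
    rw [this, Finset.card_singleton, eN, Finset.Ioc_self, Finset.prod_empty]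
  | succ K hkK ih =>
    have hsplit : (A b (K+1)).filter (fun τ => τ.take k = σ)
        = ((A b K).filter (fun τ => τ.take k = σ)).biUnion
            (fun τ => (digitSet b K τ).image (fun d => τ ++ [d])) := by
      ext τ'
      simp only [Finset.mem_filter, Finset.mem_biUnion, Finset.mem_image]
      constructor
      · rintro ⟨hτ', htake⟩
        rcases mem_A_succ.1 hτ' with ⟨τ, hτ, d, ⟨hd, hd4⟩, rfl⟩
        have hlen : τ.length = K := length_of_mem_A hτ
        rw [List.take_append_of_le_length (by omega)] at htake
        refine ⟨τ, ⟨hτ, htake⟩, d, ?_, rfl⟩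
        simp only [digitSet, Finset.mem_filter, Finset.mem_range]
        exact ⟨hd, hd4⟩
      · rintro ⟨τ, ⟨hτ, htake⟩, d, hd, rfl⟩
        simp only [digitSet, Finset.mem_filter, Finset.mem_range] at hd
        have hlen : τ.length = K := length_of_mem_A hτ
        refine ⟨mem_A_succ.2 ⟨τ, hτ, d, hd, rfl⟩, ?_⟩
        rw [List.take_append_of_le_length (by omega), htake]
    rw [hsplit, Finset.card_biUnion]
    · have : ∀ τ ∈ (A b K).filter (fun τ => τ.take k = σ),
          ((digitSet b K τ).image (fun d => τ ++ [d])).card = b (K+1) / 4 := by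
        intro τ _
        rw [Finset.card_image_of_injective _ (fun d d' hdd => by
          simpa using List.append_cancel_left hdd), card_digitSet hbd]
      rw [Finset.sum_congr rfl this, Finset.sum_const, smul_eq_mul, ih, eN, eN,
        Finset.prod_Ioc_succ_top (by omega), Nat.mul_comm]
    · intro τ1 h1 τ2 h2 hne
      apply Finset.disjoint_left.2
      rintro τ' hτ1 hτ2
      simp only [Finset.mem_image] at hτ1 hτ2
      rcases hτ1 with ⟨d1, _, rfl⟩
      rcases hτ2 with ⟨d2, _, heq2⟩
      apply hne
      have := congrArg List.dropLast heq2
      simpa [List.dropLast_concat] using this.symm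

lemma card_A (hb4 : ∀ k, 4 ≤ b (k+1)) (hbd : ∀ k, 4 ∣ b (k+1)) (K : ℕ) :
    (A b K).card = eN b 0 K := by
  have h0 : ([] : List ℕ) ∈ A b 0 := by simp [A]
  have hh := card_filter_take hb4 hbd h0 (Nat.zero_le K)
  have hfil : (A b K).filter (fun τ => τ.take 0 = ([] : List ℕ)) = A b K := by
    apply Finset.filter_true_of_mem
    intro τ _
    simp
  rw [hfil] at hh
  exact hh

lemma nu_delta (hbd : ∀ k, 4 ∣ b (k+1)) (hδr : ∀ k, δ (k+1) * (4 * b (k+1)) = δ k) :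
    ∀ K, δ K * 16 ^ K * (eN b 0 K : ℝ) = δ 0 := by
  intro K
  induction K with
  | zero => simp [eN]
  | succ K ih =>
    have hsplit : eN b 0 (K+1) = eN b 0 K * (b (K+1) / 4) := by
      rw [eN, eN, Finset.prod_Ioc_succ_top (by omega)]
    have hcast : ((b (K+1) / 4 : ℕ) : ℝ) = (b (K+1) : ℝ) / 4 := by
      rcases hbd K with ⟨m, hm⟩
      rw [hm, Nat.mul_div_cancel_left m (by norm_num)]
      push_cast
      ring
    rw [hsplit]
    push_cast
    rw [hcast, pow_succ]
    linear_combination (16:ℝ)^K * ((eN b 0 K : ℝ)) * hδr K + ih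

end Counting

section Meets

variable {b : ℕ → ℕ} {δ : ℕ → ℝ}

open Finset in
lemma card_meets (hb4 : ∀ k, 4 ≤ b (k+1)) (hδpos : ∀ k, 0 < δ k)
    (hδr : ∀ k, δ (k+1) * (4 * b (k+1)) = δ k) {k : ℕ} {a ℓ : ℝ} (hℓ : 0 < ℓ) :
    ((((A b (k+1)).filter (fun σ => (I δ σ ∩ Ioo a (a + ℓ)).Nonempty)).card : ℝ)
      ≤ ℓ / (4 * δ (k+1)) + 2) := by
  set T := (A b (k+1)).filter (fun σ => (I δ σ ∩ Ioo a (a + ℓ)).Nonempty) with hT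
  have hδ' := hδpos (k+1)
  have hbound : ∀ σ ∈ T, 4 * (nval b σ : ℝ) * δ (k+1) < a + ℓ ∧
      a < 4 * (nval b σ : ℝ) * δ (k+1) + δ (k+1) := by
    intro σ hσ
    rw [hT, Finset.mem_filter] at hσ
    obtain ⟨hσA, x, hx1, hx2⟩ := hσ
    rw [I, length_of_mem_A hσA, pt_eq_nval hδr hσA] at hx1
    rw [Set.mem_Ioo] at hx2
    constructor
    · calc 4 * (nval b σ : ℝ) * δ (k+1) ≤ x := by
            have := hx1.1; linarith
        _ < a + ℓ := hx2.2
    · calc a < x := hx2.1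
        _ ≤ 4 * (nval b σ : ℝ) * δ (k+1) + δ (k+1) := by
            have := hx1.2; linarith
  rcases Finset.eq_empty_or_nonempty T with hTe | hTne
  · rw [hTe]
    simp only [Finset.card_empty, Nat.cast_zero]
    positivity
  · have hinj : Set.InjOn (nval b) (T : Set (List ℕ)) := by
      intro σ1 h1 σ2 h2 hnn
      rw [Finset.mem_coe, hT, Finset.mem_filter] at h1 h2
      exact nval_inj hb4 h1.1 h2.1 hnn
    set img := T.image (nval b) with himg
    have hcard : T.card = img.card := (Finset.card_image_of_injOn hinj).symm
    have himgne : img.Nonempty := hTne.image _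
    set n0 := img.min' himgne with hn0
    have hn0mem := img.min'_mem himgne
    have hprop : ∀ n ∈ img, 4*(n:ℝ)*δ (k+1) < a + ℓ ∧ a < 4*(n:ℝ)*δ (k+1) + δ (k+1) := by
      intro n hn
      rcases Finset.mem_image.1 hn with ⟨σ, hσ, rfl⟩
      exact hbound σ hσ
    set D := Nat.floor ((ℓ + δ (k+1)) / (4 * δ (k+1))) with hD
    have hsub : img ⊆ Finset.Icc n0 (n0 + D) := by
      intro n hn
      rw [Finset.mem_Icc]
      have hn0n : n0 ≤ n := img.min'_le n hn
      refine ⟨hn0n, ?_⟩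
      have h1 := (hprop n hn).1
      have h2 := (hprop n0 hn0mem).2
      have hstep : ((n : ℝ) - (n0 : ℝ)) * (4 * δ (k+1)) < ℓ + δ (k+1) := by nlinarith
      have hcastsub : ((n - n0 : ℕ) : ℝ) = (n : ℝ) - (n0 : ℝ) := by
        exact Nat.cast_sub hn0n
      have hfl : (n - n0 : ℕ) ≤ D := by
        rw [hD]
        apply Nat.le_floor
        rw [le_div_iff₀ (by positivity)]
        rw [hcastsub]
        linarith
      omega
    have hcardle : img.card ≤ D + 1 := by
      calc img.card ≤ (Finset.Icc n0 (n0+D)).card := Finset.card_le_card hsub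
      _ = D + 1 := by rw [Nat.card_Icc]; omega
    have hDle : (D : ℝ) ≤ (ℓ + δ (k+1)) / (4 * δ (k+1)) := Nat.floor_le (by positivity)
    have hcardr : (T.card : ℝ) ≤ (D:ℝ) + 1 := by
      rw [hcard]
      exact_mod_cast hcardle
    have hfrac : (ℓ + δ (k+1)) / (4 * δ (k+1)) = ℓ/(4*δ (k+1)) + 1/4 := by
      field_simp
    linarith

end Meets

section CoverSum

variable {b : ℕ → ℕ} {δ : ℕ → ℝ}

open Finset in
lemma cover_sum (hb4 : ∀ k, 4 ≤ b (k+1)) (hbd : ∀ k, 4 ∣ b (k+1))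
    (hδpos : ∀ k, 0 < δ k) (hδr : ∀ k, δ (k+1) * (4 * b (k+1)) = δ k)
    (h : ℝ → ℝ) (hstar : ∀ k t, 0 < t → t ≤ δ k → 16 ^ k * t ≤ h t)
    {ι : Type} (F : Finset ι) (aa ll : ι → ℝ)
    (hll : ∀ i ∈ F, 0 < ll i ∧ ll i ≤ δ 0)
    (hcov : E b δ ⊆ ⋃ i ∈ F, Set.Ioo (aa i) (aa i + ll i)) :
    δ 0 / 36 ≤ ∑ i ∈ F, h (ll i) := by
  classical
  -- choose a level for each cover interval
  have hex : ∀ i ∈ F, ∃ k, δ (k+1) < ll i ∧ ll i ≤ δ k := by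
    intro i hi
    obtain ⟨hl0, hld⟩ := hll i hi
    have hfind : ∃ j, δ j < ll i := by
      obtain ⟨j, hj⟩ := pow_unbounded_of_one_lt (δ 0 / ll i) (by norm_num : (1:ℝ) < 16)
      refine ⟨j, lt_of_le_of_lt (delta_decay hb4 hδpos hδr j) ?_⟩
      rw [div_lt_iff₀ (by positivity)]
      rw [div_lt_iff₀ hl0] at hj
      linarith
    have hjne : Nat.find hfind ≠ 0 := by
      intro h0
      have := Nat.find_spec hfind
      rw [h0] at this
      linarith
    obtain ⟨k, hk⟩ : ∃ k, Nat.find hfind = k + 1 := ⟨Nat.find hfind - 1, by omega⟩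
    have hjs : δ (k+1) < ll i := by rw [← hk]; exact Nat.find_spec hfind
    have hnot : ¬ (δ k < ll i) := Nat.find_min hfind (by omega)
    exact ⟨k, hjs, by linarith⟩
  choose! kf hk1 hk2 using hex
  set K := F.sup (fun i => kf i + 1) with hK
  have hKi : ∀ i ∈ F, kf i + 1 ≤ K := fun i hi => Finset.le_sup (f := fun i => kf i + 1) hi
  set Mi := fun i => (A b K).filter (fun τ => (I δ τ ∩ Set.Ioo (aa i) (aa i + ll i)).Nonempty)
    with hMi
  have hAsub : A b K ⊆ F.biUnion Mi := by
    intro τ hτ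
    obtain ⟨x, hxE, hxI⟩ := E_inter_I_nonempty hb4 hδpos hδr hτ
    obtain ⟨i, hi, hx⟩ := Set.mem_iUnion₂.1 (hcov hxE)
    exact Finset.mem_biUnion.2 ⟨i, hi, Finset.mem_filter.2 ⟨hτ, ⟨x, hxI, hx⟩⟩⟩
  -- per-interval bound
  have hper : ∀ i ∈ F, ((Mi i).card : ℝ) ≤ 36/δ 0 * h (ll i) * (eN b 0 K : ℝ) := by
    intro i hi
    set k := kf i with hkdef
    have hk1i := hk1 i hi
    have hk2i := hk2 i hi
    have hl0 : 0 < ll i := (hll i hi).1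
    have hδ' := hδpos (k+1)
    set Ti := (A b (k+1)).filter
      (fun σ => (I δ σ ∩ Set.Ioo (aa i) (aa i + ll i)).Nonempty) with hTi
    -- Mi ⊆ biUnion of descendants of members of Ti
    have hMisub : Mi i ⊆ Ti.biUnion
        (fun σ => (A b K).filter (fun τ => τ.take (k+1) = σ)) := by
      intro τ hτ
      rw [hMi, Finset.mem_filter] at hτ
      obtain ⟨hτA, x, hxI, hxU⟩ := hτ
      obtain ⟨hmem, hsub⟩ := take_mem_A hδpos hδr hτA (hKi i hi)
      refine Finset.mem_biUnion.2 ⟨τ.take (k+1), ?_, ?_⟩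
      · rw [hTi, Finset.mem_filter]
        exact ⟨hmem, ⟨x, hsub hxI, hxU⟩⟩
      · exact Finset.mem_filter.2 ⟨hτA, rfl⟩
    have hMicard : (Mi i).card ≤ Ti.card * eN b (k+1) K := by
      calc (Mi i).card ≤ (Ti.biUnion
          (fun σ => (A b K).filter (fun τ => τ.take (k+1) = σ))).card :=
            Finset.card_le_card hMisub
        _ ≤ ∑ σ ∈ Ti, ((A b K).filter (fun τ => τ.take (k+1) = σ)).card :=
            Finset.card_biUnion_le
        _ = ∑ σ ∈ Ti, eN b (k+1) K := by
            apply Finset.sum_congr rfl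
            intro σ hσ
            rw [hTi, Finset.mem_filter] at hσ
            exact card_filter_take hb4 hbd hσ.1 (hKi i hi)
        _ = Ti.card * eN b (k+1) K := by rw [Finset.sum_const, smul_eq_mul]
    have hTcard : (Ti.card : ℝ) ≤ ll i / (4 * δ (k+1)) + 2 :=
      card_meets hb4 hδpos hδr hl0
    have h9 : ll i / (4 * δ (k+1)) + 2 ≤ 9 * ll i / (4 * δ (k+1)) := by
      have heq9 : 9 * ll i/(4*δ (k+1)) - (ll i/(4*δ (k+1)) + 2) =
          (8*(ll i) - 8*δ (k+1))/(4*δ (k+1)) := by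
        field_simp
        ring
      have hnum : 0 ≤ (8*(ll i) - 8*δ (k+1))/(4*δ (k+1)) :=
        div_nonneg (by linarith) (by linarith)
      linarith
    have hnud := nu_delta hbd hδr (k+1)
    have hνpos : 0 < (eN b 0 (k+1) : ℝ) := by exact_mod_cast eN_pos hb4 0 (k+1)
    have hepos : 0 < (eN b (k+1) K : ℝ) := by exact_mod_cast eN_pos hb4 (k+1) K
    have he3 : (eN b 0 (k+1) : ℝ) * (eN b (k+1) K : ℝ) = (eN b 0 K : ℝ) := by
      exact_mod_cast congrArg (fun n : ℕ => (n : ℝ)) (eN_mul 0 (k+1) K (by omega) (hKi i hi))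
    have he4 : 9 * ll i / (4 * δ (k+1)) * (eN b (k+1) K : ℝ)
        = 36/δ 0 * (16^k * ll i) * ((eN b 0 (k+1) : ℝ) * (eN b (k+1) K : ℝ)) := by
      rw [← hnud]
      have h16 : (0:ℝ) < 16 ^ (k+1) := by positivity
      field_simp
      ring
    have he5 : 16^k * ll i ≤ h (ll i) := hstar k (ll i) hl0 hk2i
    have hδ0pos := hδpos 0
    calc ((Mi i).card : ℝ) ≤ (Ti.card : ℝ) * (eN b (k+1) K : ℝ) := by
          exact_mod_cast Nat.cast_le.2 hMicard
      _ ≤ (9 * ll i / (4 * δ (k+1))) * (eN b (k+1) K : ℝ) := by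
          apply mul_le_mul_of_nonneg_right (le_trans hTcard h9) (le_of_lt hepos)
      _ = 36/δ 0 * (16^k * ll i) * ((eN b 0 (k+1) : ℝ) * (eN b (k+1) K : ℝ)) := he4
      _ = 36/δ 0 * (16^k * ll i) * (eN b 0 K : ℝ) := by rw [he3]
      _ ≤ 36/δ 0 * h (ll i) * (eN b 0 K : ℝ) := by
          have hc : (0:ℝ) ≤ 36/δ 0 := by positivity
          have hc2 : (0:ℝ) ≤ (eN b 0 K : ℝ) := by positivity
          exact mul_le_mul_of_nonneg_right (mul_le_mul_of_nonneg_left he5 hc) hc2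
  -- sum up
  have hsum1 : ((A b K).card : ℝ) ≤ ∑ i ∈ F, ((Mi i).card : ℝ) := by
    have := Finset.card_le_card hAsub
    have h2 := le_trans this Finset.card_biUnion_le
    exact_mod_cast h2
  have hsum2 : ((A b K).card : ℝ) ≤ ∑ i ∈ F, 36/δ 0 * h (ll i) * (eN b 0 K : ℝ) :=
    le_trans hsum1 (Finset.sum_le_sum hper)
  rw [card_A hb4 hbd] at hsum2
  have hfact : ∑ i ∈ F, 36/δ 0 * h (ll i) * (eN b 0 K : ℝ)
      = 36/δ 0 * (∑ i ∈ F, h (ll i)) * (eN b 0 K : ℝ) := by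
    rw [Finset.mul_sum, Finset.sum_mul]
  rw [hfact] at hsum2
  have hNpos : (0:ℝ) < (eN b 0 K : ℝ) := by exact_mod_cast eN_pos hb4 0 K
  have hδ0pos := hδpos 0
  have hone : (1:ℝ) ≤ 36/δ 0 * (∑ i ∈ F, h (ll i)) := by
    by_contra hcon
    push_neg at hcon
    nlinarith
  rw [div_mul_eq_mul_div, le_div_iff₀ hδ0pos] at hone
  linarith

end CoverSum

section CompactE

variable {b : ℕ → ℕ} {δ : ℕ → ℝ}

lemma pt_nil : pt δ ([] : List ℕ) = 0 := rfl

lemma E_subset_Icc : E b δ ⊆ Icc 0 (δ 0) := by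
  intro x hx
  have h0 := (mem_iInter.1 hx) 0
  rw [Ek] at h0
  simp only [mem_iUnion] at h0
  obtain ⟨σ, hσ, hxσ⟩ := h0
  have : σ = [] := by simpa [A] using hσ
  subst this
  simpa [I, pt_nil] using hxσ

lemma isClosed_E : IsClosed (E b δ) := by
  apply isClosed_iInter
  intro k
  rw [Ek]
  apply Set.Finite.isClosed_biUnion (Finset.finite_toSet _)
  intro σ _
  exact isClosed_Icc

lemma isCompact_E : IsCompact (E b δ) :=
  IsCompact.of_isClosed_subset isCompact_Icc isClosed_E E_subset_Icc

end CompactE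

section Gauge

variable {b : ℕ → ℕ} {δ : ℕ → ℝ}

open ENNReal in
lemma gauge_pos (hb4 : ∀ k, 4 ≤ b (k+1)) (hbd : ∀ k, 4 ∣ b (k+1))
    (hδpos : ∀ k, 0 < δ k) (hδr : ∀ k, δ (k+1) * (4 * b (k+1)) = δ k)
    (h : ℝ → ℝ) (hdim : IsDimFun h)
    (hstar : ∀ k t, 0 < t → t ≤ δ k → 16 ^ k * t ≤ h t) :
    0 < gaugeMeasure h (E b δ) := by
  obtain ⟨hzero, hpos, hmono, hrc⟩ := hdim
  have hδ0 := hδpos 0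
  have hnonneg : ∀ t : ℝ, 0 ≤ t → 0 ≤ h t := by
    intro t ht
    rcases eq_or_lt_of_le ht with hh | hh
    · rw [← hh, hzero]
    · exact le_of_lt (hpos t hh)
  rw [gaugeMeasure, Measure.mkMetric_apply]
  have hkey : ENNReal.ofReal (δ 0 / 72) ≤
      ⨅ (t : ℕ → Set ℝ) (_ : E b δ ⊆ iUnion t)
        (_ : ∀ n, EMetric.diam (t n) ≤ ENNReal.ofReal (δ 0 / 2)),
        ∑' n, ⨆ _ : (t n).Nonempty, ENNReal.ofReal (h (EMetric.diam (t n)).toReal) := by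
    refine le_iInf fun t => le_iInf fun hcov => le_iInf fun hdiam => ?_
    set d : ℕ → ℝ := fun n => (EMetric.diam (t n)).toReal with hd
    have hd0 : ∀ n, 0 ≤ d n := fun n => ENNReal.toReal_nonneg
    have hdle : ∀ n, d n ≤ δ 0 / 2 := by
      intro n
      exact ENNReal.toReal_le_of_le_ofReal (by linarith) (hdiam n)
    have hbdd : ∀ n, Bornology.IsBounded (t n) := by
      intro n
      rw [Metric.isBounded_iff_ediam_ne_top]
      exact ne_top_of_le_ne_top (by simp) (hdiam n)
    -- choose right-continuity slack
    have hslack : ∀ n : ℕ, ∃ eta : ℝ, 0 < eta ∧ eta ≤ δ 0 / 8 ∧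
        h (d n + 2*eta) ≤ h (d n) + δ 0 / 144 * (1/2)^(n+1) := by
      intro n
      have hcont := hrc (d n) (hd0 n)
      have hcn : (0:ℝ) < δ 0 / 144 * (1/2)^(n+1) := by positivity
      have hev : h ⁻¹' (Iio (h (d n) + δ 0 / 144 * (1/2)^(n+1))) ∈
          nhdsWithin (d n) (Ici (d n)) :=
        hcont (Iio_mem_nhds (by linarith))
      rw [Metric.mem_nhdsWithin_iff] at hev
      obtain ⟨ε, hε, hball⟩ := hev
      refine ⟨min (ε/4) (δ 0/8), by positivity, min_le_right _ _, ?_⟩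
      have harg : d n + 2 * min (ε/4) (δ 0/8) ∈ Metric.ball (d n) ε ∩ Ici (d n) := by
        constructor
        · rw [Metric.mem_ball, Real.dist_eq, abs_of_nonneg (by
            have := le_min_iff.1 (le_refl (min (ε/4) (δ 0/8)))
            have h1 : 0 < min (ε/4) (δ 0/8) := by positivity
            linarith)]
          have : min (ε/4) (δ 0/8) ≤ ε/4 := min_le_left _ _
          linarith
        · have h1 : 0 < min (ε/4) (δ 0/8) := by positivity
          simp only [mem_Ici]
          linarith
      have := hball harg
      simp only [mem_preimage, mem_Iio] at this
      linarith
    choose eta heta1 heta2 heta3 using hslack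
    classical
    set V : ℕ → Set ℝ := fun n =>
      if (t n ∩ E b δ).Nonempty then Ioo (sInf (t n) - eta n) (sInf (t n) + d n + eta n)
      else ∅ with hV
    have hVopen : ∀ n, IsOpen (V n) := by
      intro n
      by_cases hne : (t n ∩ E b δ).Nonempty
      · simp only [hV, if_pos hne]
        exact isOpen_Ioo
      · simp only [hV, if_neg hne]
        exact isOpen_empty
    have hVcov : E b δ ⊆ ⋃ n, V n := by
      intro x hx
      obtain ⟨n, hn⟩ := mem_iUnion.1 (hcov hx)
      have hne : (t n ∩ E b δ).Nonempty := ⟨x, hn, hx⟩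
      have hnet : (t n).Nonempty := ⟨x, hn⟩
      refine mem_iUnion.2 ⟨n, ?_⟩
      rw [hV]
      simp only [if_pos hne]
      have hbl : BddBelow (t n) := (hbdd n).bddBelow
      have hlow : sInf (t n) ≤ x := csInf_le hbl hn
      have hup : x ≤ sInf (t n) + d n := by
        have hle : x - d n ≤ sInf (t n) := by
          apply le_csInf hnet
          intro y hy
          have := Metric.dist_le_diam_of_mem (hbdd n) hn hy
          rw [Real.dist_eq] at this
          have habs := le_abs_self (x - y)
          have : x - y ≤ Metric.diam (t n) := le_trans habs this
          rw [Metric.diam] at this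
          have hdn : d n = (Metric.ediam (t n)).toReal := rfl
          linarith
        linarith
      exact ⟨by have := heta1 n; linarith, by have := heta1 n; linarith⟩
    obtain ⟨F, hF⟩ := isCompact_E.elim_finite_subcover V hVopen hVcov
    set F' := F.filter (fun n => (t n ∩ E b δ).Nonempty) with hF'
    set aa : ℕ → ℝ := fun n => sInf (t n) - eta n with haa
    set ll : ℕ → ℝ := fun n => d n + 2 * eta n with hll
    have hcov' : E b δ ⊆ ⋃ n ∈ F', Ioo (aa n) (aa n + ll n) := by
      intro x hx
      obtain ⟨n, hnF, hnV⟩ := Set.mem_iUnion₂.1 (hF hx)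
      by_cases hne : (t n ∩ E b δ).Nonempty
      · refine Set.mem_iUnion₂.2 ⟨n, Finset.mem_filter.2 ⟨hnF, hne⟩, ?_⟩
        rw [hV] at hnV
        simp only [if_pos hne] at hnV
        have : aa n + ll n = sInf (t n) + d n + eta n := by rw [haa, hll]; ring
        rw [this]
        exact hnV
      · rw [hV] at hnV
        simp only [if_neg hne] at hnV
        exact absurd hnV (notMem_empty x)
    have hllb : ∀ n ∈ F', 0 < ll n ∧ ll n ≤ δ 0 := by
      intro n _
      constructor
      · have := heta1 n; have := hd0 n; rw [hll]; dsimp only; linarith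
      · have := heta2 n; have := hdle n; rw [hll]; dsimp only; linarith
    have hmain := cover_sum hb4 hbd hδpos hδr h hstar F' aa ll hllb hcov'
    -- compare h (ll n) with h (d n)
    have hcmp : ∀ n ∈ F', h (ll n) ≤ h (d n) + δ 0 / 144 * (1/2)^(n+1) := fun n _ => heta3 n
    have hgeom : ∑ n ∈ F', (δ 0 / 144) * (1/2:ℝ)^(n+1) ≤ δ 0 / 72 := by
      have h1 : ∑ n ∈ F', (1/2:ℝ)^(n+1) ≤ 2 := by
        have hsub : F' ⊆ Finset.range (F'.sup id + 1) := by
          intro n hn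
          rw [Finset.mem_range]
          have h := Finset.le_sup (f := id) hn
          simp only [id] at h
          omega
        calc ∑ n ∈ F', (1/2:ℝ)^(n+1)
            ≤ ∑ n ∈ Finset.range (F'.sup id + 1), (1/2:ℝ)^(n+1) := by
              apply Finset.sum_le_sum_of_subset_of_nonneg hsub
              intro i _ _
              positivity
          _ ≤ ∑ n ∈ Finset.range (F'.sup id + 1), (1/2:ℝ)^n := by
              apply Finset.sum_le_sum
              intro i _
              apply pow_le_pow_of_le_one (by norm_num) (by norm_num)
              omega
          _ ≤ 2 := sum_geometric_two_le _
      have h2 : ∑ n ∈ F', (δ 0 / 144) * (1/2:ℝ)^(n+1)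
          = (δ 0/144) * ∑ n ∈ F', (1/2:ℝ)^(n+1) := by rw [Finset.mul_sum]
      rw [h2]
      nlinarith
    have hsum_d : δ 0 / 72 ≤ ∑ n ∈ F', h (d n) := by
      have : ∑ n ∈ F', h (ll n) ≤ ∑ n ∈ F', h (d n) + δ 0 / 72 := by
        calc ∑ n ∈ F', h (ll n)
            ≤ ∑ n ∈ F', (h (d n) + δ 0 / 144 * (1/2)^(n+1)) := Finset.sum_le_sum hcmp
          _ = ∑ n ∈ F', h (d n) + ∑ n ∈ F', δ 0 / 144 * (1/2:ℝ)^(n+1) := by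
              rw [Finset.sum_add_distrib]
          _ ≤ ∑ n ∈ F', h (d n) + δ 0 / 72 := by linarith [hgeom]
      have h36 : δ 0 / 36 ≤ ∑ n ∈ F', h (ll n) := hmain
      have : δ 0 / 36 - δ 0/72 ≤ ∑ n ∈ F', h (d n) := by linarith
      linarith
    -- pass to ENNReal
    calc ENNReal.ofReal (δ 0 / 72)
        ≤ ENNReal.ofReal (∑ n ∈ F', h (d n)) := by
          apply ENNReal.ofReal_le_ofReal
          linarith
      _ = ∑ n ∈ F', ENNReal.ofReal (h (d n)) :=
          ENNReal.ofReal_sum_of_nonneg (fun n _ => hnonneg _ (hd0 n))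
      _ = ∑ n ∈ F', ⨆ _ : (t n).Nonempty, ENNReal.ofReal (h (d n)) := by
          apply Finset.sum_congr rfl
          intro n hn
          rw [hF', Finset.mem_filter] at hn
          have : (t n).Nonempty := by
            obtain ⟨x, hx, _⟩ := hn.2
            exact ⟨x, hx⟩
          rw [iSup_pos this]
      _ ≤ ∑' n, ⨆ _ : (t n).Nonempty, ENNReal.ofReal (h (d n)) :=
          ENNReal.sum_le_tsum F'
  refine lt_of_lt_of_le ?_ (le_iSup₂_of_le (ENNReal.ofReal (δ 0 / 2))
    (by simp [ENNReal.ofReal_pos]; linarith) hkey)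
  exact ENNReal.ofReal_pos.2 (by linarith)

end Gauge

section Main

lemma exists_t0 {h : ℝ → ℝ} (hdim : IsDimFun h) (hprec : Prec h (fun x : ℝ => x))
    (M : ℝ) (hM : 0 < M) :
    ∃ t0 : ℝ, 0 < t0 ∧ ∀ t : ℝ, 0 < t → t ≤ t0 → M * t ≤ h t := by
  have hmem : {x : ℝ | x / h x < 1/M} ∈ nhdsWithin 0 (Set.Ioi 0) := by
    have h1 : Set.Iio (1/M) ∈ nhds (0:ℝ) := Iio_mem_nhds (by positivity)
    exact hprec h1
  rw [mem_nhdsGT_iff_exists_Ioo_subset] at hmem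
  obtain ⟨u, hu, hsub⟩ := hmem
  rw [Set.mem_Ioi] at hu
  refine ⟨u/2, by positivity, ?_⟩
  intro t ht htu
  have htIoo : t ∈ Set.Ioo (0:ℝ) u := ⟨ht, by linarith⟩
  have hlt : t / h t < 1/M := hsub htIoo
  have hht : 0 < h t := hdim.2.1 t ht
  rw [div_lt_div_iff₀ hht hM] at hlt
  linarith

theorem main (h : ℝ → ℝ) (hdim : IsDimFun h) (hprec : Prec h (fun x : ℝ => x)) :
    ∃ E : Set ℝ, IsCompact E ∧ 0 < gaugeMeasure h E ∧
      ∀ x ∈ E, ∀ y ∈ E, ∀ z ∈ E,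
        x ≠ y → y ≠ z → x ≠ z → x + z ≠ 2 * y := by
  have hex : ∀ k : ℕ, ∃ t0 : ℝ, 0 < t0 ∧ ∀ t : ℝ, 0 < t → t ≤ t0 → (16:ℝ)^k * t ≤ h t :=
    fun k => exists_t0 hdim hprec ((16:ℝ)^k) (by positivity)
  choose t0 ht0pos ht0 using hex
  set seq : ℕ → ℝ := fun k => Nat.rec (min (t0 0) 1)
    (fun j dj => dj / (4 * ((4 * (Nat.ceil (dj / t0 (j+1)) + 1) : ℕ) : ℝ))) k with hseq
  set b : ℕ → ℕ := fun k => Nat.casesOn k 4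
    (fun j => 4 * (Nat.ceil (seq j / t0 (j+1)) + 1)) with hb
  have hrfl : ∀ k, seq (k+1) = seq k / (4 * (b (k+1) : ℝ)) := fun k => rfl
  have hb4 : ∀ k, 4 ≤ b (k+1) := by
    intro k
    show 4 ≤ 4 * (Nat.ceil (seq k / t0 (k+1)) + 1)
    omega
  have hbd : ∀ k, 4 ∣ b (k+1) := fun k => ⟨_, rfl⟩
  have hbpos : ∀ k, (0:ℝ) < 4 * (b (k+1) : ℝ) := by
    intro k
    have := hb4 k
    have : (4:ℝ) ≤ (b (k+1) : ℝ) := by exact_mod_cast this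
    linarith
  have hδpos : ∀ k, 0 < seq k := by
    intro k
    induction k with
    | zero =>
      show 0 < min (t0 0) 1
      exact lt_min (ht0pos 0) one_pos
    | succ k ih =>
      rw [hrfl k]
      exact div_pos ih (hbpos k)
  have hδr : ∀ k, seq (k+1) * (4 * (b (k+1) : ℝ)) = seq k := by
    intro k
    rw [hrfl k]
    field_simp
    exact mul_div_cancel_right₀ _ (ne_of_gt (by have := hbpos k; linarith))
  have hstar : ∀ k t, 0 < t → t ≤ seq k → (16:ℝ)^k * t ≤ h t := by
    intro k t ht hts
    rcases k with _ | k
    · have hle : seq 0 ≤ t0 0 := min_le_left _ _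
      exact ht0 0 t ht (le_trans hts hle)
    · -- seq (k+1) ≤ t0 (k+1)
      have hseqle : seq (k+1) ≤ t0 (k+1) := by
        rw [hrfl k]
        have hc := Nat.le_ceil (seq k / t0 (k+1))
        have htp := ht0pos (k+1)
        have hsp := hδpos k
        set c := Nat.ceil (seq k / t0 (k+1)) with hcdef
        have hkey : seq k ≤ (c : ℝ) * t0 (k+1) := by
          rw [div_le_iff₀ htp] at hc
          linarith
        have hbound : (4 * ((4 * (c + 1) : ℕ) : ℝ)) = 16 * ((c:ℝ) + 1) := by
          push_cast
          ring
        show seq k / (4 * ((4 * (c + 1) : ℕ) : ℝ)) ≤ t0 (k+1)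
        rw [hbound, div_le_iff₀ (by positivity)]
        nlinarith [htp, (Nat.cast_nonneg c : (0:ℝ) ≤ (c:ℝ))]
      exact ht0 (k+1) t ht (le_trans hts hseqle)
  refine ⟨APF.E b seq, APF.isCompact_E, ?_, ?_⟩
  · exact APF.gauge_pos hb4 hbd hδpos hδr h hdim hstar
  · intro x hx y hy z hz hxy _ _
    exact APF.no_ap hb4 hδpos hδr hx hy hz hxy

end Main

end APF

theorem stmt_15 (h : ℝ → ℝ) (hdim : IsDimFun h) (hprec : Prec h (fun x : ℝ => x)) :
    ∃ E : Set ℝ, IsCompact E ∧ 0 < gaugeMeasure h E ∧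
      ∀ x ∈ E, ∀ y ∈ E, ∀ z ∈ E,
        x ≠ y → y ≠ z → x ≠ z → x + z ≠ 2 * y := by
  exact APF.main h hdim hprec
end
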